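/- arXiv:2006.02325 — 6 statements merged into one kernel-verified Lean document; each statement's English description precedes it below -/
import Mathlib

section
/- Let n ≥ 2 and 0 ≤ l < k-1 with k ≤ n. Let A and B be real symmetric n×n matrices such that A is positive semidefinite, B ∈ Γ_{k-1}, and A + B ∈ Γ_{k-1}. Then (σ_{k-1}(A+B)/σ_l(A+B))^{1/(k-1-l)} ≥ (σ_{k-1}(B)/σ_l(B))^{1/(k-1-l)}. -/
/-- The `j`-th elementary symmetric polynomial of `lam : Fin n → ℝ`:
`σ_j(λ) = ∑_{1 ≤ i₁ < ⋯ < i_j ≤ n} λ_{i₁} ⋯ λ_{i_j}`, with `σ_0(λ) = 1`. -/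
noncomputable def esymmVec (n j : ℕ) (lam : Fin n → ℝ) : ℝ :=
  ∑ S ∈ Finset.univ.powersetCard j, ∏ i ∈ S, lam i

/-- Membership in the Gårding cone `Γ_m = {λ : σ_j(λ) > 0 for all 1 ≤ j ≤ m}`. -/
def inGamma (n m : ℕ) (lam : Fin n → ℝ) : Prop :=
  ∀ j : ℕ, 1 ≤ j → j ≤ m → 0 < esymmVec n j lam

open Multiset Polynomial

namespace SymmAux


/- ### Section 1: esymm basics -/

lemma esymm_cons (a : ℝ) (s : Multiset ℝ) (j : ℕ) :
    (a ::ₘ s).esymm (j + 1) = s.esymm (j + 1) + a * s.esymm j := by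
  simp only [Multiset.esymm, Multiset.powersetCard_cons, Multiset.map_add, Multiset.sum_add,
    Multiset.map_map]
  congr 1
  rw [mul_comm]
  rw [← Multiset.sum_map_mul_right]
  congr 1
  apply Multiset.map_congr rfl
  intro x _
  simp [Multiset.prod_cons, mul_comm]

lemma esymm_zero' (s : Multiset ℝ) : s.esymm 0 = 1 := by
  simp [Multiset.esymm, Multiset.powersetCard_zero_left]

lemma esymm_eq_zero_of_card_lt {s : Multiset ℝ} {j : ℕ} (h : Multiset.card s < j) :
    s.esymm j = 0 := by
  simp [Multiset.esymm, Multiset.powersetCard_eq_empty _ h]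

lemma esymm_card_eq_prod (s : Multiset ℝ) : s.esymm (Multiset.card s) = s.prod := by
  induction s using Multiset.induction_on with
  | empty => simp [esymm_zero']
  | cons a t ih =>
      rw [Multiset.card_cons, esymm_cons, esymm_eq_zero_of_card_lt (by simp), ih]
      simp [Multiset.prod_cons]

lemma esymm_one' (s : Multiset ℝ) : s.esymm 1 = s.sum := by
  induction s using Multiset.induction_on with
  | empty => simp [Multiset.esymm, Multiset.powersetCard_zero_right]
  | cons a t ih =>
      rw [show (1:ℕ) = 0 + 1 from rfl, esymm_cons, esymm_zero', ih, Multiset.sum_cons]; ring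

lemma esymm_two (s : Multiset ℝ) :
    s.sum ^ 2 = (s.map (fun x => x ^ 2)).sum + 2 * s.esymm 2 := by
  induction s using Multiset.induction_on with
  | empty => simp [Multiset.esymm, Multiset.powersetCard_eq_empty, Multiset.powersetCard_zero_right]
  | cons a t ih =>
      rw [Multiset.sum_cons, Multiset.map_cons, Multiset.sum_cons,
        show ((a ::ₘ t).esymm 2 : ℝ) = t.esymm 2 + a * t.esymm 1 from esymm_cons a t 1,
        esymm_one']
      linear_combination ih

/-- Cauchy-Schwarz for multisets. -/
lemma sq_sum_le (s : Multiset ℝ) :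
    s.sum ^ 2 ≤ (Multiset.card s : ℝ) * (s.map (fun x => x ^ 2)).sum := by
  induction s using Multiset.induction_on with
  | empty => simp
  | cons a t ih =>
      simp only [Multiset.sum_cons, Multiset.map_cons, Multiset.card_cons]
      push_cast
      rcases Multiset.empty_or_exists_mem t with rfl | _
      · simp
      have hc : (1 : ℝ) ≤ (Multiset.card t : ℝ) := by
        have : 1 ≤ Multiset.card t := by
          rcases ‹∃ x, x ∈ t› with ⟨x, hx⟩
          exact Multiset.card_pos.mpr (by rintro rfl; simp at hx)
        exact_mod_cast this
      nlinarith [sq_nonneg ((Multiset.card t : ℝ) * a - t.sum), ih,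
        sq_nonneg (t.sum - (Multiset.card t : ℝ) * a)]

/- ### Section 2: Newton's inequality -/

noncomputable def pnorm (s : Multiset ℝ) (j : ℕ) : ℝ :=
  s.esymm j / ((Multiset.card s).choose j : ℝ)

lemma nat_id1 (M r : ℕ) (h : r + 1 ≤ M) :
    M * Nat.choose (M - 1) r = (M - r) * Nat.choose M r := by
  obtain ⟨m, rfl⟩ : ∃ m, M = m + 1 := ⟨M - 1, by omega⟩
  have h1 := Nat.add_one_mul_choose_eq m r
  have h2 := Nat.choose_succ_right_eq (m + 1) r
  simp only [Nat.add_sub_cancel]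
  rw [h1, h2, mul_comm]

lemma choose_two_cast (M : ℕ) (h : 2 ≤ M) :
    ((Nat.choose M 2 : ℕ) : ℝ) * 2 = (M : ℝ) * ((M : ℝ) - 1) := by
  obtain ⟨m, rfl⟩ : ∃ m, M = m + 2 := ⟨M - 2, by omega⟩
  have h1 := Nat.add_one_mul_choose_eq (m + 1) 1
  simp only [Nat.succ_eq_add_one, Nat.choose_one_right] at h1
  have h2 : ((m + 2) * (m + 1) : ℕ) = (Nat.choose (m+2) 2) * 2 := h1
  have := congrArg (fun x : ℕ => (x : ℝ)) h2
  push_cast at this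
  push_cast
  linarith

lemma pnorm_zero (s : Multiset ℝ) : pnorm s 0 = 1 := by
  simp [pnorm, esymm_zero']

lemma pnorm_cs (s : Multiset ℝ) (h2 : 2 ≤ Multiset.card s) :
    pnorm s 0 * pnorm s 2 ≤ pnorm s 1 ^ 2 := by
  rw [pnorm_zero, one_mul]
  unfold pnorm
  set M := Multiset.card s with hM
  have hM0 : (0:ℝ) < (M:ℝ) := by
    have : 0 < M := by omega
    exact_mod_cast this
  have hC2 : (0:ℝ) < ((Nat.choose M 2 : ℕ) : ℝ) := by
    have := Nat.choose_pos (n := M) (k := 2) (by omega)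
    exact_mod_cast this
  rw [Nat.choose_one_right]
  rw [div_pow, div_le_div_iff₀ hC2 (by positivity)]
  have hcast := choose_two_cast M h2
  have h2e := esymm_two s
  have hcs := sq_sum_le s
  have h1 := esymm_one' s
  rw [h1]
  nlinarith [mul_le_mul_of_nonneg_right hcs hM0.le, sq_nonneg s.sum]

lemma esymm_rev : ∀ (s : Multiset ℝ), (0:ℝ) ∉ s → ∀ r q, r + q = Multiset.card s →
    (s.map (fun x => x⁻¹)).esymm r * s.prod = s.esymm q := by
  intro s
  induction s using Multiset.induction_on with
  | empty =>
      intro _ r q h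
      simp only [Multiset.card_zero] at h
      obtain ⟨rfl, rfl⟩ : r = 0 ∧ q = 0 := by omega
      simp [esymm_zero']
  | cons a t ih =>
      intro h0 r q hrq
      have ha : a ≠ 0 := by rintro rfl; exact h0 (Multiset.mem_cons_self 0 t)
      have h0t : (0:ℝ) ∉ t := fun h => h0 (Multiset.mem_cons_of_mem h)
      rw [Multiset.map_cons, Multiset.prod_cons]
      rw [Multiset.card_cons] at hrq
      rcases r with _ | r'
      · have hq : q = Multiset.card (a ::ₘ t) := by rw [Multiset.card_cons]; omega
        subst hq
        rw [esymm_zero', one_mul, esymm_card_eq_prod, Multiset.prod_cons]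
      · rw [esymm_cons]
        rcases q with _ | q'
        · have hr' : Multiset.card (t.map (fun x : ℝ => x⁻¹)) < r' + 1 := by
            rw [Multiset.card_map]; omega
          rw [esymm_eq_zero_of_card_lt hr']
          have hE := ih h0t r' 0 (by omega)
          rw [esymm_zero'] at hE ⊢
          rw [zero_add, show (a⁻¹ * (t.map (fun x : ℝ => x⁻¹)).esymm r') * (a * t.prod)
            = (a⁻¹ * a) * ((t.map (fun x : ℝ => x⁻¹)).esymm r' * t.prod) from by ring,
            inv_mul_cancel₀ ha, hE, one_mul]
        · have IH1 := ih h0t (r' + 1) q' (by omega)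
          have IH2 := ih h0t r' (q' + 1) (by omega)
          rw [show ((t.map (fun x : ℝ => x⁻¹)).esymm (r' + 1)
                + a⁻¹ * (t.map (fun x : ℝ => x⁻¹)).esymm r') * (a * t.prod)
              = a * ((t.map (fun x : ℝ => x⁻¹)).esymm (r' + 1) * t.prod)
                + (a⁻¹ * a) * ((t.map (fun x : ℝ => x⁻¹)).esymm r' * t.prod) from by ring,
            inv_mul_cancel₀ ha, IH1, IH2, one_mul, esymm_cons]
          ring

lemma newton_base (s : Multiset ℝ) (j : ℕ) (hcard : Multiset.card s = j + 2) :
    pnorm s j * pnorm s (j + 2) ≤ pnorm s (j + 1) ^ 2 := by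
  by_cases hp : s.prod = 0
  · have hz : pnorm s (j+2) = 0 := by
      unfold pnorm
      rw [← hcard, esymm_card_eq_prod, hp, zero_div]
    rw [hz, mul_zero]; positivity
  · have h0 : (0:ℝ) ∉ s := fun h => hp (Multiset.prod_eq_zero h)
    have hrev := esymm_rev s h0
    have e2 := hrev 2 j (by omega)
    have e1 := hrev 1 (j+1) (by omega)
    have e0 := hrev 0 (j+2) (by omega)
    rw [esymm_zero', one_mul] at e0
    have hct : Multiset.card (s.map (fun x : ℝ => x⁻¹)) = j + 2 := by
      rw [Multiset.card_map, hcard]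
    have pcs : (s.map (fun x : ℝ => x⁻¹)).esymm 2 / ((Nat.choose (j+2) 2 : ℕ) : ℝ)
        ≤ ((s.map (fun x : ℝ => x⁻¹)).esymm 1 / ((Nat.choose (j+2) 1 : ℕ) : ℝ)) ^ 2 := by
      have := pnorm_cs (s.map (fun x : ℝ => x⁻¹)) (by omega)
      rw [pnorm_zero, one_mul] at this
      unfold pnorm at this
      rw [hct] at this
      exact this
    unfold pnorm
    rw [hcard]
    have c1 : Nat.choose (j+2) j = Nat.choose (j+2) 2 := by
      have := Nat.choose_symm (n := j+2) (k := 2) (by omega)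
      simpa [show j + 2 - 2 = j from by omega] using this
    have c2 : Nat.choose (j+2) (j+1) = Nat.choose (j+2) 1 := by
      have := Nat.choose_symm (n := j+2) (k := 1) (by omega)
      simpa [show j + 2 - 1 = j + 1 from by omega] using this
    rw [c1, c2, Nat.choose_self, ← e2, ← e1, ← e0]
    push_cast
    rw [div_one]
    have key := mul_le_mul_of_nonneg_left pcs (sq_nonneg s.prod)
    calc (s.map (fun x : ℝ => x⁻¹)).esymm 2 * s.prod / ((Nat.choose (j+2) 2 : ℕ) : ℝ) * s.prod
        = s.prod ^ 2 * ((s.map (fun x : ℝ => x⁻¹)).esymm 2 / ((Nat.choose (j+2) 2 : ℕ) : ℝ)) := by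
          ring
      _ ≤ s.prod ^ 2 * (((s.map (fun x : ℝ => x⁻¹)).esymm 1 / ((Nat.choose (j+2) 1 : ℕ) : ℝ)) ^ 2) :=
          key
      _ = ((s.map (fun x : ℝ => x⁻¹)).esymm 1 * s.prod / ((Nat.choose (j+2) 1 : ℕ) : ℝ)) ^ 2 := by
          ring


lemma deriv_step (s : Multiset ℝ) (h : 1 ≤ Multiset.card s) :
    ∃ t : Multiset ℝ, Multiset.card t = Multiset.card s - 1 ∧
      ∀ r, r + 1 ≤ Multiset.card s → pnorm t r = pnorm s r := by
  obtain ⟨M', hM'⟩ : ∃ m, Multiset.card s = m + 1 := ⟨Multiset.card s - 1, by omega⟩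
  set q : Polynomial ℝ := (s.map (fun a => X - C a)).prod with hq
  have hqmonic : q.Monic := by
    apply monic_multiset_prod_of_monic
    intro a _
    exact monic_X_sub_C a
  have hqdeg : q.natDegree = Multiset.card s := by
    rw [hq, natDegree_multiset_prod_of_monic]
    · rw [Multiset.map_map]
      simp [Function.comp, natDegree_X_sub_C]
    · intro f hf
      obtain ⟨a, _, rfl⟩ := Multiset.mem_map.mp hf
      exact monic_X_sub_C a
  have hqroots : q.roots = s := roots_multiset_prod_X_sub_C s
  set dq := derivative q with hdq
  have hd1 : dq.coeff M' = (M' + 1 : ℝ) := by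
    rw [hdq, coeff_derivative]
    have : q.coeff (M' + 1) = 1 := by
      have := hqmonic.coeff_natDegree
      rwa [hqdeg, hM'] at this
    rw [this, one_mul]
  have hdne : dq ≠ 0 := by
    intro hzero
    rw [hzero] at hd1
    simp at hd1
    exact absurd hd1 (by positivity)
  have hddeg : dq.natDegree = M' := by
    refine le_antisymm ?_ (le_natDegree_of_ne_zero (by rw [hd1]; positivity))
    have hle := natDegree_derivative_le q
    rw [← hdq] at hle
    omega
  have hcr : Multiset.card dq.roots = M' := by
    refine le_antisymm ?_ ?_
    · have := card_roots' dq; omega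
    · have hge := card_roots_le_derivative q
      rw [← hdq, hqroots] at hge
      omega
  have hfact := C_leadingCoeff_mul_prod_multiset_X_sub_C (p := dq) (hcr.trans hddeg.symm)
  have hlc : dq.leadingCoeff = (M' + 1 : ℝ) := by
    rw [Polynomial.leadingCoeff, hddeg, hd1]
  refine ⟨dq.roots, by rw [hcr, hM']; omega, ?_⟩
  intro r hr
  have hrM : r ≤ M' := by omega
  -- coefficient of dq at M' - r, computed two ways
  have side1 : dq.coeff (M' - r) = (-1:ℝ)^r * s.esymm r * ((M' - r : ℕ) + 1 : ℝ) := by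
    rw [hdq, coeff_derivative]
    congr 1
    have hco := Multiset.prod_X_sub_C_coeff s (k := M' - r + 1)
      (by rw [hM']; omega)
    rw [← hq] at hco
    rw [hco]
    congr 2 <;> · rw [hM']; omega
  have side2 : dq.coeff (M' - r) = (M' + 1 : ℝ) * ((-1:ℝ)^r * dq.roots.esymm r) := by
    conv_lhs => rw [← hfact]
    rw [coeff_C_mul, hlc]
    congr 1
    have hco := Multiset.prod_X_sub_C_coeff dq.roots (k := M' - r) (by rw [hcr]; omega)
    rw [hco]
    congr 2 <;> · rw [hcr]; omega
  have hcan : (M' + 1 : ℝ) * dq.roots.esymm r = s.esymm r * ((M' - r : ℕ) + 1 : ℝ) := by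
    have heq : dq.coeff (M' - r) = dq.coeff (M' - r) := rfl
    have e1 : ((-1:ℝ)^r) * ((M' + 1 : ℝ) * dq.roots.esymm r)
        = ((-1:ℝ)^r) * (s.esymm r * ((M' - r : ℕ) + 1 : ℝ)) := by
      rw [show ((-1:ℝ)^r) * ((M' + 1 : ℝ) * dq.roots.esymm r)
          = (M' + 1 : ℝ) * ((-1:ℝ)^r * dq.roots.esymm r) from by ring, ← side2, side1]
      ring
    exact mul_left_cancel₀ (pow_ne_zero _ (by norm_num)) e1
  -- now conclude equality of pnorms
  unfold pnorm
  rw [hcr, hM']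
  have hcp1 : (0:ℝ) < ((Nat.choose M' r : ℕ) : ℝ) := by
    exact_mod_cast Nat.choose_pos hrM
  have hcp2 : (0:ℝ) < ((Nat.choose (M'+1) r : ℕ) : ℝ) := by
    exact_mod_cast Nat.choose_pos (by omega)
  rw [div_eq_div_iff hcp1.ne' hcp2.ne']
  have hid : ((M':ℝ) + 1) * ((Nat.choose M' r : ℕ) : ℝ)
      = ((M' - r : ℕ) + 1 : ℝ) * ((Nat.choose (M'+1) r : ℕ) : ℝ) := by
    have hn := nat_id1 (M'+1) r (by omega)
    have : (M' + 1) * Nat.choose M' r = ((M' - r) + 1) * Nat.choose (M'+1) r := by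
      simpa [show M' + 1 - 1 = M' from rfl, show M' + 1 - r = (M' - r) + 1 from by omega] using hn
    exact_mod_cast this
  have hMne : ((M':ℝ) + 1) ≠ 0 := by positivity
  apply mul_left_cancel₀ hMne
  calc ((M':ℝ) + 1) * (dq.roots.esymm r * ((Nat.choose (M'+1) r : ℕ) : ℝ))
      = ((M' + 1 : ℝ) * dq.roots.esymm r) * ((Nat.choose (M'+1) r : ℕ) : ℝ) := by ring
    _ = (s.esymm r * ((M' - r : ℕ) + 1 : ℝ)) * ((Nat.choose (M'+1) r : ℕ) : ℝ) := by rw [hcan]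
    _ = s.esymm r * (((M' - r : ℕ) + 1 : ℝ) * ((Nat.choose (M'+1) r : ℕ) : ℝ)) := by ring
    _ = s.esymm r * (((M':ℝ) + 1) * ((Nat.choose M' r : ℕ) : ℝ)) := by rw [← hid]
    _ = ((M':ℝ) + 1) * (s.esymm r * ((Nat.choose M' r : ℕ) : ℝ)) := by ring

lemma newton_aux : ∀ (d : ℕ) (s : Multiset ℝ) (j : ℕ), Multiset.card s = j + 2 + d →
    pnorm s j * pnorm s (j+2) ≤ pnorm s (j+1) ^ 2 := by
  intro d
  induction d with
  | zero => intro s j h; exact newton_base s j h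
  | succ d ih =>
      intro s j h
      obtain ⟨t, hct, hpt⟩ := deriv_step s (by omega)
      rw [← hpt j (by omega), ← hpt (j+1) (by omega), ← hpt (j+2) (by omega)]
      exact ih t j (by omega)

lemma newton (s : Multiset ℝ) (j : ℕ) (h : j + 2 ≤ Multiset.card s) :
    pnorm s j * pnorm s (j+2) ≤ pnorm s (j+1) ^ 2 :=
  newton_aux (Multiset.card s - (j+2)) s j (by omega)

lemma choose_consec (M a j : ℕ) (h : a ≤ j) :
    Nat.choose M (j+1) * Nat.choose M a ≤ Nat.choose M j * Nat.choose M (a+1) := by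
  have h1 := Nat.choose_succ_right_eq M j
  have h2 := Nat.choose_succ_right_eq M a
  have h3 : (M - j) * (a+1) ≤ (M - a) * (j+1) :=
    Nat.mul_le_mul (Nat.sub_le_sub_left h M) (by omega)
  have key : (Nat.choose M (j+1) * Nat.choose M a) * ((j+1)*(a+1)) ≤
      (Nat.choose M j * Nat.choose M (a+1)) * ((j+1)*(a+1)) := by
    calc (Nat.choose M (j+1) * Nat.choose M a) * ((j+1)*(a+1))
        = (Nat.choose M (j+1) * (j+1)) * (Nat.choose M a * (a+1)) := by ring
      _ = (Nat.choose M j * (M - j)) * (Nat.choose M a * (a+1)) := by rw [h1]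
      _ = (Nat.choose M j * Nat.choose M a) * ((M-j)*(a+1)) := by ring
      _ ≤ (Nat.choose M j * Nat.choose M a) * ((M-a)*(j+1)) :=
          Nat.mul_le_mul le_rfl h3
      _ = (Nat.choose M j * (Nat.choose M a * (M-a))) * (j+1) := by ring
      _ = (Nat.choose M j * (Nat.choose M (a+1) * (a+1))) * (j+1) := by rw [h2]
      _ = (Nat.choose M j * Nat.choose M (a+1)) * ((j+1)*(a+1)) := by ring
  exact Nat.le_of_mul_le_mul_right key (by positivity)

/-- Newton's inequality in elementary-symmetric form (no binomial factors needed). -/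
lemma newtonE (s : Multiset ℝ) (j : ℕ) (h : j + 2 ≤ Multiset.card s) :
    s.esymm j * s.esymm (j+2) ≤ s.esymm (j+1) ^ 2 := by
  have hN := newton s j h
  unfold pnorm at hN
  set M := Multiset.card s with hM
  have hc0 : (0:ℝ) < ((Nat.choose M j : ℕ) : ℝ) := by
    exact_mod_cast Nat.choose_pos (by omega)
  have hc1 : (0:ℝ) < ((Nat.choose M (j+1) : ℕ) : ℝ) := by
    exact_mod_cast Nat.choose_pos (by omega)
  have hc2 : (0:ℝ) < ((Nat.choose M (j+2) : ℕ) : ℝ) := by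
    exact_mod_cast Nat.choose_pos (by omega)
  rw [div_mul_div_comm, div_pow, div_le_div_iff₀ (by positivity) (by positivity)] at hN
  have hcc : ((Nat.choose M j : ℕ) : ℝ) * ((Nat.choose M (j+2) : ℕ) : ℝ)
      ≤ ((Nat.choose M (j+1) : ℕ) : ℝ) ^ 2 := by
    have := choose_consec M j (j+1) (by omega)
    have h' : Nat.choose M (j+2) * Nat.choose M j ≤ Nat.choose M (j+1) * Nat.choose M (j+1) := this
    have := (Nat.cast_le (α := ℝ)).mpr h'
    push_cast at this
    nlinarith [this]
  have step : s.esymm (j+1) ^ 2 * (((Nat.choose M j : ℕ) : ℝ) * ((Nat.choose M (j+2) : ℕ) : ℝ))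
      ≤ s.esymm (j+1) ^ 2 * (((Nat.choose M (j+1) : ℕ) : ℝ) ^ 2) :=
    mul_le_mul_of_nonneg_left hcc (sq_nonneg _)
  have final : s.esymm j * s.esymm (j+2) * (((Nat.choose M (j+1) : ℕ) : ℝ) ^ 2)
      ≤ s.esymm (j+1) ^ 2 * (((Nat.choose M (j+1) : ℕ) : ℝ) ^ 2) := le_trans hN step
  exact le_of_mul_le_mul_right final (by positivity)


/- ### Section 3: Garding cone combinatorics -/

lemma chainE (s : Multiset ℝ) (m : ℕ) (hm : m ≤ Multiset.card s)
    (hpos : ∀ r, r ≤ m → 0 < s.esymm r) :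
    ∀ b a, a ≤ b → b + 1 ≤ m → s.esymm (b+1) * s.esymm a ≤ s.esymm (a+1) * s.esymm b := by
  intro b
  induction b with
  | zero =>
      intro a ha _
      have : a = 0 := by omega
      subst this
      exact le_refl _
  | succ b ih =>
      intro a hab hb1
      rcases Nat.lt_or_ge a (b+1) with hcase | hcase
      · have hN := newtonE s b (by omega)
        have hih := ih a (by omega) (by omega)
        nlinarith [hpos b (by omega), hpos (b+1) (by omega), hpos a (by omega),
          hpos (a+1) (by omega), mul_le_mul_of_nonneg_right hN (hpos a (by omega)).le,
          mul_le_mul_of_nonneg_right hih (hpos (b+1) (by omega)).le]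
      · have : a = b + 1 := by omega
        subst this
        exact le_refl _

lemma deletion1 : ∀ (m : ℕ) (s : Multiset ℝ) (a : ℝ), m ≤ Multiset.card s →
    (∀ j, 1 ≤ j → j ≤ m → 0 < (a ::ₘ s).esymm j) →
    ∀ j, 1 ≤ j → j + 1 ≤ m → 0 < s.esymm j := by
  intro m
  induction m with
  | zero => intro s a _ _ j h1 h2; omega
  | succ m ih =>
      intro s a hm hΓ j hj1 hj2
      by_cases hcase : j + 1 ≤ m
      · exact ih s a (by omega) (fun j' h1 h2 => hΓ j' h1 (by omega)) j hj1 hcase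
      · have hj : j = m := by omega
        subst hj
        obtain ⟨p, rfl⟩ : ∃ p, j = p + 1 := ⟨j - 1, by omega⟩
        have hEp : 0 < s.esymm p := by
          rcases Nat.eq_zero_or_pos p with rfl | hp0
          · rw [esymm_zero']; norm_num
          · exact ih s a (by omega) (fun j' h1 h2 => hΓ j' h1 (by omega)) p hp0 (by omega)
        have hA1 : 0 < (a ::ₘ s).esymm (p+1) := hΓ (p+1) (by omega) (by omega)
        have hA2 : 0 < (a ::ₘ s).esymm (p+2) := hΓ (p+2) (by omega) (by omega)
        rw [esymm_cons a s p] at hA1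
        rw [show p + 2 = (p+1) + 1 from rfl, esymm_cons a s (p+1)] at hA2
        by_cases ha : a ≤ 0
        · nlinarith [hEp, hA1]
        · push_neg at ha
          by_contra hneg
          push_neg at hneg
          have hnew := newtonE s p (by omega)
          nlinarith [mul_pos hA1 hA2, mul_le_mul_of_nonneg_left hnew ha.le,
            mul_nonneg (neg_nonneg.mpr hneg) hA2.le,
            mul_nonneg (mul_nonneg ha.le (neg_nonneg.mpr hneg)) hA1.le]

lemma add_cons_comm (s u : Multiset ℝ) (a : ℝ) : s + (a ::ₘ u) = a ::ₘ (s + u) := by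
  rw [add_comm, Multiset.cons_add, add_comm]

lemma deletionN : ∀ (u s : Multiset ℝ) (m : ℕ), m + 1 ≤ Multiset.card s + Multiset.card u →
    (∀ j, 1 ≤ j → j ≤ m → 0 < (s + u).esymm j) →
    ∀ j, 1 ≤ j → j + Multiset.card u ≤ m → 0 < s.esymm j := by
  intro u
  induction u using Multiset.induction_on with
  | empty =>
      intro s m h1 hΓ j hj1 hj2
      have := hΓ j hj1 (by simpa using hj2)
      simpa using this
  | cons a u ih =>
      intro s m h1 hΓ j hj1 hj2
      simp only [Multiset.card_cons] at h1 hj2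
      have hΓ' : ∀ j', 1 ≤ j' → j' ≤ m → 0 < (a ::ₘ (s + u)).esymm j' := by
        intro j' h1' h2'
        rw [← add_cons_comm]
        exact hΓ j' h1' h2'
      have hdel := deletion1 m (s + u) a (by simp; omega) hΓ'
      obtain ⟨m', rfl⟩ : ∃ m', m = m' + 1 := ⟨m - 1, by omega⟩
      exact ih s m' (by omega) (fun j' h1' h2' => hdel j' h1' (by omega)) j hj1 (by omega)

lemma bracket1 (s : Multiset ℝ) (a : ℝ) (p q : ℕ) (hpq : p < q) (hq : q + 1 ≤ Multiset.card s)
    (hΓ : ∀ j, 1 ≤ j → j ≤ q + 1 → 0 < (a ::ₘ s).esymm j) :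
    s.esymm p * (a ::ₘ s).esymm (q+1) ≤ s.esymm q * (a ::ₘ s).esymm (p+1) := by
  have hdel := deletion1 (q+1) s a (by omega) hΓ
  rw [esymm_cons a s q, esymm_cons a s p]
  have hposq : 0 < s.esymm q := hdel q (by omega) (by omega)
  have hposp : 0 < s.esymm p := by
    rcases Nat.eq_zero_or_pos p with rfl | hp0
    · rw [esymm_zero']; norm_num
    · exact hdel p hp0 (by omega)
  have hposp1 : 0 < s.esymm (p+1) := hdel (p+1) (by omega) (by omega)
  have key : s.esymm p * s.esymm (q+1) ≤ s.esymm q * s.esymm (p+1) := by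
    rcases le_or_gt (s.esymm (q+1)) 0 with hc | hc
    · nlinarith [hposp, hposq, hposp1]
    · have hpos : ∀ r, r ≤ q + 1 → 0 < s.esymm r := by
        intro r hr
        rcases Nat.eq_zero_or_pos r with rfl | hr1
        · rw [esymm_zero']; norm_num
        rcases Nat.lt_or_ge r (q+1) with h' | h'
        · exact hdel r hr1 (by omega)
        · have hre : r = q + 1 := by omega
          subst hre; exact hc
      have hch := chainE s (q+1) hq hpos q p (by omega) (by omega)
      nlinarith [hch]
  nlinarith [key]

lemma bracketN : ∀ (w s : Multiset ℝ) (p q : ℕ), p < q → q + 1 ≤ Multiset.card s →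
    (∀ j, 1 ≤ j → j ≤ q + Multiset.card w → 0 < (s + w).esymm j) →
    s.esymm p * (s + w).esymm (q + Multiset.card w) ≤
      s.esymm q * (s + w).esymm (p + Multiset.card w) := by
  intro w
  induction w using Multiset.induction_on with
  | empty =>
      intro s p q hpq hq hΓ
      simp only [Multiset.card_zero, Nat.add_zero, add_zero]
      exact le_of_eq (mul_comm _ _)
  | cons c w ih =>
      intro s p q hpq hq hΓ
      simp only [Multiset.card_cons]
      rw [show q + (Multiset.card w + 1) = (q+1) + Multiset.card w from by omega,
        show p + (Multiset.card w + 1) = (p+1) + Multiset.card w from by omega,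
        add_cons_comm s w c]
      have hΓ2 : ∀ j, 1 ≤ j → j ≤ (q+1) + Multiset.card w → 0 < ((c ::ₘ s) + w).esymm j := by
        intro j h1 h2
        rw [Multiset.cons_add, ← add_cons_comm]
        exact hΓ j h1 (by simp only [Multiset.card_cons]; omega)
      have hih := ih (c ::ₘ s) (p+1) (q+1) (by omega)
        (by simp only [Multiset.card_cons]; omega) hΓ2
      rw [Multiset.cons_add] at hih
      have hposc : ∀ j, 1 ≤ j → j ≤ q+1 → 0 < (c ::ₘ s).esymm j := by
        intro j h1 h2
        refine deletionN w (c ::ₘ s) ((q+1) + Multiset.card w) ?_ hΓ2 j h1 (by omega)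
        simp only [Multiset.card_cons]; omega
      have hG := bracket1 s c p q hpq hq hposc
      have hb0 : 0 ≤ s.esymm p := by
        rcases Nat.eq_zero_or_pos p with rfl | hp0
        · rw [esymm_zero']; norm_num
        · refine (deletionN (c ::ₘ w) s (q + Multiset.card (c ::ₘ w)) ?_ hΓ p hp0 ?_).le
          · simp only [Multiset.card_cons]; omega
          · simp only [Multiset.card_cons]; omega
      have hd : 0 < (c ::ₘ s).esymm (p+1) := hposc (p+1) (by omega) (by omega)
      have hP : 0 < (c ::ₘ (s + w)).esymm ((p+1) + Multiset.card w) := by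
        have := hΓ (p + Multiset.card w + 1) (by omega)
          (by simp only [Multiset.card_cons]; omega)
        rw [add_cons_comm] at this
        convert this using 2
        omega
      nlinarith [mul_le_mul_of_nonneg_right hG hP.le, mul_le_mul_of_nonneg_left hih hb0, hd]

/- ### Section 4: determinant expansion -/


lemma det_piecewise_one {R : Type*} [CommRing R] {ι : Type*} [Fintype ι] [DecidableEq ι]
    (N : Matrix ι ι R) (s : Finset ι) :
    Matrix.det (Matrix.of fun i j => if i ∈ s then N i j else (1 : Matrix ι ι R) i j)
      = (N.submatrix (Subtype.val : {i // i ∈ s} → ι) (Subtype.val : {i // i ∈ s} → ι)).det := by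
  classical
  set Q : Matrix ι ι R := Matrix.of fun i j => if i ∈ s then N i j else (1 : Matrix ι ι R) i j
    with hQ
  have h1 : Q.det = (Q.submatrix (Equiv.sumCompl (· ∈ s)) (Equiv.sumCompl (· ∈ s))).det :=
    (Matrix.det_submatrix_equiv_self (Equiv.sumCompl (· ∈ s)) Q).symm
  have h2 : Q.submatrix (Equiv.sumCompl (· ∈ s)) (Equiv.sumCompl (· ∈ s)) = Matrix.fromBlocks
      (N.submatrix Subtype.val Subtype.val) (N.submatrix Subtype.val Subtype.val)
      0 (1 : Matrix {i // ¬ i ∈ s} {i // ¬ i ∈ s} R) := by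
    ext i j
    rcases i with i | i <;> rcases j with j | j <;>
      simp only [Matrix.submatrix_apply, Equiv.sumCompl_apply_inl, Equiv.sumCompl_apply_inr,
        Matrix.fromBlocks_apply₁₁, Matrix.fromBlocks_apply₁₂, Matrix.fromBlocks_apply₂₁,
        Matrix.fromBlocks_apply₂₂, hQ, Matrix.of_apply]
    · rw [if_pos i.2]
    · rw [if_pos i.2]
    · rw [if_neg i.2]
      simp only [Matrix.one_apply, Matrix.zero_apply]
      rw [if_neg]
      intro hc
      exact i.2 (hc ▸ j.2)
    · rw [if_neg i.2]
      simp only [Matrix.one_apply]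
      by_cases hij : i = j
      · subst hij; simp
      · rw [if_neg (fun hc => hij (Subtype.ext hc)), if_neg hij]
  rw [h1, h2, Matrix.det_fromBlocks_zero₂₁, Matrix.det_one, mul_one]

lemma det_diagonal_add {R : Type*} [CommRing R] {ι : Type*} [Fintype ι] [DecidableEq ι]
    (v : ι → R) (N : Matrix ι ι R) :
    (Matrix.diagonal v + N).det
      = ∑ s : Finset ι, (∏ i ∈ sᶜ, v i) *
          (N.submatrix (Subtype.val : {i // i ∈ s} → ι) (Subtype.val : {i // i ∈ s} → ι)).det := by
  classical
  have hadd : Matrix.diagonal v + N = N + Matrix.diagonal v := add_comm _ _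
  rw [hadd]
  have h1 : (N + Matrix.diagonal v).det
      = ∑ s : Finset ι, (Matrix.detRowAlternating (R := R) (n := ι)).toMultilinearMap
          (s.piecewise N (Matrix.diagonal v)) :=
    MultilinearMap.map_add_univ _ N (Matrix.diagonal v)
  rw [h1]
  refine Finset.sum_congr rfl fun s _ => ?_
  -- rewrite rows
  set m₀ : ι → ι → R := sᶜ.piecewise (fun i => (1 : Matrix ι ι R) i) N with hm₀
  have hrows : s.piecewise (N : ι → ι → R) (Matrix.diagonal v)
      = sᶜ.piecewise (fun i => v i • m₀ i) m₀ := by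
    funext i
    by_cases hi : i ∈ s
    · erw [Finset.piecewise_eq_of_mem _ _ _ hi,
        Finset.piecewise_eq_of_notMem _ _ _ (by simpa using hi), hm₀,
        Finset.piecewise_eq_of_notMem _ _ _ (by simpa using hi)]
    · erw [Finset.piecewise_eq_of_notMem _ _ _ hi,
        Finset.piecewise_eq_of_mem _ _ _ (by simpa using hi), hm₀,
        Finset.piecewise_eq_of_mem _ _ _ (by simpa using hi)]
      funext j
      simp only [Matrix.diagonal_apply, Pi.smul_apply, Matrix.one_apply, smul_eq_mul, mul_ite,
        mul_one, mul_zero]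
  rw [hrows, MultilinearMap.map_piecewise_smul]
  rw [smul_eq_mul]
  congr 1
  have hfm : (Matrix.detRowAlternating (R := R) (n := ι)).toMultilinearMap m₀
      = Matrix.det (Matrix.of m₀) := rfl
  have hmm : Matrix.of m₀
      = Matrix.of fun i j => if i ∈ s then N i j else (1 : Matrix ι ι R) i j := by
    ext i j
    by_cases hi : i ∈ s
    · rw [Matrix.of_apply, hm₀, show (sᶜ.piecewise (fun i => (1 : Matrix ι ι R) i) N) i
          = N i from Finset.piecewise_eq_of_notMem _ _ _ (by simpa using hi)]
      simp [hi]
    · rw [Matrix.of_apply, hm₀, show (sᶜ.piecewise (fun i => (1 : Matrix ι ι R) i) N) i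
          = (1 : Matrix ι ι R) i from Finset.piecewise_eq_of_mem _ _ _ (by simpa using hi)]
      simp [hi]
  rw [hfm, hmm, det_piecewise_one]




lemma detpoly_conj {n : ℕ} (P Q M : Matrix (Fin n) (Fin n) ℝ) (hPQ : P * Q = 1) :
    (Matrix.diagonal (fun _ => (X:ℝ[X])) - (P * M * Q).map (C : ℝ →+* ℝ[X])).det
      = (Matrix.diagonal (fun _ => (X:ℝ[X])) - M.map (C : ℝ →+* ℝ[X])).det := by
  have hsc : Matrix.diagonal (fun _ : Fin n => (X:ℝ[X]))
      = (X:ℝ[X]) • (1 : Matrix (Fin n) (Fin n) ℝ[X]) := by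
    ext i j
    by_cases hij : i = j <;> simp [Matrix.diagonal_apply, Matrix.one_apply, hij]
  have hmapone : ((1 : Matrix (Fin n) (Fin n) ℝ).map (⇑(C : ℝ →+* ℝ[X])))
      = (1 : Matrix (Fin n) (Fin n) ℝ[X]) :=
    Matrix.map_one _ (map_zero C) (map_one C)
  have key : Matrix.diagonal (fun _ : Fin n => (X:ℝ[X])) - (P * M * Q).map (⇑(C : ℝ →+* ℝ[X]))
      = (P.map (⇑(C : ℝ →+* ℝ[X]))) *
        (Matrix.diagonal (fun _ : Fin n => (X:ℝ[X])) - M.map (⇑(C : ℝ →+* ℝ[X]))) *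
        (Q.map (⇑(C : ℝ →+* ℝ[X]))) := by
    rw [Matrix.mul_sub, Matrix.sub_mul]
    congr 1
    · rw [hsc, mul_smul_comm, mul_one, smul_mul_assoc, ← Matrix.map_mul, hPQ, hmapone]
    · rw [← Matrix.map_mul, ← Matrix.map_mul]
  rw [key, Matrix.det_mul, Matrix.det_mul]
  have hdet : (P.map (⇑(C : ℝ →+* ℝ[X]))).det * (Q.map (⇑(C : ℝ →+* ℝ[X]))).det = 1 := by
    rw [← Matrix.det_mul, ← Matrix.map_mul, hPQ, hmapone, Matrix.det_one]
  calc (P.map (⇑(C : ℝ →+* ℝ[X]))).det *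
        (Matrix.diagonal (fun _ : Fin n => (X:ℝ[X])) - M.map (⇑(C : ℝ →+* ℝ[X]))).det *
        (Q.map (⇑(C : ℝ →+* ℝ[X]))).det
      = ((P.map (⇑(C : ℝ →+* ℝ[X]))).det * (Q.map (⇑(C : ℝ →+* ℝ[X]))).det) *
        (Matrix.diagonal (fun _ : Fin n => (X:ℝ[X])) - M.map (⇑(C : ℝ →+* ℝ[X]))).det := by ring
    _ = (Matrix.diagonal (fun _ : Fin n => (X:ℝ[X])) - M.map (⇑(C : ℝ →+* ℝ[X]))).det := by
        rw [hdet, one_mul]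

lemma detpoly_hermitian {n : ℕ} {M : Matrix (Fin n) (Fin n) ℝ} (hM : M.IsHermitian) :
    (Matrix.diagonal (fun _ => (X:ℝ[X])) - M.map (C : ℝ →+* ℝ[X])).det
      = ((Finset.univ.val.map hM.eigenvalues).map (fun a => X - C a)).prod := by
  set U : Matrix (Fin n) (Fin n) ℝ :=
    (Matrix.IsHermitian.eigenvectorUnitary hM : Matrix (Fin n) (Fin n) ℝ) with hU
  have hmem := (Matrix.IsHermitian.eigenvectorUnitary hM).prop
  rw [Unitary.mem_iff] at hmem
  have hsMU : star U * M * U = Matrix.diagonal (RCLike.ofReal ∘ hM.eigenvalues) := by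
    have h := hM.conjStarAlgAut_star_eigenvectorUnitary
    rw [Unitary.conjStarAlgAut_star_apply] at h
    exact h
  have hco : RCLike.ofReal ∘ hM.eigenvalues = hM.eigenvalues := by
    funext i
    simp [RCLike.ofReal_real_eq_id]
  have hconj := detpoly_conj (star U) U M (hmem.1)
  rw [hsMU, hco] at hconj
  rw [← hconj]
  have hdiag : Matrix.diagonal (fun _ : Fin n => (X:ℝ[X]))
      - (Matrix.diagonal hM.eigenvalues).map (⇑(C : ℝ →+* ℝ[X]))
      = Matrix.diagonal (fun i => X - C (hM.eigenvalues i)) := by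
    rw [Matrix.diagonal_map (_root_.map_zero (C : ℝ →+* ℝ[X])), Matrix.diagonal_sub]
  rw [hdiag, Matrix.det_diagonal]
  rw [Finset.prod_eq_multiset_prod, Multiset.map_map]
  rfl

lemma esymmVec_eq_coeff {n : ℕ} {M : Matrix (Fin n) (Fin n) ℝ} (hM : M.IsHermitian) (j : ℕ)
    (hj : j ≤ n) :
    esymmVec n j hM.eigenvalues
      = (-1:ℝ)^j *
        ((Matrix.diagonal (fun _ => (X:ℝ[X])) - M.map (C : ℝ →+* ℝ[X])).det).coeff (n - j) := by
  rw [detpoly_hermitian hM]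
  have hcard : Multiset.card (Finset.univ.val.map hM.eigenvalues) = n := by simp
  rw [Multiset.prod_X_sub_C_coeff _ (by rw [hcard]; omega)]
  rw [hcard, show n - (n - j) = j from by omega]
  have hsq : (-1:ℝ)^j * (-1:ℝ)^j = 1 := by
    rw [← pow_add]; exact Even.neg_one_pow ⟨j, rfl⟩
  rw [← mul_assoc, hsq, one_mul, Finset.esymm_map_val]
  rfl


lemma coeff_prod_compl {n : ℕ} (lam : Fin n → ℝ) (s : Finset (Fin n)) (j : ℕ) (hj : j ≤ n) :
    (∏ i ∈ sᶜ, (X - C (lam i))).coeff (n - j)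
      = if s.card ≤ j then (-1:ℝ)^(j - s.card) * ((sᶜ.val.map lam).esymm (j - s.card)) else 0 := by
  have hsc : s.card ≤ n := by
    have := Finset.card_le_univ s
    simpa using this
  have hcs : Multiset.card (sᶜ.val.map lam) = n - s.card := by
    simp [Finset.card_compl]
  have hprod : (∏ i ∈ sᶜ, (X - C (lam i))) = ((sᶜ.val.map lam).map (fun a => X - C a)).prod := by
    rw [Finset.prod_eq_multiset_prod, Multiset.map_map]
    rfl
  rw [hprod]
  by_cases hcase : s.card ≤ j
  · rw [if_pos hcase]
    rw [Multiset.prod_X_sub_C_coeff _ (by rw [hcs]; omega)]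
    rw [hcs, show (n - s.card) - (n - j) = j - s.card from by omega]
  · rw [if_neg hcase]
    apply coeff_eq_zero_of_natDegree_lt
    have hnd : (((sᶜ.val.map lam).map (fun a => X - C a)).prod).natDegree = n - s.card := by
      rw [natDegree_multiset_prod_of_monic]
      · rw [Multiset.map_map]
        simp [Function.comp, natDegree_X_sub_C, hcs, Finset.card_compl]
      · intro f hf
        obtain ⟨a, _, rfl⟩ := Multiset.mem_map.mp hf
        exact monic_X_sub_C a
    rw [hnd]
    omega

lemma main_expand {n : ℕ} (lam : Fin n → ℝ) (N : Matrix (Fin n) (Fin n) ℝ) (j : ℕ) (hj : j ≤ n) :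
    (-1:ℝ)^j *
      (((Matrix.diagonal (fun _ => (X:ℝ[X])) -
        (Matrix.diagonal lam + N).map (C : ℝ →+* ℝ[X])).det).coeff (n - j))
      = ∑ s : Finset (Fin n), (if s.card ≤ j then
          (N.submatrix (Subtype.val : {i // i ∈ s} → Fin n) (Subtype.val : {i // i ∈ s} → Fin n)).det *
            ((sᶜ.val.map lam).esymm (j - s.card)) else 0) := by
  have hmat : Matrix.diagonal (fun _ : Fin n => (X:ℝ[X]))
      - (Matrix.diagonal lam + N).map (⇑(C : ℝ →+* ℝ[X]))
      = Matrix.diagonal (fun i => X - C (lam i)) + (-(N.map (⇑(C : ℝ →+* ℝ[X])))) := by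
    ext i j'
    by_cases hij : i = j' <;>
      simp [Matrix.diagonal_apply, hij, Matrix.map_apply, Matrix.sub_apply, Matrix.add_apply,
        Matrix.neg_apply, sub_add_eq_sub_sub] <;> ring_nf
  rw [hmat, det_diagonal_add, Polynomial.finset_sum_coeff, Finset.mul_sum]
  refine Finset.sum_congr rfl fun s _ => ?_
  have hdetterm : (((-(N.map (⇑(C : ℝ →+* ℝ[X])))).submatrix
        (Subtype.val : {i // i ∈ s} → Fin n) (Subtype.val : {i // i ∈ s} → Fin n))).det
      = C ((-1:ℝ)^s.card * (N.submatrix (Subtype.val : {i // i ∈ s} → Fin n) (Subtype.val : {i // i ∈ s} → Fin n)).det) := by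
    have h1 : ((-(N.map (⇑(C : ℝ →+* ℝ[X])))).submatrix
          (Subtype.val : {i // i ∈ s} → Fin n) (Subtype.val : {i // i ∈ s} → Fin n))
        = -((N.map (⇑(C : ℝ →+* ℝ[X]))).submatrix
            (Subtype.val : {i // i ∈ s} → Fin n) (Subtype.val : {i // i ∈ s} → Fin n)) := rfl
    rw [h1, Matrix.det_neg, Matrix.submatrix_map, ← RingHom.mapMatrix_apply, ← RingHom.map_det, Fintype.card_coe]
    rw [map_mul, map_pow, map_neg, map_one]
  rw [hdetterm]
  have hcoeff : ((∏ i ∈ sᶜ, (X - C (lam i))) *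
        C ((-1:ℝ)^s.card * (N.submatrix (Subtype.val : {i // i ∈ s} → Fin n) (Subtype.val : {i // i ∈ s} → Fin n)).det)).coeff (n - j)
      = ((-1:ℝ)^s.card * (N.submatrix (Subtype.val : {i // i ∈ s} → Fin n) (Subtype.val : {i // i ∈ s} → Fin n)).det) *
          (∏ i ∈ sᶜ, (X - C (lam i))).coeff (n - j) := by
    rw [mul_comm, coeff_C_mul]
  rw [hcoeff, coeff_prod_compl lam s j hj]
  by_cases hcase : s.card ≤ j
  · rw [if_pos hcase, if_pos hcase]
    have hsign : (-1:ℝ)^j * ((-1:ℝ)^s.card * ((-1:ℝ)^(j - s.card))) = 1 := by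
      rw [← pow_add, show s.card + (j - s.card) = j from by omega, ← pow_add]
      exact Even.neg_one_pow ⟨j, rfl⟩
    calc (-1:ℝ)^j * (((-1:ℝ)^s.card *
          (N.submatrix (Subtype.val : {i // i ∈ s} → Fin n) (Subtype.val : {i // i ∈ s} → Fin n)).det) *
          ((-1:ℝ)^(j - s.card) * ((sᶜ.val.map lam).esymm (j - s.card))))
        = ((-1:ℝ)^j * ((-1:ℝ)^s.card * ((-1:ℝ)^(j - s.card)))) *
            ((N.submatrix (Subtype.val : {i // i ∈ s} → Fin n) (Subtype.val : {i // i ∈ s} → Fin n)).det *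
              ((sᶜ.val.map lam).esymm (j - s.card))) := by ring
      _ = (N.submatrix (Subtype.val : {i // i ∈ s} → Fin n) (Subtype.val : {i // i ∈ s} → Fin n)).det *
            ((sᶜ.val.map lam).esymm (j - s.card)) := by rw [hsign, one_mul]
  · rw [if_neg hcase, if_neg hcase, mul_zero, mul_zero]



lemma esymmVec_eq_esymm {n j : ℕ} (lam : Fin n → ℝ) :
    esymmVec n j lam = (Finset.univ.val.map lam).esymm j := by
  rw [Finset.esymm_map_val]
  rfl

lemma esymmVec_zero {n : ℕ} (lam : Fin n → ℝ) : esymmVec n 0 lam = 1 := by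
  rw [esymmVec_eq_esymm, esymm_zero']

lemma split_multiset {n : ℕ} (lam : Fin n → ℝ) (s : Finset (Fin n)) :
    (sᶜ.val.map lam) + (s.val.map lam) = Finset.univ.val.map lam := by
  rw [← Multiset.map_add]
  congr 1
  rw [Finset.compl_eq_univ_sdiff, Finset.sdiff_val, tsub_add_cancel_of_le]
  exact Finset.val_le_iff.mpr (Finset.subset_univ s)

lemma psd_det_nonneg {ι : Type*} [Fintype ι] [DecidableEq ι] {M : Matrix ι ι ℝ}
    (hM : M.PosSemidef) : 0 ≤ M.det := by
  rw [hM.1.det_eq_prod_eigenvalues]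
  apply Finset.prod_nonneg
  intro i _
  have := hM.eigenvalues_nonneg i
  simpa using this

lemma sigma_formula {n : ℕ} {A B : Matrix (Fin n) (Fin n) ℝ} (hB : B.IsHermitian)
    (hAB : (A + B).IsHermitian) (j : ℕ) (hj : j ≤ n) :
    esymmVec n j hAB.eigenvalues
      = ∑ s : Finset (Fin n), (if s.card ≤ j then
          (((star (hB.eigenvectorUnitary : Matrix (Fin n) (Fin n) ℝ) * A *
            (hB.eigenvectorUnitary : Matrix (Fin n) (Fin n) ℝ)).submatrix
              (Subtype.val : {i // i ∈ s} → Fin n)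
              (Subtype.val : {i // i ∈ s} → Fin n)).det *
            ((sᶜ.val.map hB.eigenvalues).esymm (j - s.card))) else 0) := by
  set U : Matrix (Fin n) (Fin n) ℝ := (hB.eigenvectorUnitary : Matrix (Fin n) (Fin n) ℝ) with hU
  rw [esymmVec_eq_coeff hAB j hj]
  have hmem := (Matrix.IsHermitian.eigenvectorUnitary hB).prop
  rw [Unitary.mem_iff] at hmem
  have hconj := detpoly_conj (star U) U (A + B) hmem.1
  have hBdiag : star U * B * U = Matrix.diagonal hB.eigenvalues := by
    have h := hB.conjStarAlgAut_star_eigenvectorUnitary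
    rw [Unitary.conjStarAlgAut_star_apply] at h
    have hco : RCLike.ofReal ∘ hB.eigenvalues = hB.eigenvalues := by
      funext i
      simp [RCLike.ofReal_real_eq_id]
    rw [hco] at h
    exact h
  have hsplit : star U * (A + B) * U = Matrix.diagonal hB.eigenvalues + star U * A * U := by
    rw [Matrix.mul_add, Matrix.add_mul, hBdiag, add_comm]
  rw [hsplit] at hconj
  rw [← hconj]
  exact main_expand hB.eigenvalues (star U * A * U) j hj


end SymmAux

open SymmAux

/-- Lemma (A+B), part (1), second inequality: if `A` is positive semidefinite,
`B ∈ Γ_{k-1}` and `A + B ∈ Γ_{k-1}`, then for `0 ≤ l < k-1`,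
`(σ_{k-1}/σ_l)^{1/(k-1-l)}(A+B) ≥ (σ_{k-1}/σ_l)^{1/(k-1-l)}(B)`. -/
theorem stmt_1 (n k l : ℕ) (hn : 2 ≤ n) (hl : l < k - 1) (hkn : k ≤ n)
    (A B : Matrix (Fin n) (Fin n) ℝ) (hA : A.IsHermitian) (hB : B.IsHermitian)
    (hApsd : A.PosSemidef)
    (hBG : inGamma n (k - 1) hB.eigenvalues)
    (hABG : inGamma n (k - 1) (hA.add hB).eigenvalues) :
    (esymmVec n (k - 1) (hA.add hB).eigenvalues / esymmVec n l (hA.add hB).eigenvalues) ^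
        ((1 : ℝ) / ((k - 1 - l : ℕ) : ℝ)) ≥
      (esymmVec n (k - 1) hB.eigenvalues / esymmVec n l hB.eigenvalues) ^
        ((1 : ℝ) / ((k - 1 - l : ℕ) : ℝ)) := by
  classical
  have hm1 : 1 ≤ k - 1 := by omega
  have hmn : (k - 1) + 1 ≤ n := by omega
  have hln : l ≤ n := by omega
  have hBΓ : ∀ j, 1 ≤ j → j ≤ k - 1 → 0 < (Finset.univ.val.map hB.eigenvalues).esymm j := by
    intro j h1 h2
    have := hBG j h1 h2
    rwa [esymmVec_eq_esymm] at this
  have hXm := sigma_formula (A := A) hB (hA.add hB) (k - 1) (by omega)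
  have hXl := sigma_formula (A := A) hB (hA.add hB) l (by omega)
  have hYmpos : 0 < esymmVec n (k - 1) hB.eigenvalues := hBG (k - 1) hm1 le_rfl
  have hYlpos : 0 < esymmVec n l hB.eigenvalues := by
    rcases Nat.eq_zero_or_pos l with rfl | hl0
    · rw [esymmVec_zero]; norm_num
    · exact hBG l hl0 (by omega)
  have hXmpos : 0 < esymmVec n (k - 1) (hA.add hB).eigenvalues := hABG (k - 1) hm1 le_rfl
  have hXlpos : 0 < esymmVec n l (hA.add hB).eigenvalues := by
    rcases Nat.eq_zero_or_pos l with rfl | hl0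
    · rw [esymmVec_zero]; norm_num
    · exact hABG l hl0 (by omega)
  have key : esymmVec n l (hA.add hB).eigenvalues * esymmVec n (k - 1) hB.eigenvalues
      ≤ esymmVec n (k - 1) (hA.add hB).eigenvalues * esymmVec n l hB.eigenvalues := by
    rw [hXm, hXl, Finset.sum_mul, Finset.sum_mul]
    apply Finset.sum_le_sum
    intro s _
    set d := ((star (hB.eigenvectorUnitary : Matrix (Fin n) (Fin n) ℝ) * A *
      (hB.eigenvectorUnitary : Matrix (Fin n) (Fin n) ℝ)).submatrix
        (Subtype.val : {i // i ∈ s} → Fin n) (Subtype.val : {i // i ∈ s} → Fin n)).det with hd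
    have hd0 : 0 ≤ d := by
      rw [hd]
      apply psd_det_nonneg
      apply Matrix.PosSemidef.submatrix
      have h := hApsd.mul_mul_conjTranspose_same
        (star (hB.eigenvectorUnitary : Matrix (Fin n) (Fin n) ℝ))
      rwa [Matrix.star_eq_conjTranspose, Matrix.conjTranspose_conjTranspose] at h
    have hYmE := esymmVec_eq_esymm (n := n) (j := k - 1) hB.eigenvalues
    have hYlE := esymmVec_eq_esymm (n := n) (j := l) hB.eigenvalues
    have hsplitS : (sᶜ.val.map hB.eigenvalues) + (s.val.map hB.eigenvalues)
        = Finset.univ.val.map hB.eigenvalues := split_multiset hB.eigenvalues s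
    have hcardDel : Multiset.card (sᶜ.val.map hB.eigenvalues) = n - s.card := by
      simp [Finset.card_compl]
    have hcardS : Multiset.card (s.val.map hB.eigenvalues) = s.card := by simp
    have hcards : s.card ≤ n := by
      have := Finset.card_le_univ s; simpa using this
    by_cases hsl : s.card ≤ l
    · rw [if_pos hsl, if_pos (by omega : s.card ≤ k - 1)]
      rcases Nat.eq_zero_or_pos s.card with hs0 | hs1
      · have hsempty : s = ∅ := Finset.card_eq_zero.mp hs0
        subst hsempty
        haveI : IsEmpty {i : Fin n // i ∈ (∅ : Finset (Fin n))} :=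
          ⟨fun x => Finset.notMem_empty _ x.2⟩
        have hdempty : d = 1 := by rw [hd]; exact Matrix.det_isEmpty
        rw [hdempty]
        simp only [Finset.card_empty, Nat.sub_zero, Finset.compl_empty, one_mul]
        rw [← hYmE, ← hYlE]
        exact le_of_eq (by ring)
      · have hbr := bracketN (s.val.map hB.eigenvalues) (sᶜ.val.map hB.eigenvalues)
          (l - s.card) ((k - 1) - s.card)
          (by omega) (by rw [hcardDel]; omega) ?hGam
        case hGam =>
          intro j h1 h2
          rw [hsplitS]
          apply hBΓ j h1
          omega
        rw [hsplitS, hcardS] at hbr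
        rw [show (k - 1) - s.card + s.card = k - 1 from by omega,
          show l - s.card + s.card = l from by omega] at hbr
        rw [← hYmE, ← hYlE] at hbr
        calc d * (sᶜ.val.map hB.eigenvalues).esymm (l - s.card)
              * esymmVec n (k - 1) hB.eigenvalues
            = d * ((sᶜ.val.map hB.eigenvalues).esymm (l - s.card)
                * esymmVec n (k - 1) hB.eigenvalues) := by ring
          _ ≤ d * ((sᶜ.val.map hB.eigenvalues).esymm ((k - 1) - s.card)
                * esymmVec n l hB.eigenvalues) := mul_le_mul_of_nonneg_left hbr hd0
          _ = d * (sᶜ.val.map hB.eigenvalues).esymm ((k - 1) - s.card)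
                * esymmVec n l hB.eigenvalues := by ring
    · rw [if_neg hsl, zero_mul]
      by_cases hsm : s.card ≤ k - 1
      · rw [if_pos hsm]
        have hEnn : 0 ≤ (sᶜ.val.map hB.eigenvalues).esymm ((k - 1) - s.card) := by
          rcases Nat.eq_zero_or_pos ((k - 1) - s.card) with h0 | hpos
          · rw [h0, esymm_zero']; norm_num
          · refine (deletionN (s.val.map hB.eigenvalues) (sᶜ.val.map hB.eigenvalues)
              (k - 1) ?_ ?_ ((k - 1) - s.card) hpos ?_).le
            · rw [hcardDel, hcardS]; omega
            · intro j h1 h2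
              rw [hsplitS]
              exact hBΓ j h1 h2
            · rw [hcardS]; omega
        exact mul_nonneg (mul_nonneg hd0 hEnn) hYlpos.le
      · rw [if_neg hsm, zero_mul]
  have hdiv : esymmVec n (k - 1) hB.eigenvalues / esymmVec n l hB.eigenvalues
      ≤ esymmVec n (k - 1) (hA.add hB).eigenvalues / esymmVec n l (hA.add hB).eigenvalues := by
    rw [div_le_div_iff₀ hYlpos hXlpos]
    nlinarith [key]
  have hαnn : (0:ℝ) ≤ (1 : ℝ) / ((k - 1 - l : ℕ) : ℝ) := by positivity
  exact Real.rpow_le_rpow (by positivity) hdiv hαnn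
end

section
/- Let n ≥ 2 and 2 ≤ k ≤ n. Let A and B be real symmetric n×n matrices such that A is negative semidefinite, B ∈ Γ_{k-1}, and A + B ∈ Γ_{k-1}. Then σ_k(A+B)/σ_{k-1}(A+B) ≤ σ_k(B)/σ_{k-1}(B). -/
open Polynomial
set_option linter.unusedSectionVars false
set_option linter.unusedVariables false

namespace StmtAux

noncomputable def eS {α : Type*} (s : Finset α) (j : ℕ) (μ : α → ℝ) : ℝ :=
  ∑ T ∈ s.powersetCard j, ∏ i ∈ T, μ i

noncomputable def pS {α : Type*} (s : Finset α) (μ : α → ℝ) : ℝ[X] :=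
  ∏ i ∈ s, (X + C (μ i))

variable {α : Type*}

lemma eS_zero (s : Finset α) (μ : α → ℝ) : eS s 0 μ = 1 := by simp [eS]

lemma eS_of_card_lt {s : Finset α} {j : ℕ} (h : s.card < j) (μ : α → ℝ) : eS s j μ = 0 := by
  unfold eS
  rw [Finset.powersetCard_eq_empty.2 h, Finset.sum_empty]

lemma pS_monic (s : Finset α) (μ : α → ℝ) : (pS s μ).Monic :=
  monic_prod_of_monic _ _ fun i _ => monic_X_add_C _

lemma pS_natDegree (s : Finset α) (μ : α → ℝ) : (pS s μ).natDegree = s.card := by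
  rw [pS, natDegree_prod _ _ fun i _ => (monic_X_add_C (μ i)).ne_zero]
  simp [natDegree_X_add_C]

lemma eS_eq_coeff {s : Finset α} {j : ℕ} (h : j ≤ s.card) (μ : α → ℝ) :
    eS s j μ = (pS s μ).coeff (s.card - j) := by
  rw [pS, Finset.prod_X_add_C_coeff _ _ (Nat.sub_le _ _), Nat.sub_sub_self h]; rfl

lemma eS_insert [DecidableEq α] {x : α} {s : Finset α} (hx : x ∉ s) (j : ℕ) (μ : α → ℝ) :
    eS (insert x s) (j+1) μ = eS s (j+1) μ + μ x * eS s j μ := by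
  unfold eS
  rw [Finset.powersetCard_succ_insert hx, Finset.sum_union, Finset.sum_image]
  · congr 1
    rw [Finset.mul_sum]
    refine Finset.sum_congr rfl fun T hT => ?_
    rw [Finset.mem_powersetCard] at hT
    rw [Finset.prod_insert fun hxT => hx (hT.1 hxT)]
  · intro T hT T' hT' h
    rw [Finset.mem_coe, Finset.mem_powersetCard] at hT hT'
    have e1 : (insert x T).erase x = T := Finset.erase_insert fun hxT => hx (hT.1 hxT)
    have e2 : (insert x T').erase x = T' := Finset.erase_insert fun hxT => hx (hT'.1 hxT)
    rw [← e1, ← e2, h]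
  · rw [Finset.disjoint_left]
    intro T hT hT'
    rw [Finset.mem_powersetCard] at hT
    rw [Finset.mem_image] at hT'
    obtain ⟨u, hu, rfl⟩ := hT'
    exact hx (hT.1 (Finset.mem_insert_self x u))

lemma eS_erase [DecidableEq α] {i : α} {s : Finset α} (hi : i ∈ s) (j : ℕ) (μ : α → ℝ) :
    eS s (j+1) μ = eS (s.erase i) (j+1) μ + μ i * eS (s.erase i) j μ := by
  conv_lhs => rw [← Finset.insert_erase hi]
  exact eS_insert (Finset.notMem_erase i s) j μ

lemma eS_pos {s : Finset α} {j : ℕ} {μ : α → ℝ} (h : ∀ x ∈ s, 0 < μ x) (hj : j ≤ s.card) :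
    0 < eS s j μ := by
  unfold eS
  refine Finset.sum_pos (fun T hT => Finset.prod_pos fun x hx => ?_) ?_
  · rw [Finset.mem_powersetCard] at hT
    exact h x (hT.1 hx)
  · exact Finset.powersetCard_nonempty.2 hj

lemma eS_nonneg_of_gamma {s : Finset α} {m j : ℕ} {μ : α → ℝ}
    (h : ∀ l, 1 ≤ l → l ≤ m → 0 < eS s l μ) (hj : j ≤ m) : 0 ≤ eS s j μ := by
  rcases Nat.eq_zero_or_pos j with rfl | hj1
  · rw [eS_zero]; norm_num
  · exact (h j hj1 hj).le


/-- real-rooted polynomials -/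
def RR (p : ℝ[X]) : Prop := Multiset.card p.roots = p.natDegree

lemma RR_zero : RR 0 := by simp [RR]

lemma RR_C (c : ℝ) : RR (C c) := by simp [RR]

lemma RR.mul {p q : ℝ[X]} (hp : RR p) (hq : RR q) : RR (p * q) := by
  rcases eq_or_ne p 0 with rfl | hp0
  · simpa using RR_zero
  rcases eq_or_ne q 0 with rfl | hq0
  · simpa using RR_zero
  unfold RR at *
  rw [roots_mul (mul_ne_zero hp0 hq0), natDegree_mul hp0 hq0, Multiset.card_add, hp, hq]

lemma RR.deriv {p : ℝ[X]} (hp : RR p) : RR (derivative p) := by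
  rcases Nat.eq_zero_or_pos p.natDegree with h0 | hpos
  · obtain ⟨c, rfl⟩ := natDegree_eq_zero.1 h0
    simpa using RR_zero
  · have h1 := p.card_roots_le_derivative
    have h2 := card_roots' (derivative p)
    have h3 := natDegree_derivative_le p
    unfold RR at *
    omega

lemma RR.iterate {p : ℝ[X]} (hp : RR p) (k : ℕ) : RR (derivative^[k] p) := by
  induction k with
  | zero => simpa
  | succ k ih => rw [Function.iterate_succ_apply']; exact ih.deriv

lemma reverse_X_sub_C (a : ℝ) : (X - C a).reverse = 1 - C a * X := by
  ext n
  rw [coeff_reverse, natDegree_X_sub_C]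
  match n with
  | 0 =>
    rw [revAt_le (by norm_num)]
    norm_num [coeff_sub, coeff_one, coeff_C_mul, coeff_X, coeff_C]
  | 1 =>
    rw [revAt_le (by norm_num)]
    norm_num [coeff_sub, coeff_one, coeff_C_mul, coeff_X, coeff_C]
  | (n+2) =>
    rw [revAt_eq_self_of_lt (by omega)]
    norm_num [coeff_sub, coeff_one, coeff_C_mul, coeff_X, coeff_C]

lemma RR_one_sub_C_mul_X (a : ℝ) : RR (1 - C a * X) := by
  rcases eq_or_ne a 0 with rfl | ha
  · simpa using RR_C 1
  · have h : C (-a) * (X - C a⁻¹) = 1 - C a * X := by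
      rw [mul_sub, ← C_mul, neg_mul, mul_inv_cancel₀ ha, map_neg, map_neg, map_one]
      ring
    rw [← h]
    unfold RR
    rw [roots_C_mul _ (neg_ne_zero.2 ha), natDegree_C_mul (neg_ne_zero.2 ha),
      roots_X_sub_C, natDegree_X_sub_C]
    simp

lemma RR_reverse_multiset (m : Multiset ℝ) :
    RR ((m.map (fun a => X - C a)).prod).reverse := by
  induction m using Multiset.induction with
  | empty =>
    simp only [Multiset.map_zero, Multiset.prod_zero]
    rw [← map_one (C : ℝ →+* ℝ[X]), reverse_C]
    exact RR_C 1
  | cons a s ih =>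
    rw [Multiset.map_cons, Multiset.prod_cons, reverse_mul_of_domain, reverse_X_sub_C]
    exact (RR_one_sub_C_mul_X a).mul ih

lemma RR.reverse {p : ℝ[X]} (hp : RR p) : RR p.reverse := by
  rcases eq_or_ne p 0 with rfl | hp0
  · simpa using RR_zero
  · rw [show p.reverse = (C p.leadingCoeff * (p.roots.map fun a => X - C a).prod).reverse by
      rw [C_leadingCoeff_mul_prod_multiset_X_sub_C hp]]
    rw [reverse_mul_of_domain, reverse_C]
    exact (RR_C _).mul (RR_reverse_multiset _)

lemma RR.disc {q : ℝ[X]} (hq : RR q) (hd : q.natDegree ≤ 2) :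
    4 * (q.coeff 2 * q.coeff 0) ≤ q.coeff 1 ^ 2 := by
  rcases lt_or_eq_of_le hd with h | h
  · rw [coeff_eq_zero_of_natDegree_lt h]
    simpa using sq_nonneg (q.coeff 1)
  · have hq0 : q ≠ 0 := fun h0 => by simp [h0] at h
    have hcard : Multiset.card q.roots = 2 := by rw [hq, ← h]
    obtain ⟨a, b, hab⟩ := Multiset.card_eq_two.1 hcard
    have key := C_leadingCoeff_mul_prod_multiset_X_sub_C hq
    rw [hab] at key
    set c := q.leadingCoeff with hc
    have hq2 : q = C c * (X ^ 2 - C (a + b) * X + C (a * b)) := by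
      rw [← key]
      congr 1
      simp only [Multiset.insert_eq_cons, Multiset.map_cons, Multiset.map_singleton,
        Multiset.prod_cons, Multiset.prod_singleton]
      ring_nf
      simp [map_add, map_mul]
      ring
    have h0 : q.coeff 0 = c * (a * b) := by
      rw [hq2]; simp [coeff_C_mul, coeff_sub, coeff_add, coeff_X_pow, coeff_C]
    have h1 : q.coeff 1 = c * (-(a + b)) := by
      rw [hq2]; simp [coeff_C_mul, coeff_sub, coeff_add, coeff_X_pow, coeff_C]
    have h2 : q.coeff 2 = c := by
      rw [hq2]; simp [coeff_C_mul, coeff_sub, coeff_add, coeff_X_pow, coeff_C]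
    rw [h0, h1, h2]
    nlinarith [sq_nonneg (c * (a - b))]

lemma descFact_succ_self (n : ℕ) : (n + 1).descFactorial n = Nat.factorial (n+1) := by
  induction n with
  | zero => simp [Nat.factorial]
  | succ n ih =>
    rw [Nat.succ_descFactorial_succ, ih]
    simp [Nat.factorial_succ]

lemma descFact_succ_succ_self (n : ℕ) : 2 * (n + 2).descFactorial n = Nat.factorial (n+2) := by
  induction n with
  | zero => simp [Nat.factorial]
  | succ n ih =>
    rw [Nat.succ_descFactorial_succ]
    calc 2 * ((n + 2 + 1) * (n + 2).descFactorial n)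
        = (n + 3) * (2 * (n + 2).descFactorial n) := by ring
      _ = (n + 3) * Nat.factorial (n+2) := by rw [ih]
      _ = Nat.factorial (n+3) := (Nat.factorial_succ (n + 2)).symm

lemma descFact_key (e : ℕ) :
    ((e+1).descFactorial e)^2 ≤ 2 * (e.descFactorial e * (e+2).descFactorial e) := by
  have h1 := descFact_succ_self e
  have h2 := descFact_succ_succ_self e
  have h3 : e.descFactorial e = Nat.factorial e := Nat.descFactorial_self e
  have key : Nat.factorial (e+1) * Nat.factorial (e+1) ≤ Nat.factorial e * Nat.factorial (e+2) := by
    rw [Nat.factorial_succ e, Nat.factorial_succ (e+1)]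
    calc (e+1) * Nat.factorial e * ((e+1) * Nat.factorial e) ≤ (e+2) * ((e+1) * Nat.factorial e) * Nat.factorial e := by
          have := Nat.mul_le_mul_right ((e+1) * Nat.factorial e * Nat.factorial e) (show e + 1 ≤ e + 2 by omega)
          nlinarith [this]
      _ = Nat.factorial e * ((e+2) * ((e+1) * Nat.factorial e)) := by ring
  calc ((e+1).descFactorial e)^2 = Nat.factorial (e+1) * Nat.factorial (e+1) := by rw [h1]; ring
    _ ≤ Nat.factorial e * Nat.factorial (e+2) := key
    _ = Nat.factorial e * (2 * (e+2).descFactorial e) := by rw [h2]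
    _ = 2 * (e.descFactorial e * (e+2).descFactorial e) := by rw [h3]; ring

lemma natDegree_iterate_derivative_le (p : ℝ[X]) (k : ℕ) :
    (derivative^[k] p).natDegree ≤ p.natDegree - k := by
  induction k with
  | zero => simp
  | succ k ih =>
    rw [Function.iterate_succ_apply']
    have := natDegree_derivative_le (derivative^[k] p)
    omega


end StmtAux

namespace StmtAux
open Polynomial

lemma RR_pS {α : Type*} (s : Finset α) (μ : α → ℝ) : RR (pS s μ) := by
  have h : pS s μ = ((s.val.map (fun i => -μ i)).map (fun a => X - C a)).prod := by
    rw [pS, Finset.prod, Multiset.map_map]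
    congr 1
    apply Multiset.map_congr rfl
    intro i _
    simp [sub_neg_eq_add]
  unfold RR
  rw [h, roots_multiset_prod_X_sub_C, ← h, pS_natDegree]
  simp

end StmtAux

namespace StmtAux
open Polynomial

lemma descFactorial_pos' {n k : ℕ} (h : k ≤ n) : 0 < n.descFactorial k :=
  Nat.pos_of_ne_zero fun h0 => by
    rw [Nat.descFactorial_eq_zero_iff_lt] at h0; omega

lemma newton {α : Type*} (s : Finset α) (μ : α → ℝ) (j : ℕ) :
    eS s (j+2) μ * eS s j μ ≤ eS s (j+1) μ ^ 2 := by
  by_cases hc : s.card < j + 2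
  · rw [eS_of_card_lt hc]
    simpa using sq_nonneg (eS s (j+1) μ)
  push_neg at hc
  set m := s.card with hm
  set d := m - (j + 2) with hd
  set p := pS s μ with hp
  have hpdeg : p.natDegree = m := pS_natDegree s μ
  have hRRp : RR p := RR_pS s μ
  set d1 := derivative^[d] p with hd1def
  have hd1c : ∀ i, d1.coeff i = ((i + d).descFactorial d : ℝ) * p.coeff (i + d) := by
    intro i
    rw [hd1def, coeff_iterate_derivative, nsmul_eq_mul]
  have hd1deg_le : d1.natDegree ≤ j + 2 := by
    have h := natDegree_iterate_derivative_le p d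
    rw [← hd1def, hpdeg] at h
    omega
  have hp0 : p.coeff (0 + d) = eS s (j+2) μ := by
    rw [eS_eq_coeff (show j + 2 ≤ s.card by omega) μ, ← hp, ← hm]
    congr 1
    omega
  have hp1 : p.coeff (1 + d) = eS s (j+1) μ := by
    rw [eS_eq_coeff (show j + 1 ≤ s.card by omega) μ, ← hp, ← hm]
    congr 1
    omega
  have hp2 : p.coeff (2 + d) = eS s j μ := by
    rw [eS_eq_coeff (show j ≤ s.card by omega) μ, ← hp, ← hm]
    congr 1
    omega
  have hlead : d1.coeff (j+2) = ((m).descFactorial d : ℝ) := by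
    rw [hd1c]
    have h1 : (j+2) + d = m := by omega
    rw [h1, show p.coeff m = 1 from by
      rw [← hpdeg]; exact (pS_monic s μ).coeff_natDegree]
    rw [mul_one]
  have hdnz : d1.coeff (j+2) ≠ 0 := by
    rw [hlead]
    exact_mod_cast (descFactorial_pos' (show d ≤ m by omega)).ne'
  have hd1deg : d1.natDegree = j + 2 :=
    le_antisymm hd1deg_le (le_natDegree_of_ne_zero hdnz)
  set rev := d1.reverse with hrev
  have hrevc : ∀ t, t ≤ j + 2 → rev.coeff t = d1.coeff (j + 2 - t) := by
    intro t ht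
    rw [hrev, coeff_reverse, hd1deg, revAt_le ht]
  set d2 := derivative^[j] rev with hd2def
  have hd2c : ∀ i, d2.coeff i = ((i + j).descFactorial j : ℝ) * rev.coeff (i + j) := by
    intro i; rw [hd2def, coeff_iterate_derivative, nsmul_eq_mul]
  have hRR2 : RR d2 := ((hRRp.iterate d).reverse).iterate j
  have hd2deg : d2.natDegree ≤ 2 := by
    have h1 : rev.natDegree ≤ j + 2 := by
      rw [hrev, ← hd1deg]; exact reverse_natDegree_le d1
    have h2 := natDegree_iterate_derivative_le rev j
    rw [← hd2def] at h2
    omega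
  have disc := hRR2.disc hd2deg
  have c0 : d2.coeff 0 = ((j.descFactorial j : ℕ) : ℝ) * ((((2+d).descFactorial d : ℕ)) : ℝ)
      * eS s j μ := by
    rw [hd2c, show (0 + j) = j by omega, hrevc j (by omega),
      show j + 2 - j = 2 by omega, hd1c, hp2]
    ring
  have c1 : d2.coeff 1 = (((1+j).descFactorial j : ℕ) : ℝ) * ((((1+d).descFactorial d : ℕ)) : ℝ)
      * eS s (j+1) μ := by
    rw [hd2c, hrevc (1+j) (by omega), show j + 2 - (1 + j) = 1 by omega, hd1c, hp1]
    ring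
  have c2 : d2.coeff 2 = (((2+j).descFactorial j : ℕ) : ℝ) * ((((d).descFactorial d : ℕ)) : ℝ)
      * eS s (j+2) μ := by
    rw [hd2c, hrevc (2+j) (by omega), show j + 2 - (2 + j) = 0 by omega, hd1c, hp0]
    ring
  rw [c0, c1, c2] at disc
  have key1 : (((1+j).descFactorial j : ℕ) : ℝ)^2 ≤
      2 * (((j.descFactorial j : ℕ) : ℝ) * (((2+j).descFactorial j : ℕ) : ℝ)) := by
    exact_mod_cast (by simpa [Nat.add_comm] using descFact_key j :
      ((1+j).descFactorial j)^2 ≤ 2 * (j.descFactorial j * (2+j).descFactorial j))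
  have key2 : (((1+d).descFactorial d : ℕ) : ℝ)^2 ≤
      2 * (((d.descFactorial d : ℕ) : ℝ) * (((2+d).descFactorial d : ℕ) : ℝ)) := by
    exact_mod_cast (by simpa [Nat.add_comm] using descFact_key d :
      ((1+d).descFactorial d)^2 ≤ 2 * (d.descFactorial d * (2+d).descFactorial d))
  rcases le_or_gt (eS s (j+2) μ * eS s j μ) 0 with hsign | hsign
  · exact le_trans hsign (sq_nonneg _)
  · set AJ := (((1+j).descFactorial j : ℕ) : ℝ) with hAJ
    set AD := (((1+d).descFactorial d : ℕ) : ℝ) with hAD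
    set B0 := ((j.descFactorial j : ℕ) : ℝ) with hB0
    set B2 := (((2+j).descFactorial j : ℕ) : ℝ) with hB2
    set G0 := ((d.descFactorial d : ℕ) : ℝ) with hG0
    set G2 := (((2+d).descFactorial d : ℕ) : ℝ) with hG2
    have hAJpos : (0:ℝ) < AJ := by
      rw [hAJ]; exact_mod_cast descFactorial_pos' (by omega)
    have hADpos : (0:ℝ) < AD := by
      rw [hAD]; exact_mod_cast descFactorial_pos' (by omega)
    have hB0n : (0:ℝ) ≤ B0 := by rw [hB0]; positivity
    have hB2n : (0:ℝ) ≤ B2 := by rw [hB2]; positivity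
    have hG0n : (0:ℝ) ≤ G0 := by rw [hG0]; positivity
    have hG2n : (0:ℝ) ≤ G2 := by rw [hG2]; positivity
    have hKsq : (AJ * AD)^2 ≤ 4 * ((B0 * G2) * (B2 * G0)) := by
      nlinarith [mul_le_mul key1 key2 (sq_nonneg AD) (by positivity : (0:ℝ) ≤ 2 * (B0 * B2))]
    have hKpos : (0:ℝ) < (AJ * AD)^2 := by positivity
    have chain : (AJ * AD)^2 * (eS s (j+2) μ * eS s j μ) ≤ (AJ * AD)^2 * eS s (j+1) μ ^ 2 := by
      calc (AJ * AD)^2 * (eS s (j+2) μ * eS s j μ)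
          ≤ (4 * ((B0 * G2) * (B2 * G0))) * (eS s (j+2) μ * eS s j μ) :=
            mul_le_mul_of_nonneg_right hKsq hsign.le
        _ = 4 * (B2 * G0 * eS s (j+2) μ * (B0 * G2 * eS s j μ)) := by ring
        _ ≤ (AJ * AD * eS s (j+1) μ) ^ 2 := disc
        _ = (AJ * AD)^2 * eS s (j+1) μ ^ 2 := by ring
    exact le_of_mul_le_mul_left chain hKpos

end StmtAux

namespace StmtAux
open Polynomial

lemma pS_shift {α : Type*} (s : Finset α) (μ : α → ℝ) (t : ℝ) :
    pS s (fun i => μ i + t) = taylor t (pS s μ) := by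
  classical
  induction s using Finset.cons_induction with
  | empty => simp [pS]
  | cons a s ha ih =>
    have h1 : pS (Finset.cons a s ha) (fun i => μ i + t)
        = (X + C (μ a + t)) * pS s (fun i => μ i + t) := by
      rw [pS, Finset.prod_cons]; rfl
    have h2 : pS (Finset.cons a s ha) μ = (X + C (μ a)) * pS s μ := by
      rw [pS, Finset.prod_cons]; rfl
    rw [h1, h2, taylor_mul, ih]
    congr 1
    simp only [taylor_apply, add_comp, X_comp, C_comp, map_add]
    ring

lemma eS_shift_pos {α : Type*} {s : Finset α} {m : ℕ} {μ : α → ℝ}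
    (hΓ : ∀ l, 1 ≤ l → l ≤ m → 0 < eS s l μ) {t : ℝ} (ht : 0 ≤ t)
    {j : ℕ} (hj1 : 1 ≤ j) (hjm : j ≤ m) (hjs : j ≤ s.card) :
    0 < eS s j (fun i => μ i + t) := by
  rw [eS_eq_coeff hjs, pS_shift, taylor_coeff]
  have hdeg : (hasseDeriv (s.card - j) (pS s μ)).natDegree < j + 1 := by
    have h1 := natDegree_hasseDeriv_le (pS s μ) (s.card - j)
    rw [pS_natDegree] at h1
    omega
  rw [eval_eq_sum_range' hdeg]
  refine Finset.sum_pos' (fun i hi => ?_) ⟨0, Finset.mem_range.2 (by omega), ?_⟩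
  · rw [Finset.mem_range] at hi
    rw [hasseDeriv_coeff]
    rcases le_or_gt i j with hij | hij
    · have hco : (pS s μ).coeff (i + (s.card - j)) = eS s (j - i) μ := by
        rw [eS_eq_coeff (show j - i ≤ s.card by omega) μ]
        congr 1
        omega
      rw [hco]
      have h1 : (0:ℝ) ≤ eS s (j - i) μ := eS_nonneg_of_gamma hΓ (by omega)
      positivity
    · have : (pS s μ).coeff (i + (s.card - j)) = 0 := by
        apply coeff_eq_zero_of_natDegree_lt
        rw [pS_natDegree]
        omega
      rw [this]
      simp
  · rw [hasseDeriv_coeff]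
    have hco : (pS s μ).coeff (0 + (s.card - j)) = eS s j μ := by
      rw [eS_eq_coeff hjs μ]
      congr 1
      omega
    rw [hco]
    have h1 : 0 < eS s j μ := hΓ j hj1 hjm
    have h2 : (0:ℝ) < (((0 + (s.card - j)).choose (s.card - j) : ℕ) : ℝ) := by
      norm_num [Nat.choose_self]
    simp only [pow_zero, mul_one]
    positivity

lemma cone_erase {α : Type*} [DecidableEq α] :
    ∀ (m : ℕ) (s : Finset α) (μ : α → ℝ), (∀ l, 1 ≤ l → l ≤ m → 0 < eS s l μ) →
      m ≤ s.card → ∀ i ∈ s, ∀ j, j + 1 ≤ m → 0 < eS (s.erase i) j μ := by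
  intro m
  induction m with
  | zero => intro s μ _ _ i _ j hj; omega
  | succ m IH =>
    intro s μ hΓ hms i hi j hj
    rcases lt_or_eq_of_le hj with hjlt | hjeq
    · exact IH s μ (fun l hl1 hlm => hΓ l hl1 (by omega)) (by omega) i hi j (by omega)
    · -- j = m
      have hjm : j = m := by omega
      subst hjm
      rcases Nat.eq_zero_or_pos j with rfl | hm1
      · rw [eS_zero]; norm_num
      obtain ⟨mm, rfl⟩ : ∃ mm, j = mm + 1 := ⟨j - 1, by omega⟩
      by_contra hcon
      push_neg at hcon
      have hcard_er : (s.erase i).card = s.card - 1 := Finset.card_erase_of_mem hi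
      set g : ℝ → ℝ := fun t => eS (s.erase i) (mm + 1) (fun x => μ x + t) with hg
      have hgcont : Continuous g := by
        simp only [hg, eS]
        exact continuous_finset_sum _ fun T _ =>
          continuous_finset_prod _ fun x _ => (continuous_const.add continuous_id)
      set T := 1 + ∑ x ∈ s, |μ x| with hT
      have hTnn : 0 ≤ T := by
        rw [hT]
        have : 0 ≤ ∑ x ∈ s, |μ x| := Finset.sum_nonneg fun x _ => abs_nonneg _
        linarith
      have hgT : 0 < g T := by
        rw [hg]
        refine eS_pos (fun x hx => ?_) (by omega)
        have hxs : x ∈ s := Finset.mem_of_mem_erase hx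
        have h1 : |μ x| ≤ ∑ y ∈ s, |μ y| :=
          Finset.single_le_sum (fun y _ => abs_nonneg (μ y)) hxs
        have h2 : -μ x ≤ |μ x| := neg_le_abs _
        rw [hT]
        linarith
      have hival : (0:ℝ) ∈ Set.Icc (g 0) (g T) := by
        constructor
        · simpa [hg] using hcon
        · exact hgT.le
      obtain ⟨t0, ht0mem, ht0⟩ := intermediate_value_Icc hTnn hgcont.continuousOn hival
      have ht0nn : 0 ≤ t0 := ht0mem.1
      set ν : α → ℝ := fun x => μ x + t0 with hν
      have hΓν : ∀ l, 1 ≤ l → l ≤ mm + 2 → 0 < eS s l ν :=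
        fun l hl1 hl2 => eS_shift_pos hΓ ht0nn hl1 hl2 (by omega)
      have hIH : 0 < eS (s.erase i) mm ν :=
        IH s ν (fun l hl1 hlm => hΓν l hl1 (by omega)) (by omega) i hi mm (by omega)
      have hz : eS (s.erase i) (mm + 1) ν = 0 := ht0
      have hrec : eS s (mm + 2) ν
          = eS (s.erase i) (mm + 2) ν + ν i * eS (s.erase i) (mm + 1) ν :=
        eS_erase hi (mm + 1) ν
      have htop : 0 < eS (s.erase i) (mm + 2) ν := by
        have h := hΓν (mm + 2) (by omega) (by omega)
        rw [hrec, hz, mul_zero, add_zero] at h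
        exact h
      have hnewt : eS (s.erase i) (mm + 2) ν * eS (s.erase i) mm ν
          ≤ eS (s.erase i) (mm + 1) ν ^ 2 := newton (s.erase i) ν mm
      rw [hz] at hnewt
      nlinarith [mul_pos htop hIH]
end StmtAux

namespace StmtAux
open Polynomial Finset

lemma card_univ_fin (n : ℕ) : (Finset.univ : Finset (Fin n)).card = n := by simp

lemma cone_erase_univ {n m : ℕ} {lam : Fin n → ℝ}
    (hΓ : ∀ l, 1 ≤ l → l ≤ m → 0 < eS (Finset.univ : Finset (Fin n)) l lam)
    (hm : m ≤ n) (i : Fin n) {j : ℕ} (hj : j + 1 ≤ m) :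
    0 < eS (Finset.univ.erase i) j lam :=
  cone_erase m Finset.univ lam hΓ (by rw [card_univ_fin]; exact hm) i (Finset.mem_univ i) j hj

lemma step_main {n kk : ℕ} (hkn : kk + 2 ≤ n) (lam c : Fin n → ℝ)
    (hc : ∀ i, 0 ≤ c i)
    (hΓ : ∀ l, 1 ≤ l → l ≤ kk + 1 → 0 < eS (Finset.univ : Finset (Fin n)) l lam) :
    (∀ j, j ≤ kk →
       0 < eS Finset.univ (j+1) lam + ∑ i, c i * eS (Finset.univ.erase i) j lam) ∧
    (eS Finset.univ (kk+2) lam) *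
        (eS Finset.univ (kk+1) lam + ∑ i, c i * eS (Finset.univ.erase i) kk lam)
      ≤ (eS Finset.univ (kk+2) lam + ∑ i, c i * eS (Finset.univ.erase i) (kk+1) lam) *
        (eS Finset.univ (kk+1) lam) := by
  constructor
  · intro j hj
    have h1 : 0 < eS Finset.univ (j+1) lam := hΓ (j+1) (by omega) (by omega)
    have h2 : 0 ≤ ∑ i, c i * eS (Finset.univ.erase i) j lam := by
      refine Finset.sum_nonneg fun i _ => mul_nonneg (hc i) ?_
      rcases Nat.eq_zero_or_pos j with rfl | hj1
      · rw [eS_zero]; norm_num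
      · exact (cone_erase_univ hΓ (by omega) i (by omega)).le
    linarith
  · rw [← sub_nonneg]
    have expand : (eS Finset.univ (kk+2) lam + ∑ i, c i * eS (Finset.univ.erase i) (kk+1) lam) *
        (eS Finset.univ (kk+1) lam)
        - (eS Finset.univ (kk+2) lam) *
        (eS Finset.univ (kk+1) lam + ∑ i, c i * eS (Finset.univ.erase i) kk lam)
        = ∑ i, (c i * (eS Finset.univ (kk+1) lam * eS (Finset.univ.erase i) (kk+1) lam)
            - c i * (eS Finset.univ (kk+2) lam * eS (Finset.univ.erase i) kk lam)) := by
      rw [Finset.sum_sub_distrib]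
      rw [show ∀ a b c d : ℝ, (a + b) * c - a * (c + d) = b * c - a * d from fun a b c d => by ring]
      congr 1
      · rw [Finset.sum_mul]
        exact Finset.sum_congr rfl fun i _ => by ring
      · rw [Finset.mul_sum]
        exact Finset.sum_congr rfl fun i _ => by ring
    rw [expand]
    refine Finset.sum_nonneg fun i _ => ?_
    have hnewt := newton (Finset.univ.erase i) lam kk
    have r1 := eS_erase (Finset.mem_univ i) kk lam
    have r2 := eS_erase (Finset.mem_univ i) (kk+1) lam
    rw [r1, r2]
    have hci := hc i
    nlinarith [hnewt, hci, mul_le_mul_of_nonneg_left hnewt hci]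

end StmtAux

namespace StmtAux
open Polynomial Finset Matrix

variable {n : ℕ}

lemma det_fin_one_any {R : Type*} [CommRing R] (inst : DecidableEq (Fin 1))
    (M : Matrix (Fin 1) (Fin 1) R) : @Matrix.det (Fin 1) inst _ _ _ M = M 0 0 := by
  have h : inst = (instDecidableEqFin 1) := Subsingleton.elim _ _
  subst h
  exact Matrix.det_fin_one M

lemma det_diag_add_rank1 (d w : Fin n → ℝ) (hd : ∀ i, d i ≠ 0) :
    (Matrix.diagonal d + Matrix.vecMulVec w w).det
      = ∏ i, d i + ∑ i, w i ^ 2 * ∏ j ∈ Finset.univ.erase i, d j := by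
  have hunit : IsUnit (Matrix.diagonal d).det := by
    rw [Matrix.det_diagonal]
    exact (Finset.prod_ne_zero_iff.2 fun i _ => hd i).isUnit
  have hinv : (Matrix.diagonal d)⁻¹ = Matrix.diagonal fun i => (d i)⁻¹ := by
    apply Matrix.inv_eq_right_inv
    rw [Matrix.diagonal_mul_diagonal]
    rw [show (fun i => d i * (d i)⁻¹) = fun _ => (1:ℝ) from funext fun i => mul_inv_cancel₀ (hd i)]
    exact Matrix.diagonal_one
  rw [Matrix.vecMulVec_eq (Fin 1), Matrix.det_add_replicateCol_mul_replicateRow hunit, hinv,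
    Matrix.det_diagonal]
  simp only [Matrix.det_unique]
  simp only [Matrix.add_apply, Matrix.one_apply_eq, Matrix.mul_apply, Matrix.replicateRow_apply,
    Matrix.replicateCol_apply, Matrix.diagonal_apply, Finset.sum_ite_eq, mul_ite, ite_mul, zero_mul,
    mul_zero, Finset.mem_univ, if_true, Finset.sum_ite_eq']
  rw [mul_add, mul_one, Finset.mul_sum]
  congr 1
  refine Finset.sum_congr rfl fun i _ => ?_
  rw [← Finset.prod_erase_mul Finset.univ d (Finset.mem_univ i)]
  have hcan : d i * (d i)⁻¹ = 1 := mul_inv_cancel₀ (hd i)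
  linear_combination (∏ x ∈ Finset.univ.erase i, d x) * w i ^ 2 * hcan

lemma map_vecMulVec {R S : Type*} [CommRing R] [CommRing S] (f : R → S)
    (hf : ∀ a b : R, f (a * b) = f a * f b) (w : Fin n → R) :
    (Matrix.vecMulVec w w).map f = Matrix.vecMulVec (fun i => f (w i)) (fun i => f (w i)) := by
  ext i j
  simp [Matrix.vecMulVec_apply, hf]

lemma det_diag_add_rank1_poly (lam w : Fin n → ℝ) :
    (Matrix.diagonal (fun i => (X : ℝ[X]) + C (lam i))
        + Matrix.vecMulVec (fun i => C (w i)) (fun i => C (w i))).det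
      = pS Finset.univ lam + ∑ i, C (w i ^ 2) * pS (Finset.univ.erase i) lam := by
  apply eq_of_infinite_eval_eq
  have hfin : Set.Finite (Set.range fun i : Fin n => -lam i) := Set.finite_range _
  refine Set.Infinite.mono ?_ hfin.infinite_compl
  intro x hx
  simp only [Set.mem_compl_iff, Set.mem_range, not_exists] at hx
  have hd : ∀ i, x + lam i ≠ 0 := fun i h => hx i (by linarith)
  simp only [Set.mem_setOf_eq]
  have hdet := RingHom.map_det (evalRingHom x)
    ((Matrix.diagonal fun i => (X : ℝ[X]) + C (lam i))
      + Matrix.vecMulVec (fun i => C (w i)) (fun i => C (w i)))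
  rw [RingHom.mapMatrix_apply, coe_evalRingHom] at hdet
  rw [hdet]
  have hmap : ((Matrix.diagonal fun i => (X : ℝ[X]) + C (lam i))
      + Matrix.vecMulVec (fun i => C (w i)) (fun i => C (w i))).map (eval x)
      = Matrix.diagonal (fun i => x + lam i) + Matrix.vecMulVec w w := by
    rw [Matrix.map_add (eval x) (fun a b => eval_add), Matrix.diagonal_map (by simp),
      map_vecMulVec (eval x) (fun a b => eval_mul)]
    congr 1
    · congr 1
      funext i
      simp
    · congr 1 <;> (funext i; simp)
  rw [hmap, det_diag_add_rank1 _ _ hd]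
  rw [eval_add, eval_finset_sum]
  congr 1
  · rw [pS, eval_prod]
    simp
  · refine Finset.sum_congr rfl fun i _ => ?_
    rw [eval_mul, eval_C, pS, eval_prod]
    simp

end StmtAux

namespace StmtAux
open Polynomial Finset Matrix

variable {n : ℕ}

noncomputable def charP (M : Matrix (Fin n) (Fin n) ℝ) : ℝ[X] :=
  ((X : ℝ[X]) • (1 : Matrix (Fin n) (Fin n) ℝ[X]) + M.map C).det

lemma charP_conj (U V N : Matrix (Fin n) (Fin n) ℝ) (hUV : U * V = 1) :
    charP (U * N * V) = charP N := by
  unfold charP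
  have hkey : (X : ℝ[X]) • (1 : Matrix (Fin n) (Fin n) ℝ[X]) + (U * N * V).map C
      = (U.map C) * ((X : ℝ[X]) • (1 : Matrix (Fin n) (Fin n) ℝ[X]) + N.map C) * (V.map C) := by
    have hmapUV : (U.map C) * (V.map C) = 1 := by
      rw [← RingHom.mapMatrix_apply, ← RingHom.mapMatrix_apply, ← _root_.map_mul, hUV, _root_.map_one]
    rw [Matrix.mul_add, Matrix.add_mul]
    congr 1
    · rw [mul_smul_comm, smul_mul_assoc, Matrix.mul_one, hmapUV]
    · rw [← RingHom.mapMatrix_apply, ← RingHom.mapMatrix_apply, ← RingHom.mapMatrix_apply,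
        ← RingHom.mapMatrix_apply, ← _root_.map_mul, ← _root_.map_mul]
  rw [hkey, Matrix.det_mul, Matrix.det_mul]
  have hdetUV : (U.map C).det * (V.map C).det = 1 := by
    rw [← Matrix.det_mul, ← RingHom.mapMatrix_apply, ← RingHom.mapMatrix_apply,
      ← _root_.map_mul, hUV, _root_.map_one, Matrix.det_one]
  calc (U.map C).det * ((X : ℝ[X]) • (1 : Matrix (Fin n) (Fin n) ℝ[X]) + N.map C).det
        * (V.map C).det
      = ((U.map C).det * (V.map C).det)
        * ((X : ℝ[X]) • (1 : Matrix (Fin n) (Fin n) ℝ[X]) + N.map C).det := by ring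
    _ = ((X : ℝ[X]) • (1 : Matrix (Fin n) (Fin n) ℝ[X]) + N.map C).det := by
        rw [hdetUV, one_mul]

lemma charP_diagonal (d : Fin n → ℝ) : charP (Matrix.diagonal d) = pS Finset.univ d := by
  unfold charP
  rw [Matrix.smul_one_eq_diagonal, Matrix.diagonal_map (map_zero C), Matrix.diagonal_add,
    Matrix.det_diagonal, pS]

lemma charP_hermitian {M : Matrix (Fin n) (Fin n) ℝ} (hM : M.IsHermitian) :
    charP M = pS Finset.univ hM.eigenvalues := by
  have hsp := hM.spectral_theorem
  have hof : (RCLike.ofReal ∘ hM.eigenvalues : Fin n → ℝ) = hM.eigenvalues := by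
    funext i; simp [RCLike.ofReal_real_eq_id]
  rw [hof, Unitary.conjStarAlgAut_apply] at hsp
  have hUV : (hM.eigenvectorUnitary : Matrix (Fin n) (Fin n) ℝ)
      * (star (hM.eigenvectorUnitary : Matrix (Fin n) (Fin n) ℝ)) = 1 :=
    Matrix.mem_unitaryGroup_iff.mp hM.eigenvectorUnitary.2
  calc charP M = charP ((hM.eigenvectorUnitary : Matrix (Fin n) (Fin n) ℝ)
        * Matrix.diagonal hM.eigenvalues
        * (star (hM.eigenvectorUnitary : Matrix (Fin n) (Fin n) ℝ))) := by rw [← hsp]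
    _ = charP (Matrix.diagonal hM.eigenvalues) := charP_conj _ _ _ hUV
    _ = pS Finset.univ hM.eigenvalues := charP_diagonal _

lemma vecMulVec_conj {M : Matrix (Fin n) (Fin n) ℝ} (hM : M.IsHermitian) (v : Fin n → ℝ) :
    Matrix.vecMulVec v v = (hM.eigenvectorUnitary : Matrix (Fin n) (Fin n) ℝ)
      * Matrix.vecMulVec ((star (hM.eigenvectorUnitary : Matrix (Fin n) (Fin n) ℝ)) *ᵥ v)
          ((star (hM.eigenvectorUnitary : Matrix (Fin n) (Fin n) ℝ)) *ᵥ v)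
      * (star (hM.eigenvectorUnitary : Matrix (Fin n) (Fin n) ℝ)) := by
  set U := (hM.eigenvectorUnitary : Matrix (Fin n) (Fin n) ℝ) with hU
  set w := (star U) *ᵥ v with hw
  have hUV : U * star U = 1 := Matrix.mem_unitaryGroup_iff.mp hM.eigenvectorUnitary.2
  have hv : U *ᵥ w = v := by
    rw [hw, Matrix.mulVec_mulVec, hUV, Matrix.one_mulVec]
  have hrow : Matrix.replicateRow (Fin 1) (U *ᵥ w) = Matrix.replicateRow (Fin 1) w * star U := by
    rw [← Matrix.replicateRow_vecMul]
    congr 1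
    rw [Matrix.star_eq_conjTranspose, Matrix.conjTranspose_eq_transpose_of_trivial,
      Matrix.vecMul_transpose]
  rw [← hv, Matrix.vecMulVec_eq (Fin 1), Matrix.vecMulVec_eq (Fin 1),
    Matrix.replicateCol_mulVec, hrow]
  simp only [Matrix.mul_assoc]

lemma vecMulVec_isHermitian (v : Fin n → ℝ) : (Matrix.vecMulVec v v).IsHermitian := by
  unfold Matrix.IsHermitian
  ext i j
  simp [Matrix.conjTranspose_apply, Matrix.vecMulVec_apply, mul_comm]

lemma charP_rank1 {M : Matrix (Fin n) (Fin n) ℝ} (hM : M.IsHermitian) (v : Fin n → ℝ) :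
    charP (M + Matrix.vecMulVec v v)
      = pS Finset.univ hM.eigenvalues
        + ∑ i, C (((star (hM.eigenvectorUnitary : Matrix (Fin n) (Fin n) ℝ) *ᵥ v) i) ^ 2)
            * pS (Finset.univ.erase i) hM.eigenvalues := by
  set U := (hM.eigenvectorUnitary : Matrix (Fin n) (Fin n) ℝ) with hU
  set w := (star U) *ᵥ v with hw
  have hUV : U * star U = 1 := Matrix.mem_unitaryGroup_iff.mp hM.eigenvectorUnitary.2
  have hsp := hM.spectral_theorem
  have hof : (RCLike.ofReal ∘ hM.eigenvalues : Fin n → ℝ) = hM.eigenvalues := by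
    funext i; simp [RCLike.ofReal_real_eq_id]
  rw [hof] at hsp
  have hMv : M + Matrix.vecMulVec v v
      = U * (Matrix.diagonal hM.eigenvalues + Matrix.vecMulVec w w) * star U := by
    rw [Matrix.mul_add, Matrix.add_mul]
    have h1 : M = U * Matrix.diagonal hM.eigenvalues * star U := by rw [hU]; exact hsp
    have h2 : Matrix.vecMulVec v v = U * Matrix.vecMulVec w w * star U := by
      rw [hw, hU]; exact vecMulVec_conj hM v
    rw [← h1, ← h2]
  rw [hMv, charP_conj _ _ _ hUV]
  unfold charP
  have hmap : (Matrix.diagonal hM.eigenvalues + Matrix.vecMulVec w w).map C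
      = Matrix.diagonal (fun i => C (hM.eigenvalues i))
        + Matrix.vecMulVec (fun i => C (w i)) (fun i => C (w i)) := by
    rw [Matrix.map_add C (map_add C), Matrix.diagonal_map (map_zero C),
      map_vecMulVec (⇑C) (fun a b => by rw [_root_.map_mul])]
  rw [hmap, Matrix.smul_one_eq_diagonal]
  rw [show (Matrix.diagonal fun _ : Fin n => (X : ℝ[X]))
        + (Matrix.diagonal (fun i => C (hM.eigenvalues i))
          + Matrix.vecMulVec (fun i => C (w i)) (fun i => C (w i)))
      = (Matrix.diagonal fun i => (X : ℝ[X]) + C (hM.eigenvalues i))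
        + Matrix.vecMulVec (fun i => C (w i)) (fun i => C (w i)) from by
    rw [← add_assoc, Matrix.diagonal_add]]
  exact det_diag_add_rank1_poly hM.eigenvalues w

lemma coeff_charP {M : Matrix (Fin n) (Fin n) ℝ} (hM : M.IsHermitian) {j : ℕ} (hj : j ≤ n) :
    (charP M).coeff (n - j) = eS Finset.univ j hM.eigenvalues := by
  rw [charP_hermitian hM, eS_eq_coeff (by rw [card_univ_fin]; exact hj), card_univ_fin]

lemma coeff_charP_rank1 {M : Matrix (Fin n) (Fin n) ℝ} (hM : M.IsHermitian) (v : Fin n → ℝ)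
    {j : ℕ} (hj1 : 1 ≤ j) (hjn : j ≤ n) :
    (charP (M + Matrix.vecMulVec v v)).coeff (n - j)
      = eS Finset.univ j hM.eigenvalues
        + ∑ i, (((star (hM.eigenvectorUnitary : Matrix (Fin n) (Fin n) ℝ) *ᵥ v) i) ^ 2)
            * eS (Finset.univ.erase i) (j - 1) hM.eigenvalues := by
  rw [charP_rank1 hM v, coeff_add, finset_sum_coeff]
  congr 1
  · rw [eS_eq_coeff (by rw [card_univ_fin]; exact hjn), card_univ_fin]
  · refine Finset.sum_congr rfl fun i _ => ?_
    rw [coeff_C_mul]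
    congr 1
    have hcard : (Finset.univ.erase i).card = n - 1 := by
      rw [Finset.card_erase_of_mem (Finset.mem_univ i), card_univ_fin]
    rw [eS_eq_coeff (by omega : j - 1 ≤ (Finset.univ.erase i).card), hcard]
    congr 1
    omega


lemma step_matrix {kk : ℕ} (hkn : kk + 2 ≤ n) {M : Matrix (Fin n) (Fin n) ℝ}
    (hM : M.IsHermitian) (v : Fin n → ℝ)
    (hΓ : ∀ l, 1 ≤ l → l ≤ kk + 1 → 0 < (charP M).coeff (n - l)) :
    (∀ l, 1 ≤ l → l ≤ kk + 1 → 0 < (charP (M + Matrix.vecMulVec v v)).coeff (n - l)) ∧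
    (charP M).coeff (n - (kk+2)) * (charP (M + Matrix.vecMulVec v v)).coeff (n - (kk+1))
      ≤ (charP (M + Matrix.vecMulVec v v)).coeff (n - (kk+2))
        * (charP M).coeff (n - (kk+1)) := by
  have hΓv : ∀ l, 1 ≤ l → l ≤ kk + 1 → 0 < eS Finset.univ l hM.eigenvalues := by
    intro l h1 h2
    have h := hΓ l h1 h2
    rwa [coeff_charP hM (by omega)] at h
  obtain ⟨hpos, hineq⟩ := step_main hkn hM.eigenvalues
    (fun i => ((star (hM.eigenvectorUnitary : Matrix (Fin n) (Fin n) ℝ) *ᵥ v) i) ^ 2)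
    (fun i => sq_nonneg _) hΓv
  constructor
  · intro l h1 h2
    rw [coeff_charP_rank1 hM v h1 (by omega)]
    have h := hpos (l - 1) (by omega)
    have hl : l - 1 + 1 = l := by omega
    rw [hl] at h
    exact h
  · rw [coeff_charP_rank1 hM v (by omega) (by omega),
      coeff_charP_rank1 hM v (by omega) (by omega),
      coeff_charP hM (by omega), coeff_charP hM (by omega)]
    exact hineq

lemma herm_sum (W : Matrix (Fin n) (Fin n) ℝ) (hW : W.IsHermitian) (u : Fin n → Fin n → ℝ)
    (γ : Fin n → ℝ) (s : Finset (Fin n)) :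
    (W + ∑ i ∈ s, γ i • Matrix.vecMulVec (u i) (u i)).IsHermitian := by
  apply hW.add
  unfold Matrix.IsHermitian
  rw [Matrix.conjTranspose_sum]
  refine Finset.sum_congr rfl fun i _ => ?_
  ext x y
  simp [Matrix.conjTranspose_apply, Matrix.vecMulVec_apply, mul_comm]

lemma smul_vecMulVec {γ : ℝ} (hγ : 0 ≤ γ) (u : Fin n → ℝ) :
    Matrix.vecMulVec (Real.sqrt γ • u) (Real.sqrt γ • u) = γ • Matrix.vecMulVec u u := by
  ext x y
  simp only [Matrix.vecMulVec_apply, Pi.smul_apply, smul_eq_mul, Matrix.smul_apply]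
  rw [show Real.sqrt γ * u x * (Real.sqrt γ * u y)
      = (Real.sqrt γ * Real.sqrt γ) * (u x * u y) from by ring, Real.mul_self_sqrt hγ]

lemma main_induction {kk : ℕ} (hkn : kk + 2 ≤ n) (W : Matrix (Fin n) (Fin n) ℝ)
    (hW : W.IsHermitian) (u : Fin n → Fin n → ℝ) (γ : Fin n → ℝ) (hγ : ∀ i, 0 ≤ γ i)
    (hΓW : ∀ l, 1 ≤ l → l ≤ kk + 1 → 0 < (charP W).coeff (n - l)) (s : Finset (Fin n)) :
    (∀ l, 1 ≤ l → l ≤ kk + 1 →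
        0 < (charP (W + ∑ i ∈ s, γ i • Matrix.vecMulVec (u i) (u i))).coeff (n - l)) ∧
    (charP W).coeff (n - (kk+2))
        * (charP (W + ∑ i ∈ s, γ i • Matrix.vecMulVec (u i) (u i))).coeff (n - (kk+1))
      ≤ (charP (W + ∑ i ∈ s, γ i • Matrix.vecMulVec (u i) (u i))).coeff (n - (kk+2))
        * (charP W).coeff (n - (kk+1)) := by
  classical
  induction s using Finset.induction_on with
  | empty =>
    simp only [Finset.sum_empty, add_zero]
    exact ⟨hΓW, le_refl _⟩
  | @insert a s ha ih =>
    obtain ⟨h1, h2⟩ := ih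
    have hM := herm_sum W hW u γ s
    have key : W + ∑ i ∈ insert a s, γ i • Matrix.vecMulVec (u i) (u i)
        = (W + ∑ i ∈ s, γ i • Matrix.vecMulVec (u i) (u i))
          + Matrix.vecMulVec (Real.sqrt (γ a) • u a) (Real.sqrt (γ a) • u a) := by
      rw [Finset.sum_insert ha, smul_vecMulVec (hγ a)]
      abel
    obtain ⟨h1', h2'⟩ := step_matrix hkn hM (Real.sqrt (γ a) • u a) h1
    rw [key]
    refine ⟨h1', ?_⟩
    have bW : 0 < (charP W).coeff (n - (kk+1)) := hΓW (kk+1) (by omega) (by omega)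
    have bM : 0 < (charP (W + ∑ i ∈ s, γ i • Matrix.vecMulVec (u i) (u i))).coeff (n - (kk+1)) :=
      h1 (kk+1) (by omega) (by omega)
    have bN : 0 < (charP ((W + ∑ i ∈ s, γ i • Matrix.vecMulVec (u i) (u i))
        + Matrix.vecMulVec (Real.sqrt (γ a) • u a) (Real.sqrt (γ a) • u a))).coeff (n - (kk+1)) :=
      h1' (kk+1) (by omega) (by omega)
    have q1 := (div_le_div_iff₀ bW bM).2 h2
    have q2 := (div_le_div_iff₀ bM bN).2 h2'
    exact (div_le_div_iff₀ bW bN).1 (q1.trans q2)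

lemma conj_diag_eq_sum {P : Matrix (Fin n) (Fin n) ℝ} (hP : P.IsHermitian) :
    (hP.eigenvectorUnitary : Matrix (Fin n) (Fin n) ℝ) * Matrix.diagonal hP.eigenvalues
        * star (hP.eigenvectorUnitary : Matrix (Fin n) (Fin n) ℝ)
      = ∑ i, hP.eigenvalues i • Matrix.vecMulVec
          (fun x => (hP.eigenvectorUnitary : Matrix (Fin n) (Fin n) ℝ) x i)
          (fun x => (hP.eigenvectorUnitary : Matrix (Fin n) (Fin n) ℝ) x i) := by
  set U := (hP.eigenvectorUnitary : Matrix (Fin n) (Fin n) ℝ) with hU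
  ext x y
  rw [Matrix.sum_apply, Matrix.mul_apply]
  refine Finset.sum_congr rfl fun i _ => ?_
  rw [Matrix.mul_diagonal, Matrix.star_eq_conjTranspose, Matrix.conjTranspose_apply]
  simp only [Matrix.smul_apply, Matrix.vecMulVec_apply, smul_eq_mul, star_trivial]
  ring

lemma decomp_neg (P : Matrix (Fin n) (Fin n) ℝ) (hP : P.IsHermitian) :
    ∑ i, hP.eigenvalues i • Matrix.vecMulVec
        (fun x => (hP.eigenvectorUnitary : Matrix (Fin n) (Fin n) ℝ) x i)
        (fun x => (hP.eigenvectorUnitary : Matrix (Fin n) (Fin n) ℝ) x i) = P := by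
  rw [← conj_diag_eq_sum hP]
  have hsp := hP.spectral_theorem
  have hof : (RCLike.ofReal ∘ hP.eigenvalues : Fin n → ℝ) = hP.eigenvalues := by
    funext i; simp [RCLike.ofReal_real_eq_id]
  rw [hof] at hsp
  exact hsp.symm

end StmtAux


/-- Lemma (A+B), part (2), first inequality: if `A` is negative semidefinite,
`B ∈ Γ_{k-1}` and `A + B ∈ Γ_{k-1}`, then
`σ_k(A+B)/σ_{k-1}(A+B) ≤ σ_k(B)/σ_{k-1}(B)`. -/
theorem stmt_2 (n k : ℕ) (hn : 2 ≤ n) (hk2 : 2 ≤ k) (hkn : k ≤ n)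
    (A B : Matrix (Fin n) (Fin n) ℝ) (hA : A.IsHermitian) (hB : B.IsHermitian)
    (hAnsd : (-A).PosSemidef)
    (hBG : inGamma n (k - 1) hB.eigenvalues)
    (hABG : inGamma n (k - 1) (hA.add hB).eigenvalues) :
    esymmVec n k (hA.add hB).eigenvalues / esymmVec n (k - 1) (hA.add hB).eigenvalues ≤
      esymmVec n k hB.eigenvalues / esymmVec n (k - 1) hB.eigenvalues := by
  classical
  open StmtAux in
  obtain ⟨kk, rfl⟩ : ∃ kk, k = kk + 2 := ⟨k - 2, by omega⟩
  have hks : kk + 2 - 1 = kk + 1 := by omega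
  rw [hks]
  have hPH : (-A).IsHermitian := hAnsd.1
  have hγ : ∀ i, 0 ≤ hPH.eigenvalues i := fun i => hAnsd.eigenvalues_nonneg i
  have hW : (A + B).IsHermitian := hA.add hB
  have hΓW : ∀ l, 1 ≤ l → l ≤ kk + 1 → 0 < (charP (A + B)).coeff (n - l) := by
    intro l h1 h2
    rw [coeff_charP hW (by omega)]
    exact hABG l h1 (by omega)
  have hfin := main_induction (by omega) (A + B) hW
    (fun i x => (hPH.eigenvectorUnitary : Matrix (Fin n) (Fin n) ℝ) x i)
    hPH.eigenvalues hγ hΓW Finset.univ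
  have hWB : (A + B) + ∑ i, hPH.eigenvalues i • Matrix.vecMulVec
      (fun x => (hPH.eigenvectorUnitary : Matrix (Fin n) (Fin n) ℝ) x i)
      (fun x => (hPH.eigenvectorUnitary : Matrix (Fin n) (Fin n) ℝ) x i) = B := by
    rw [decomp_neg (-A) hPH]
    abel
  rw [hWB] at hfin
  obtain ⟨hBcone, hineq⟩ := hfin
  have hbW : 0 < esymmVec n (kk+1) (hA.add hB).eigenvalues := hABG (kk+1) (by omega) (by omega)
  have hbB : 0 < esymmVec n (kk+1) hB.eigenvalues := hBG (kk+1) (by omega) (by omega)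
  rw [div_le_div_iff₀ hbW hbB]
  have eW2 : esymmVec n (kk+2) (hA.add hB).eigenvalues = (charP (A + B)).coeff (n - (kk+2)) :=
    (coeff_charP hW (by omega)).symm
  have eW1 : esymmVec n (kk+1) (hA.add hB).eigenvalues = (charP (A + B)).coeff (n - (kk+1)) :=
    (coeff_charP hW (by omega)).symm
  have eB2 : esymmVec n (kk+2) hB.eigenvalues = (charP B).coeff (n - (kk+2)) :=
    (coeff_charP hB (by omega)).symm
  have eB1 : esymmVec n (kk+1) hB.eigenvalues = (charP B).coeff (n - (kk+1)) :=
    (coeff_charP hB (by omega)).symm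
  rw [eW2, eW1, eB2, eB1]
  exact hineq
end

section
/- Let n ≥ 2 and 2 ≤ k ≤ n. Let A and B be real symmetric n×n matrices with A ∈ Γ_{k-1} and B ∈ Γ_{k-1}. Then A + B ∈ Γ_{k-1} and σ_k(A+B)/σ_{k-1}(A+B) ≥ σ_k(A)/σ_{k-1}(A) + σ_k(B)/σ_{k-1}(B). -/
open Multiset Polynomial

namespace NewtonAux

lemma esymm_zero' (s : Multiset ℝ) : s.esymm 0 = 1 := by
  simp [Multiset.esymm, powersetCard_zero_left]

lemma esymm_one' (s : Multiset ℝ) : s.esymm 1 = s.sum := by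
  simp [Multiset.esymm, powersetCard_one, Multiset.map_map, Function.comp_def]

lemma esymm_cons (a : ℝ) (s : Multiset ℝ) (k : ℕ) :
    (a ::ₘ s).esymm (k + 1) = a * s.esymm k + s.esymm (k + 1) := by
  simp only [Multiset.esymm, powersetCard_cons, Multiset.map_add, Multiset.sum_add,
    Multiset.map_map]
  rw [add_comm]
  congr 1
  rw [Multiset.sum_map_mul_left.symm]
  congr 1
  apply Multiset.map_congr rfl
  intro t _
  simp [Multiset.prod_cons]

lemma esymm_of_card_lt {s : Multiset ℝ} {k : ℕ} (h : Multiset.card s < k) : s.esymm k = 0 := by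
  simp [Multiset.esymm, Multiset.powersetCard_eq_empty _ h]

lemma esymm_card (s : Multiset ℝ) : s.esymm (Multiset.card s) = s.prod := by
  induction s using Multiset.induction with
  | empty => simp [esymm_zero']
  | cons a s ih =>
      rw [Multiset.card_cons, esymm_cons, ih, esymm_of_card_lt (Nat.lt_succ_self _),
        Multiset.prod_cons, add_zero]


lemma two_esymm_two (s : Multiset ℝ) :
    2 * s.esymm 2 = s.sum ^ 2 - (s.map (fun x => x ^ 2)).sum := by
  induction s using Multiset.induction with
  | empty => simp [esymm_of_card_lt (s := 0) (k := 2) (by simp)]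
  | cons a s ih =>
      rw [show (2:ℕ) = 1 + 1 from rfl, esymm_cons, esymm_one', Multiset.sum_cons,
        Multiset.map_cons, Multiset.sum_cons]
      have : 2 * s.esymm (1+1) = s.sum ^ 2 - (s.map (fun x => x ^ 2)).sum := ih
      ring_nf
      ring_nf at this
      linarith

/-- Cauchy–Schwarz for multisets. -/
lemma sq_sum_le (s : Multiset ℝ) :
    s.sum ^ 2 ≤ (Multiset.card s) * (s.map (fun x => x ^ 2)).sum := by
  induction s using Multiset.induction with
  | empty => simp
  | cons a s ih =>
      rw [Multiset.sum_cons, Multiset.map_cons, Multiset.sum_cons, Multiset.card_cons]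
      rcases Nat.eq_zero_or_pos (Multiset.card s) with h0 | hpos
      · have hs0 : s = 0 := Multiset.card_eq_zero.1 h0
        subst hs0
        simp
      · push_cast
        set c := (Multiset.card s : ℝ) with hc
        set T := (Multiset.map (fun x => x ^ 2) s).sum with hTdef
        have hT : 0 ≤ T := by
          apply Multiset.sum_nonneg; intro x hx
          obtain ⟨y, _, rfl⟩ := Multiset.mem_map.1 hx
          positivity
        have hc' : (0:ℝ) < c := by rw [hc]; exact_mod_cast hpos
        have key : c * ((a + s.sum)^2) ≤ c * ((c+1) * (a^2 + T)) := by
          nlinarith [sq_nonneg (c*a - s.sum), ih, hT]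
        exact le_of_mul_le_mul_left key hc'

/-- Inversion identity: for a multiset of nonzero reals. -/
lemma prod_mul_esymm_inv (s : Multiset ℝ) (hs : ∀ x ∈ s, x ≠ 0) :
    ∀ l ≤ Multiset.card s,
      s.prod * (s.map (fun x => x⁻¹)).esymm l = s.esymm (Multiset.card s - l) := by
  induction s using Multiset.induction with
  | empty =>
      intro l hl
      simp only [Multiset.card_zero, Nat.le_zero] at hl
      subst hl
      simp [esymm_zero']
  | cons a s ih =>
      intro l hl
      have ha : a ≠ 0 := hs a (Multiset.mem_cons_self _ _)
      have hs' : ∀ x ∈ s, x ≠ 0 := fun x hx => hs x (Multiset.mem_cons_of_mem hx)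
      rw [Multiset.card_cons] at hl ⊢
      rw [Multiset.map_cons, Multiset.prod_cons]
      match l with
      | 0 =>
        rw [esymm_zero', Nat.sub_zero,
          show Multiset.card s + 1 = Multiset.card (a ::ₘ s) from (Multiset.card_cons _ _).symm,
          esymm_card, Multiset.prod_cons, mul_one]
      | (l'+1) =>
        rw [esymm_cons]
        have h1 : l' ≤ Multiset.card s := by omega
        have key1 : s.prod * (s.map (fun x => x⁻¹)).esymm l' = s.esymm (Multiset.card s - l') :=
          ih hs' l' h1
        rcases Nat.lt_or_ge l' (Multiset.card s) with hlt | hge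
        · have key2 : s.prod * (s.map (fun x => x⁻¹)).esymm (l'+1)
              = s.esymm (Multiset.card s - (l'+1)) := ih hs' (l'+1) hlt
          rw [show Multiset.card s + 1 - (l'+1) = (Multiset.card s - (l'+1)) + 1 from by omega,
            esymm_cons,
            show Multiset.card s - (l'+1) + 1 = Multiset.card s - l' from by omega,
            ← key1, ← key2]
          field_simp
          ring
        · have hl' : l' = Multiset.card s := le_antisymm h1 hge
          have hz : (s.map (fun x => x⁻¹)).esymm (l'+1) = 0 := by
            apply esymm_of_card_lt; rw [Multiset.card_map]; omega
          rw [hz, add_zero, show Multiset.card s + 1 - (l'+1) = 0 from by omega,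
            esymm_zero']
          rw [hl'] at key1
          rw [Nat.sub_self, esymm_zero'] at key1
          have h2 : a * s.prod * (a⁻¹ * (s.map (fun x => x⁻¹)).esymm (Multiset.card s))
              = (a * a⁻¹) * (s.prod * (s.map (fun x => x⁻¹)).esymm (Multiset.card s)) := by ring
          rw [hl', h2, mul_inv_cancel₀ ha, one_mul, key1]


/-- Nat helper: `(N - l) * C(N,l) = N * C(N-1,l)`. -/
lemma nat_choose_helper {N l : ℕ} (h1 : 1 ≤ N) :
    N.choose l * (N - l) = N * ((N-1).choose l) := by
  rw [← Nat.choose_succ_right_eq]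
  have h2 : N = Nat.succ (N-1) := (Nat.succ_pred_eq_of_pos h1).symm
  calc N.choose (l+1) * (l+1) = Nat.succ (N-1) * (N-1).choose l := by
        rw [Nat.succ_eq_add_one, Nat.add_one_mul_choose_eq, Nat.sub_add_cancel h1]
    _ = N * ((N-1).choose l) := by rw [← h2]

lemma real_choose_helper {N l : ℕ} (h1 : 1 ≤ N) (hl : l ≤ N) :
    ((N:ℝ) - l) * (N.choose l) = N * ((N-1).choose l) := by
  have := nat_choose_helper (l := l) h1
  have hcast : ((N.choose l * (N - l) : ℕ) : ℝ) = ((N * ((N-1).choose l) : ℕ) : ℝ) := by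
    rw [this]
  push_cast [Nat.cast_sub hl] at hcast
  linarith [hcast]

lemma two_mul_choose_two (n : ℕ) : 2 * n.choose 2 = n * (n - 1) := by
  induction n with
  | zero => simp
  | succ n ih =>
      rw [Nat.choose_succ_succ, Nat.mul_add, ih, Nat.choose_one_right]
      cases n <;> simp <;> ring_nf <;> omega

/-- Derivative step: existence of a multiset whose esymms are scaled versions. -/
lemma exists_deriv_multiset (m : Multiset ℝ) (hpos : 0 < Multiset.card m) :
    ∃ m' : Multiset ℝ, Multiset.card m' = Multiset.card m - 1 ∧
      ∀ l ≤ Multiset.card m - 1,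
        (Multiset.card m : ℝ) * m'.esymm l = ((Multiset.card m : ℝ) - l) * m.esymm l := by
  classical
  set N := Multiset.card m with hN
  set P : Polynomial ℝ := (m.map fun r => Polynomial.X - Polynomial.C r).prod with hP
  have hmonic : P.Monic := by
    apply monic_multiset_prod_of_monic
    intro a _
    exact monic_X_sub_C a
  have hdeg : P.natDegree = N := by
    rw [hP, natDegree_multiset_prod_X_sub_C_eq_card]
  have hroots : P.roots = m := roots_multiset_prod_X_sub_C m
  set Q := Polynomial.derivative P with hQ
  have h1 : Q.natDegree ≤ N - 1 := by
    have := Polynomial.natDegree_derivative_le P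
    rw [hdeg] at this
    exact this
  have h2 : N ≤ Multiset.card Q.roots + 1 := by
    have := P.card_roots_le_derivative
    rwa [hroots] at this
  have h3 : Multiset.card Q.roots ≤ Q.natDegree := Q.card_roots'
  have hQdeg : Q.natDegree = N - 1 := by omega
  have hQcard : Multiset.card Q.roots = N - 1 := by omega
  have hNs : N - 1 + 1 = N := by omega
  have hPN : P.coeff N = 1 := by rw [← hdeg]; exact hmonic.coeff_natDegree
  have hQlead : Q.leadingCoeff = (N:ℝ) := by
    rw [Polynomial.leadingCoeff, hQdeg, hQ, Polynomial.coeff_derivative, hNs, hPN, one_mul]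
    push_cast [Nat.cast_sub (show 1 ≤ N from by omega)]
    ring
  refine ⟨Q.roots, hQcard, ?_⟩
  intro l hl
  have hkl : N - 1 - l + 1 = N - l := by omega
  have e1 : Q.coeff (N - 1 - l) = P.coeff (N - l) * ((N:ℝ) - l) := by
    rw [hQ, Polynomial.coeff_derivative, hkl]
    congr 1
    push_cast [Nat.cast_sub (show l ≤ N - 1 from hl), Nat.cast_sub (show 1 ≤ N from by omega)]
    ring
  have e2 : P.coeff (N - l) = (-1)^l * m.esymm l := by
    have h := Multiset.prod_X_sub_C_coeff m (show N - l ≤ Multiset.card m from by omega)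
    rw [← hN, show N - (N - l) = l from by omega] at h
    exact h
  have e3 : Q.coeff (N - 1 - l) = (N:ℝ) * ((-1)^l * Q.roots.esymm l) := by
    have h := Polynomial.coeff_eq_esymm_roots_of_card
      (show Multiset.card Q.roots = Q.natDegree from by rw [hQcard, hQdeg])
      (show N - 1 - l ≤ Q.natDegree from by omega)
    rw [hQdeg, show N - 1 - (N - 1 - l) = l from by omega, hQlead] at h
    rw [h]; ring
  have key : (N:ℝ) * ((-1)^l * Q.roots.esymm l) = (-1)^l * m.esymm l * ((N:ℝ) - l) := by
    rw [← e3, e1, e2]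
  have hsign : ((-1:ℝ)^l) ≠ 0 := pow_ne_zero _ (neg_ne_zero.2 one_ne_zero)
  apply mul_left_cancel₀ hsign
  calc (-1:ℝ)^l * ((N:ℝ) * Q.roots.esymm l) = (N:ℝ) * ((-1)^l * Q.roots.esymm l) := by ring
    _ = (-1)^l * m.esymm l * ((N:ℝ) - l) := key
    _ = (-1)^l * (((N:ℝ) - l) * m.esymm l) := by ring


/-- **Newton's inequality** for arbitrary real multisets. -/
theorem newton (d : ℕ) : ∀ (m : Multiset ℝ) (j : ℕ), 1 ≤ j → Multiset.card m = j + 1 + d →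
    m.esymm (j-1) * m.esymm (j+1) * ((Multiset.card m).choose j : ℝ)^2 ≤
      (m.esymm j)^2 *
        (((Multiset.card m).choose (j-1) : ℝ) * ((Multiset.card m).choose (j+1) : ℝ)) := by
  induction d with
  | zero =>
      intro m j hj hcard
      set N := Multiset.card m with hN
      have hNj : N = j + 1 := by omega
      by_cases hzero : (0:ℝ) ∈ m
      · have hprod : m.esymm (j+1) = 0 := by
          rw [show j + 1 = N from hNj.symm, hN, esymm_card]
          exact Multiset.prod_eq_zero hzero
        rw [hprod]
        have h1 : 0 ≤ (m.esymm j)^2 * ((N.choose (j-1) : ℝ) * (N.choose (j+1) : ℝ)) := by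
          positivity
        nlinarith [h1]
      · -- all elements nonzero
        have hne : ∀ x ∈ m, x ≠ 0 := fun x hx => fun h => hzero (h ▸ hx)
        set w := m.map (fun x : ℝ => x⁻¹) with hw
        have hP : m.prod ≠ 0 := Multiset.prod_ne_zero hzero
        have inv1 : m.prod * w.esymm 1 = m.esymm (N - 1) :=
          prod_mul_esymm_inv m hne 1 (by omega)
        have inv2 : m.prod * w.esymm 2 = m.esymm (N - 2) :=
          prod_mul_esymm_inv m hne 2 (by omega)
        have hej1 : m.esymm (j+1) = m.prod := by
          rw [show j + 1 = N from hNj.symm, hN, esymm_card]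
        have hej : m.esymm j = m.prod * w.esymm 1 := by
          rw [inv1, show N - 1 = j from by omega]
        have hejm : m.esymm (j-1) = m.prod * w.esymm 2 := by
          rw [inv2, show N - 2 = j - 1 from by omega]
        -- binomials
        have hc1 : N.choose j = N := by
          rw [hNj, Nat.choose_succ_self_right]
        have hc2 : N.choose (j+1) = 1 := by rw [hNj, Nat.choose_self]
        have hc3 : N.choose (j-1) = N.choose 2 := by
          rw [show j - 1 = N - 2 from by omega]
          exact Nat.choose_symm (by omega)
        rw [hej1, hej, hejm, hc1, hc2, hc3]
        push_cast
        -- key inequality : N^2 * esymm 2 w ≤ choose N 2 * (esymm 1 w)^2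
        have hcard_w : Multiset.card w = N := by rw [hw, Multiset.card_map]
        have hCS : w.sum^2 ≤ (N:ℝ) * (w.map (fun x => x^2)).sum := by
          have := sq_sum_le w
          rwa [hcard_w] at this
        have h2e : 2 * w.esymm 2 = w.sum^2 - (w.map (fun x => x^2)).sum := two_esymm_two w
        have hC2 : 2 * (N.choose 2 : ℝ) = (N:ℝ) * ((N:ℝ) - 1) := by
          have := two_mul_choose_two N
          have hcast : ((2 * N.choose 2 : ℕ) : ℝ) = ((N * (N - 1) : ℕ) : ℝ) := by rw [this]
          push_cast [Nat.cast_sub (show 1 ≤ N from by omega)] at hcast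
          linarith
        have hkey : (N:ℝ)^2 * w.esymm 2 ≤ (N.choose 2 : ℝ) * w.sum^2 := by
          have hN0 : (0:ℝ) ≤ (N:ℝ) := by positivity
          nlinarith [mul_le_mul_of_nonneg_left hCS hN0]
        have he1w : w.esymm 1 = w.sum := esymm_one' w
        have hP2 : (0:ℝ) < m.prod^2 := by positivity
        rw [he1w]
        calc m.prod * w.esymm 2 * m.prod * (N:ℝ)^2
            = m.prod^2 * ((N:ℝ)^2 * w.esymm 2) := by ring
          _ ≤ m.prod^2 * ((N.choose 2 : ℝ) * w.sum^2) := by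
              apply mul_le_mul_of_nonneg_left _ (le_of_lt hP2)
              exact hkey
          _ = (m.prod * w.sum)^2 * ((N.choose 2 : ℝ) * 1) := by ring
  | succ d ih =>
      intro m j hj hcard
      set N := Multiset.card m with hN
      obtain ⟨m', hm'card, hm'⟩ := exists_deriv_multiset m (by omega)
      have hm'N : Multiset.card m' = N - 1 := by rw [hm'card]
      have hIH := ih m' j hj (by omega)
      rw [hm'N] at hIH
      -- scaled quantities
      have hA := hm' (j-1) (by omega)
      have hE := hm' j (by omega)
      have hB := hm' (j+1) (by omega)
      rw [← hN] at hA hE hB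
      set A := m.esymm (j-1) with hAdef
      set E := m.esymm j with hEdef
      set B := m.esymm (j+1) with hBdef
      set A' := m'.esymm (j-1) with hA'def
      set E' := m'.esymm j with hE'def
      set B' := m'.esymm (j+1) with hB'def
      set a : ℝ := (N:ℝ) - (j-1 : ℕ) with ha
      set c : ℝ := (N:ℝ) - j with hc
      set b : ℝ := (N:ℝ) - (j+1 : ℕ) with hb
      have hapos : 0 < a := by
        rw [ha]; have : ((j-1 : ℕ):ℝ) < (N:ℝ) := by exact_mod_cast (by omega : j - 1 < N)
        linarith
      have hcpos : 0 < c := by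
        rw [hc]; have : ((j : ℕ):ℝ) < (N:ℝ) := by exact_mod_cast (by omega : j < N)
        linarith
      have hbpos : 0 < b := by
        rw [hb]; have : ((j+1 : ℕ):ℝ) < (N:ℝ) := by exact_mod_cast (by omega : j + 1 < N)
        linarith
      -- choose identities
      have hchA : a * (N.choose (j-1) : ℝ) = (N:ℝ) * (((N-1).choose (j-1)) : ℝ) := by
        rw [ha]; exact real_choose_helper (by omega) (by omega)
      have hchE : c * (N.choose j : ℝ) = (N:ℝ) * (((N-1).choose j) : ℝ) := by
        rw [hc]; exact real_choose_helper (by omega) (by omega)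
      have hchB : b * (N.choose (j+1) : ℝ) = (N:ℝ) * (((N-1).choose (j+1)) : ℝ) := by
        rw [hb]; exact real_choose_helper (by omega) (by omega)
      have hA2 : (N:ℝ) * A' = a * A := by rw [ha]; exact hA
      have hE2 : (N:ℝ) * E' = c * E := by rw [hc]; exact hE
      have hB2 : (N:ℝ) * B' = b * B := by rw [hb]; exact hB
      have habc : (0:ℝ) < a * b * c^2 := by positivity
      rw [← mul_le_mul_iff_right₀ habc]
      have hN4 : (0:ℝ) ≤ (N:ℝ)^4 := by positivity
      have L2 : a*b*c^2 * (A * B * ((N.choose j : ℝ))^2)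
          = (N:ℝ)^4 * (A' * B' * (((N-1).choose j : ℝ))^2) := by
        have : a*b*c^2 * (A * B * ((N.choose j : ℝ))^2)
            = (a*A)*(b*B)*(c*(N.choose j : ℝ))^2 := by ring
        rw [this, ← hA2, ← hB2, hchE]; ring
      have R2 : a*b*c^2 * (E^2 * ((N.choose (j-1) : ℝ) * (N.choose (j+1) : ℝ)))
          = (N:ℝ)^4 * (E'^2 * ((((N-1).choose (j-1)) : ℝ) * (((N-1).choose (j+1)) : ℝ))) := by
        have : a*b*c^2 * (E^2 * ((N.choose (j-1) : ℝ) * (N.choose (j+1) : ℝ)))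
            = (c*E)^2 * ((a*(N.choose (j-1) : ℝ))*(b*(N.choose (j+1) : ℝ))) := by ring
        rw [this, ← hE2, hchA, hchB]; ring
      rw [L2, R2]
      exact mul_le_mul_of_nonneg_left hIH hN4


/-! ### Finset-indexed elementary symmetric polynomials -/

variable {ι : Type*} [DecidableEq ι]

/-- Elementary symmetric polynomial over a finset. -/
noncomputable def es (s : Finset ι) (j : ℕ) (x : ι → ℝ) : ℝ :=
  ∑ T ∈ s.powersetCard j, ∏ i ∈ T, x i

lemma es_eq_esymm (s : Finset ι) (j : ℕ) (x : ι → ℝ) :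
    es s j x = (s.val.map x).esymm j := (Finset.esymm_map_val x s j).symm

@[simp] lemma es_zero (s : Finset ι) (x : ι → ℝ) : es s 0 x = 1 := by
  rw [es_eq_esymm, esymm_zero']

lemma es_one (s : Finset ι) (x : ι → ℝ) : es s 1 x = ∑ i ∈ s, x i := by
  rw [es_eq_esymm, esymm_one']
  rfl

lemma es_of_lt {s : Finset ι} {j : ℕ} (h : s.card < j) (x : ι → ℝ) : es s j x = 0 := by
  rw [es_eq_esymm]
  apply esymm_of_card_lt
  rwa [Multiset.card_map]

/-- Decomposition by a single element. -/
lemma es_erase {s : Finset ι} {i : ι} (hi : i ∈ s) (j : ℕ) (x : ι → ℝ) :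
    es s (j+1) x = x i * es (s.erase i) j x + es (s.erase i) (j+1) x := by
  have hv : s.val = i ::ₘ (s.erase i).val := by
    rw [Finset.erase_val, (Multiset.cons_erase (Finset.mem_def.1 hi))]
  rw [es_eq_esymm, es_eq_esymm, es_eq_esymm, hv, Multiset.map_cons, esymm_cons]

/-- Weighted sum identity: `∑ i x_i σ_j(x|i) = (j+1) σ_{j+1}(x)`. -/
lemma sum_mul_es_erase (s : Finset ι) (j : ℕ) (x : ι → ℝ) :
    ∑ i ∈ s, x i * es (s.erase i) j x = (j+1 : ℝ) * es s (j+1) x := by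
  have lhs_eq : ∑ i ∈ s, x i * es (s.erase i) j x
      = ∑ p ∈ s.sigma (fun i => (s.erase i).powersetCard j), ∏ r ∈ insert p.1 p.2, x r := by
    rw [Finset.sum_sigma]
    refine Finset.sum_congr rfl (fun i hi => ?_)
    rw [es, Finset.mul_sum]
    refine Finset.sum_congr rfl (fun T hT => ?_)
    have hiT : i ∉ T := by
      intro h
      exact (Finset.notMem_erase i s) ((Finset.mem_powersetCard.1 hT).1 h)
    rw [Finset.prod_insert hiT]
  have rhs_eq : (j+1 : ℝ) * es s (j+1) x
      = ∑ p ∈ (s.powersetCard (j+1)).sigma (fun U => U), ∏ r ∈ p.1, x r := by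
    rw [Finset.sum_sigma, es, Finset.mul_sum]
    refine Finset.sum_congr rfl (fun U hU => ?_)
    have hconst : ∀ i ∈ U, (∏ r ∈ (⟨U, i⟩ : Σ _ : Finset ι, ι).fst, x r) = ∏ r ∈ U, x r :=
      fun _ _ => rfl
    rw [Finset.sum_congr rfl hconst, Finset.sum_const, (Finset.mem_powersetCard.1 hU).2,
      nsmul_eq_mul]
    push_cast
    ring
  rw [lhs_eq, rhs_eq]
  apply Finset.sum_nbij' (i := fun p => (⟨insert p.1 p.2, p.1⟩ : Σ U : Finset ι, ι))
    (j := fun q => (⟨q.2, q.1.erase q.2⟩ : Σ i : ι, Finset ι))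
  · intro p hp
    rw [Finset.mem_sigma] at hp ⊢
    obtain ⟨h1, h2⟩ := hp
    rw [Finset.mem_powersetCard] at h2
    constructor
    · rw [Finset.mem_powersetCard]
      constructor
      · intro r hr
        rcases Finset.mem_insert.1 hr with rfl | hr
        · exact h1
        · exact Finset.mem_of_mem_erase (h2.1 hr)
      · rw [Finset.card_insert_of_notMem, h2.2]
        intro h
        exact (Finset.notMem_erase p.1 s) (h2.1 h)
    · exact Finset.mem_insert_self _ _
  · intro q hq
    rw [Finset.mem_sigma] at hq ⊢
    obtain ⟨h1, h2⟩ := hq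
    rw [Finset.mem_powersetCard] at h1
    constructor
    · exact h1.1 h2
    · rw [Finset.mem_powersetCard]
      constructor
      · intro r hr
        exact Finset.mem_erase.2
          ⟨Finset.ne_of_mem_erase hr, h1.1 (Finset.mem_of_mem_erase hr)⟩
      · rw [Finset.card_erase_of_mem h2, h1.2]
        omega
  · intro p hp
    rw [Finset.mem_sigma] at hp
    obtain ⟨h1, h2⟩ := hp
    rw [Finset.mem_powersetCard] at h2
    have hiT : p.1 ∉ p.2 := fun h => (Finset.notMem_erase p.1 s) (h2.1 h)
    simp [Finset.erase_insert hiT]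
  · intro q hq
    rw [Finset.mem_sigma] at hq
    simp [Finset.insert_erase hq.2]
  · intro p hp
    rfl

/-- Shift formula via Taylor expansion. -/
lemma es_shift (s : Finset ι) {j : ℕ} (x : ι → ℝ) (t : ℝ) (hj : j ≤ s.card) :
    es s j (fun i => x i + t)
      = ∑ n ∈ Finset.range (j+1),
          ((n + (s.card - j)).choose (s.card - j) : ℝ) * es s (j - n) x * t^n := by
  classical
  set N := s.card with hN
  set P : Polynomial ℝ := ∏ i ∈ s, (Polynomial.X + Polynomial.C (x i)) with hP
  have hne : ∀ i ∈ s, (Polynomial.X + Polynomial.C (x i)) ≠ 0 :=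
    fun i _ => (Polynomial.monic_X_add_C (x i)).ne_zero
  have hPdeg : P.natDegree = N := by
    rw [hP, Polynomial.natDegree_prod _ _ hne]
    simp [Polynomial.natDegree_X_add_C, hN]
  have hcoeff : ∀ l ≤ N, P.coeff (N - l) = es s l x := by
    intro l hl
    have h := Finset.prod_X_add_C_coeff s x (show N - l ≤ s.card from by omega)
    rw [hP]
    rw [h, show s.card - (N - l) = l from by omega]
    rfl
  have hcoeff0 : ∀ k, N < k → P.coeff k = 0 := by
    intro k hk
    apply Polynomial.coeff_eq_zero_of_natDegree_lt
    omega
  have hcomp : (∏ i ∈ s, (Polynomial.X + Polynomial.C (x i + t)))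
      = P.comp (Polynomial.X + Polynomial.C t) := by
    rw [hP, Polynomial.prod_comp]
    refine Finset.prod_congr rfl (fun i _ => ?_)
    simp only [Polynomial.add_comp, Polynomial.X_comp, Polynomial.C_comp, Polynomial.C_add]
    ring
  have hLHS : es s j (fun i => x i + t)
      = ((Polynomial.taylor t P).coeff (N - j)) := by
    rw [Polynomial.taylor_apply, ← hcomp]
    have h := Finset.prod_X_add_C_coeff s (fun i => x i + t)
      (show N - j ≤ s.card from by omega)
    rw [h, show s.card - (N - j) = j from by omega]
    rfl
  rw [hLHS, Polynomial.taylor_coeff]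
  have hhd_deg : (Polynomial.hasseDeriv (N - j) P).natDegree < j + 1 := by
    have : (Polynomial.hasseDeriv (N - j) P).natDegree ≤ j := by
      rw [Polynomial.natDegree_le_iff_coeff_eq_zero]
      intro k hk
      rw [Polynomial.hasseDeriv_coeff]
      rw [hcoeff0 (k + (N - j)) (by omega)]
      ring
    omega
  rw [Polynomial.eval_eq_sum_range' hhd_deg]
  refine Finset.sum_congr rfl (fun n hn => ?_)
  rw [Finset.mem_range] at hn
  rw [Polynomial.hasseDeriv_coeff, show n + (N - j) = N - (j - n) from by omega,
    hcoeff (j - n) (by omega)]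

/-- Gårding cone over a finset. -/
def InG (s : Finset ι) (m : ℕ) (x : ι → ℝ) : Prop :=
  ∀ j : ℕ, 1 ≤ j → j ≤ m → 0 < es s j x

lemma InG.mono {s : Finset ι} {m m' : ℕ} {x : ι → ℝ} (h : InG s m x) (hm : m' ≤ m) :
    InG s m' x := fun j h1 h2 => h j h1 (h2.trans hm)

lemma InG.card_le {s : Finset ι} {m : ℕ} {x : ι → ℝ} (h : InG s m x) : m ≤ s.card := by
  by_contra hc
  push_neg at hc
  rcases Nat.eq_zero_or_pos m with rfl | hm
  · omega
  · exact absurd (es_of_lt hc x) (ne_of_gt (h m hm le_rfl))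

lemma InG.shift {s : Finset ι} {m : ℕ} {x : ι → ℝ} (h : InG s m x) {t : ℝ} (ht : 0 ≤ t) :
    InG s m (fun i => x i + t) := by
  intro j h1 hm
  have hjN : j ≤ s.card := le_trans hm h.card_le
  rw [es_shift s x t hjN]
  apply Finset.sum_pos'
  · intro n hn
    rw [Finset.mem_range] at hn
    have h1' : (0:ℝ) ≤ ((n + (s.card - j)).choose (s.card - j) : ℝ) := by positivity
    have h2' : 0 ≤ es s (j - n) x := by
      rcases Nat.eq_zero_or_pos (j - n) with hzero | hpos
      · rw [hzero, es_zero]; norm_num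
      · exact le_of_lt (h (j-n) hpos (by omega))
    have h3' : 0 ≤ t^n := by positivity
    positivity
  · refine ⟨0, Finset.mem_range.2 (by omega), ?_⟩
    simp only [Nat.zero_add, Nat.choose_self, Nat.cast_one, one_mul, pow_zero, mul_one,
      Nat.sub_zero]
    exact h j h1 hm

/-- The key restriction lemma: if `x ∈ Γ_m(s)` then `σ_j(x, s \ {i}) > 0` for `j ≤ m - 1`. -/
theorem InG.erase {m : ℕ} : ∀ (s : Finset ι) (x : ι → ℝ), InG s m x →
    ∀ i ∈ s, ∀ j, 1 ≤ j → j ≤ m - 1 → 0 < es (s.erase i) j x := by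
  induction m using Nat.strong_induction_on with
  | _ m IH =>
  intro s x hx i hi j hj1 hj2
  have hm2 : 2 ≤ m := by omega
  -- low cases from the induction hypothesis
  have hlow : ∀ (z : ι → ℝ), InG s m z → ∀ l, 1 ≤ l → l ≤ m - 2 → 0 < es (s.erase i) l z := by
    intro z hz l hl1 hl2
    exact IH (l+1) (by omega) s z (hz.mono (by omega)) i hi l hl1 (by omega)
  rcases Nat.lt_or_ge j (m-1) with hjlow | hjhigh
  · exact hlow x hx j hj1 (by omega)
  have hjm : j = m - 1 := by omega
  subst hjm
  -- main argument
  by_contra hneg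
  push_neg at hneg
  set N := s.card with hN
  have hmN : m ≤ N := hx.card_le
  have hsN : (s.erase i).card = N - 1 := by rw [Finset.card_erase_of_mem hi]
  have hjcard : m - 1 ≤ (s.erase i).card := by omega
  set φ : ℝ → ℝ := fun t => es (s.erase i) (m-1) (fun r => x r + t) with hφ
  set D := (s.erase i).card - (m-1) with hD
  have hφeq : ∀ t, φ t = ∑ n ∈ Finset.range ((m-1)+1),
      ((n + D).choose D : ℝ) * es (s.erase i) ((m-1) - n) x * t^n := by
    intro t
    rw [hφ]
    exact es_shift (s.erase i) x t hjcard
  have hcont : Continuous φ := by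
    have : φ = fun t => ∑ n ∈ Finset.range ((m-1)+1),
        ((n + D).choose D : ℝ) * es (s.erase i) ((m-1) - n) x * t^n := funext hφeq
    rw [this]
    apply continuous_finset_sum
    intro n _
    exact (continuous_const.mul (continuous_pow n))
  -- positivity of φ for large t
  set ctop : ℝ := (((m-1) + D).choose D : ℝ) with hctop
  have hctop_pos : 0 < ctop := by
    rw [hctop]
    exact_mod_cast Nat.choose_pos (Nat.le_add_left D (m-1))
  set c0 : ℝ := es (s.erase i) (m-1) x with hc0
  set T₁ : ℝ := max 1 ((1 + |c0|)/ctop) with hT₁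
  have hT₁1 : (1:ℝ) ≤ T₁ := le_max_left _ _
  have hφbig : ∀ t, T₁ ≤ t → 0 < φ t := by
    intro t ht
    have ht1 : (1:ℝ) ≤ t := le_trans hT₁1 ht
    have ht0 : (0:ℝ) ≤ t := by linarith
    have hterm_nonneg : ∀ n ∈ Finset.range ((m-1)+1), n ≠ 0 → n ≠ m-1 →
        0 ≤ ((n + D).choose D : ℝ) * es (s.erase i) ((m-1) - n) x * t^n := by
      intro n hn hn0 hntop
      rw [Finset.mem_range] at hn
      have h2' : 0 ≤ es (s.erase i) ((m-1) - n) x := by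
        rcases Nat.eq_zero_or_pos ((m-1) - n) with hzero | hpos
        · rw [hzero, es_zero]; norm_num
        · exact le_of_lt (hlow x hx ((m-1)-n) hpos (by omega))
      positivity
    have hsub : ({0, m-1} : Finset ℕ) ⊆ Finset.range ((m-1)+1) := by
      intro n hn
      simp only [Finset.mem_insert, Finset.mem_singleton] at hn
      rcases hn with rfl | rfl <;> simp [Finset.mem_range] <;> omega
    have hkey : ∑ n ∈ ({0, m-1} : Finset ℕ),
        ((n + D).choose D : ℝ) * es (s.erase i) ((m-1) - n) x * t^n ≤ φ t := by
      rw [hφeq t]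
      apply Finset.sum_le_sum_of_subset_of_nonneg hsub
      intro n hn hn'
      simp only [Finset.mem_insert, Finset.mem_singleton, not_or] at hn'
      exact hterm_nonneg n hn hn'.1 hn'.2
    have hpair : ∑ n ∈ ({0, m-1} : Finset ℕ),
        ((n + D).choose D : ℝ) * es (s.erase i) ((m-1) - n) x * t^n
        = c0 + ctop * t^(m-1) := by
      rw [Finset.sum_pair (by omega : (0:ℕ) ≠ m-1)]
      rw [hc0, hctop]
      simp only [Nat.zero_add, Nat.choose_self, Nat.cast_one, pow_zero, Nat.sub_zero,
        Nat.sub_self, es_zero, mul_one, one_mul]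
    have htpow : t ≤ t^(m-1) := by
      calc t = t^1 := (pow_one t).symm
        _ ≤ t^(m-1) := pow_le_pow_right₀ ht1 (by omega)
    have hct : (1 + |c0|) ≤ ctop * t := by
      have : (1 + |c0|)/ctop ≤ t := le_trans (le_max_right _ _) ht
      calc (1 + |c0|) = ctop * ((1 + |c0|)/ctop) := by field_simp
        _ ≤ ctop * t := by
            apply mul_le_mul_of_nonneg_left this (le_of_lt hctop_pos)
    have : c0 + ctop * t^(m-1) > 0 := by
      have h1' : ctop * t ≤ ctop * t^(m-1) :=
        mul_le_mul_of_nonneg_left htpow (le_of_lt hctop_pos)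
      have h2' : -|c0| ≤ c0 := neg_abs_le c0
      linarith
    linarith [hkey, hpair ▸ hkey, this, hpair.symm.le]
  -- the zero point
  set K : Set ℝ := {t | t ∈ Set.Icc (0:ℝ) T₁ ∧ φ t ≤ 0} with hK
  have hφzero : φ 0 ≤ 0 := by
    have heq0 : φ 0 = c0 := by
      rw [hφ, hc0]
      simp only [add_zero]
    rw [heq0]
    exact hneg
  have hKne : K.Nonempty := ⟨0, ⟨le_rfl, by linarith⟩, hφzero⟩
  have hKclosed : IsClosed K := by
    apply IsClosed.inter
    · exact isClosed_Icc
    · exact IsClosed.preimage hcont isClosed_Iic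
  have hKbdd : BddAbove K := BddAbove.mono (fun t ht => ht.1) bddAbove_Icc
  set T := sSup K with hT
  have hTK : T ∈ K := IsClosed.csSup_mem hKclosed hKne hKbdd
  have hT0 : 0 ≤ T := hTK.1.1
  have hφT : φ T ≤ 0 := hTK.2
  have hgt : ∀ t, T < t → 0 < φ t := by
    intro t ht
    rcases le_or_gt t T₁ with h | h
    · by_contra hc
      push_neg at hc
      have : t ∈ K := ⟨⟨by linarith, h⟩, hc⟩
      exact absurd (le_csSup hKbdd this) (not_le.2 ht)
    · exact hφbig t (le_of_lt h)
  have hφT0 : φ T = 0 := by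
    refine le_antisymm hφT ?_
    have htend : Filter.Tendsto (fun n : ℕ => φ (T + 1/(n+1))) Filter.atTop (nhds (φ T)) := by
      apply (hcont.tendsto T).comp
      have : Filter.Tendsto (fun n : ℕ => T + 1/(n+1)) Filter.atTop (nhds (T + 0)) :=
        Filter.Tendsto.add tendsto_const_nhds tendsto_one_div_add_atTop_nhds_zero_nat
      simpa using this
    apply ge_of_tendsto htend
    filter_upwards with n
    have : (0:ℝ) < 1/(n+1) := by positivity
    exact le_of_lt (hgt _ (by linarith))
  -- build y and derive contradiction via Newton
  set y : ι → ℝ := fun r => x r + T with hy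
  have hyInG : InG s m y := hx.shift hT0
  have hy1 : es (s.erase i) (m-1) y = 0 := hφT0
  have hy2 : 0 < es s m y := hyInG m (by omega) le_rfl
  have hy3 : es s m y = y i * es (s.erase i) (m-1) y + es (s.erase i) m y := by
    have := es_erase hi (m-1) y
    rwa [show m - 1 + 1 = m from by omega] at this
  have hy4 : 0 < es (s.erase i) m y := by
    rw [hy3, hy1, mul_zero, zero_add] at hy2
    exact hy2
  rcases Nat.eq_or_lt_of_le hmN with hNm | hNm
  · -- m = N : es (s.erase i) m y = 0, contradiction
    have : es (s.erase i) m y = 0 := es_of_lt (by omega) y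
    rw [this] at hy4
    exact lt_irrefl _ hy4
  · -- m < N : Newton
    set w : Multiset ℝ := (s.erase i).val.map y with hw
    have hwcard : Multiset.card w = N - 1 := by
      rw [hw, Multiset.card_map]
      exact hsN
    have hnewton := newton (N - 1 - m) w (m-1) (by omega) (by omega)
    rw [hwcard] at hnewton
    have hwm1 : w.esymm (m-1) = 0 := by rw [← es_eq_esymm]; exact hy1
    have hwm2 : w.esymm ((m-1) - 1) = es (s.erase i) (m-2) y := by
      rw [← es_eq_esymm, show (m-1) - 1 = m - 2 from by omega]
    have hwm3 : w.esymm ((m-1) + 1) = es (s.erase i) m y := by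
      rw [← es_eq_esymm, show (m-1) + 1 = m from by omega]
    have hm2pos : 0 < es (s.erase i) (m-2) y := by
      rcases Nat.eq_zero_or_pos (m - 2) with hzero | hpos
      · rw [hzero, es_zero]; norm_num
      · exact hlow y hyInG (m-2) hpos le_rfl
    have hchoosepos : (0:ℝ) < (((N-1).choose (m-1)) : ℝ) := by
      exact_mod_cast Nat.choose_pos (by omega)
    rw [hwm1, hwm2, hwm3] at hnewton
    have hlhs : 0 < es (s.erase i) (m-2) y * es (s.erase i) m y * (((N-1).choose (m-1)):ℝ)^2 := by
      positivity
    simp only [ne_eq, OfNat.ofNat_ne_zero, not_false_eq_true, zero_pow, zero_mul] at hnewton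
    linarith

lemma engel {a b : ℝ} (ha : 0 < a) (hb : 0 < b) {c : ℝ} (hc : a + b ≤ c) (u v : ℝ) :
    (u + v)^2 / c ≤ u^2 / a + v^2 / b := by
  have hab : 0 < a + b := by linarith
  have hc0 : 0 < c := lt_of_lt_of_le hab hc
  have h1 : (u + v)^2 / c ≤ (u + v)^2 / (a + b) := by
    apply div_le_div_of_nonneg_left (by positivity) hab hc
  have h2 : (u + v)^2 / (a + b) ≤ u^2 / a + v^2 / b := by
    rw [div_add_div _ _ (ne_of_gt ha) (ne_of_gt hb), div_le_div_iff₀ hab (by positivity)]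
    nlinarith [sq_nonneg (u * b - v * a)]
  linarith

lemma InG.es_pos {s : Finset ι} {m : ℕ} {x : ι → ℝ} (h : InG s m x) {j : ℕ} (hj : j ≤ m) :
    0 < es s j x := by
  rcases Nat.eq_zero_or_pos j with rfl | hpos
  · rw [es_zero]; norm_num
  · exact h j hpos hj

lemma es_one_add (s : Finset ι) (x y : ι → ℝ) :
    es s 1 (fun i => x i + y i) = es s 1 x + es s 1 y := by
  rw [es_one, es_one, es_one, ← Finset.sum_add_distrib]

/-- **Marcus–Lopes superadditivity** of `σ_{m+1}/σ_m` on the Gårding cone `Γ_m`. -/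
theorem marcus_lopes (m : ℕ) : ∀ (s : Finset ι) (x y : ι → ℝ), InG s m x → InG s m y →
    InG s m (fun i => x i + y i) ∧
      es s (m+1) x / es s m x + es s (m+1) y / es s m y ≤
        es s (m+1) (fun i => x i + y i) / es s m (fun i => x i + y i) := by
  induction m with
  | zero =>
      intro s x y _ _
      refine ⟨fun j h1 h2 => absurd h2 (by omega), ?_⟩
      have h := es_one_add s x y
      simp only [es_zero, div_one, Nat.zero_add]
      rw [h]
  | succ m ih =>
      intro s x y hx hy
      obtain ⟨hzG, hineq⟩ := ih s x y (hx.mono (by omega)) (hy.mono (by omega))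
      have hESmx : 0 < es s m x := hx.es_pos (by omega)
      have hESmy : 0 < es s m y := hy.es_pos (by omega)
      have hESmz : 0 < es s m (fun i => x i + y i) := hzG.es_pos le_rfl
      have hESx1 : 0 < es s (m+1) x := hx.es_pos le_rfl
      have hESy1 : 0 < es s (m+1) y := hy.es_pos le_rfl
      have hfx : 0 < es s (m+1) x / es s m x := by positivity
      have hfy : 0 < es s (m+1) y / es s m y := by positivity
      have hESz1 : 0 < es s (m+1) (fun i => x i + y i) := by
        have h1 : 0 < es s (m+1) (fun i => x i + y i) / es s m (fun i => x i + y i) := by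
          linarith
        calc (0:ℝ) < (es s (m+1) (fun i => x i + y i) / es s m (fun i => x i + y i))
              * es s m (fun i => x i + y i) := by positivity
          _ = es s (m+1) (fun i => x i + y i) := by field_simp
      have hzG' : InG s (m+1) (fun i => x i + y i) := by
        intro j h1 h2
        rcases Nat.lt_or_ge j (m+1) with h | h
        · exact hzG j h1 (by omega)
        · have : j = m + 1 := by omega
          rw [this]; exact hESz1
      refine ⟨hzG', ?_⟩
      -- trivial case: m+2 > card s
      rcases Nat.lt_or_ge s.card (m+1+1) with hcard | hcard
      · rw [es_of_lt hcard x, es_of_lt hcard y, es_of_lt hcard (fun i => x i + y i)]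
        simp
      -- main case
      have hK : (0:ℝ) < (m+1:ℝ) + 1 := by positivity
      -- the identity for the ratio
      have key : ∀ (u : ι → ℝ), InG s (m+1) u →
          es s (m+1+1) u / es s (m+1) u
            = (es s 1 u - (∑ i ∈ s, (u i)^2 * es (s.erase i) m u) / es s (m+1) u)
              / ((m+1:ℝ) + 1) := by
        intro u hu
        have hES : 0 < es s (m+1) u := hu.es_pos le_rfl
        have h1 := sum_mul_es_erase s (m+1) u
        have h2 : ∀ i ∈ s, u i * es (s.erase i) (m+1) u
            = u i * es s (m+1) u - (u i)^2 * es (s.erase i) m u := by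
          intro i hi
          have h3 := es_erase hi m u
          linear_combination (-(u i)) * h3
        rw [Finset.sum_congr rfl h2, Finset.sum_sub_distrib, ← Finset.sum_mul, ← es_one] at h1
        have hnz : es s (m+1) u ≠ 0 := ne_of_gt hES
        rw [show (∑ i ∈ s, (u i)^2 * es (s.erase i) m u)
            = es s 1 u * es s (m+1) u - ((m:ℝ)+1+1) * es s (m+1+1) u from by
          push_cast at h1 ⊢; linarith]
        field_simp
        ring
      -- positivity of restricted quantities
      have heraseP : ∀ (u : ι → ℝ), InG s (m+1) u → ∀ i ∈ s, 0 < es (s.erase i) m u := by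
        intro u hu i hi
        rcases Nat.eq_zero_or_pos m with rfl | hm
        · rw [es_zero]; norm_num
        · exact InG.erase s u hu i hi m hm (by omega)
      -- the Engel-sum estimate
      have hsum : ∑ i ∈ s, (x i + y i)^2 * es (s.erase i) m (fun r => x r + y r)
            / es s (m+1) (fun r => x r + y r)
          ≤ ∑ i ∈ s, ((x i)^2 * es (s.erase i) m x / es s (m+1) x
            + (y i)^2 * es (s.erase i) m y / es s (m+1) y) := by
        apply Finset.sum_le_sum
        intro i hi
        have hEx : 0 < es (s.erase i) m x := heraseP x hx i hi
        have hEy : 0 < es (s.erase i) m y := heraseP y hy i hi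
        have hEz : 0 < es (s.erase i) m (fun r => x r + y r) := heraseP _ hzG' i hi
        set a := es s (m+1) x / es (s.erase i) m x with hadef
        set b := es s (m+1) y / es (s.erase i) m y with hbdef
        set c := es s (m+1) (fun r => x r + y r)
          / es (s.erase i) m (fun r => x r + y r) with hcdef
        have ha : 0 < a := by rw [hadef]; positivity
        have hb : 0 < b := by rw [hbdef]; positivity
        -- restricted cone membership
        have hxr : InG (s.erase i) m x :=
          fun l h1 h2 => InG.erase s x hx i hi l h1 (by omega)
        have hyr : InG (s.erase i) m y :=
          fun l h1 h2 => InG.erase s y hy i hi l h1 (by omega)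
        obtain ⟨_, ihe⟩ := ih (s.erase i) x y hxr hyr
        -- a = x i + ratio
        have hxrm : 0 < es (s.erase i) m x := hEx
        have hxa : a = x i + es (s.erase i) (m+1) x / es (s.erase i) m x := by
          rw [hadef, es_erase hi m x]
          field_simp
        have hyb : b = y i + es (s.erase i) (m+1) y / es (s.erase i) m y := by
          rw [hbdef, es_erase hi m y]
          field_simp
        have hzc : c = (x i + y i)
            + es (s.erase i) (m+1) (fun r => x r + y r)
              / es (s.erase i) m (fun r => x r + y r) := by
          rw [hcdef, es_erase hi m (fun r => x r + y r)]
          field_simp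
        have hcab : a + b ≤ c := by
          rw [hxa, hyb, hzc]
          linarith [ihe]
        have hengel := engel ha hb hcab (x i) (y i)
        -- convert: (z i)^2 / c = (z i)^2 * E_z / ES_z
        have hconv : ∀ (E ES u2 : ℝ), 0 < E → 0 < ES → u2 / (ES / E) = u2 * E / ES := by
          intro E ES u2 hE hES
          field_simp
        calc (x i + y i)^2 * es (s.erase i) m (fun r => x r + y r)
              / es s (m+1) (fun r => x r + y r)
            = (x i + y i)^2 / c := by
              rw [hcdef, hconv _ _ _ hEz hESz1]
          _ ≤ (x i)^2 / a + (y i)^2 / b := hengel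
          _ = (x i)^2 * es (s.erase i) m x / es s (m+1) x
              + (y i)^2 * es (s.erase i) m y / es s (m+1) y := by
              rw [hadef, hbdef, hconv _ _ _ hEx hESx1, hconv _ _ _ hEy hESy1]
      -- put everything together
      have hfinal : (∑ i ∈ s, (x i + y i)^2 * es (s.erase i) m (fun r => x r + y r))
            / es s (m+1) (fun r => x r + y r)
          ≤ (∑ i ∈ s, (x i)^2 * es (s.erase i) m x) / es s (m+1) x
            + (∑ i ∈ s, (y i)^2 * es (s.erase i) m y) / es s (m+1) y := by
        rw [Finset.sum_div, Finset.sum_div, Finset.sum_div]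
        calc ∑ i ∈ s, (x i + y i)^2 * es (s.erase i) m (fun r => x r + y r)
              / es s (m+1) (fun r => x r + y r)
            ≤ ∑ i ∈ s, ((x i)^2 * es (s.erase i) m x / es s (m+1) x
              + (y i)^2 * es (s.erase i) m y / es s (m+1) y) := hsum
          _ = _ := Finset.sum_add_distrib
      have hS : es s 1 (fun i => x i + y i) = es s 1 x + es s 1 y := es_one_add s x y
      rw [key x hx, key y hy, key _ hzG', ← add_div,
        div_le_div_iff_of_pos_right hK]
      linarith [hfinal, hS]

section FintypePart
variable {ι : Type*} [DecidableEq ι] [Fintype ι]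

lemma es_perm (j : ℕ) (x : ι → ℝ) (σ : Equiv.Perm ι) :
    es Finset.univ j (fun i => x (σ i)) = es Finset.univ j x := by
  rw [es_eq_esymm, es_eq_esymm]
  congr 1
  have h1 : Finset.univ.val.map (fun i => x (σ i))
      = (Finset.univ.val.map (⇑σ)).map x := by
    rw [Multiset.map_map]
    rfl
  rw [h1]
  congr 1
  have : Finset.univ.val.map ⇑σ = (Finset.univ.map σ.toEmbedding).val := by
    rw [Finset.map_val]
    rfl
  rw [this, Finset.map_univ_equiv]

end FintypePart

lemma es_smul (s : Finset ι) (j : ℕ) (x : ι → ℝ) (c : ℝ) :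
    es s j (fun i => c * x i) = c^j * es s j x := by
  rw [es, es, Finset.mul_sum]
  refine Finset.sum_congr rfl (fun T hT => ?_)
  rw [Finset.prod_mul_distrib, Finset.prod_const, (Finset.mem_powersetCard.1 hT).2]

lemma InG.smul {s : Finset ι} {m : ℕ} {x : ι → ℝ} (h : InG s m x) {c : ℝ} (hc : 0 < c) :
    InG s m (fun i => c * x i) := by
  intro j h1 h2
  rw [es_smul]
  have := h j h1 h2
  positivity

lemma ratio_smul {s : Finset ι} {m : ℕ} {x : ι → ℝ} (h : InG s m x) {c : ℝ} (hc : 0 < c) :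
    es s (m+1) (fun i => c * x i) / es s m (fun i => c * x i)
      = c * (es s (m+1) x / es s m x) := by
  rw [es_smul, es_smul]
  have h0 : 0 < es s m x := h.es_pos le_rfl
  have hc' : (c:ℝ)^m ≠ 0 := by positivity
  field_simp
  ring

/-- Superadditivity for finite sums of vectors in the cone. -/
theorem marcus_lopes_sum {m : ℕ} (s : Finset ι) {κ : Type*} [DecidableEq κ] (t : Finset κ)
    (ht : t.Nonempty) (v : κ → ι → ℝ) (hv : ∀ a ∈ t, InG s m (v a)) :
    InG s m (fun i => ∑ a ∈ t, v a i) ∧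
      ∑ a ∈ t, es s (m+1) (v a) / es s m (v a)
        ≤ es s (m+1) (fun i => ∑ a ∈ t, v a i) / es s m (fun i => ∑ a ∈ t, v a i) := by
  classical
  induction t using Finset.cons_induction with
  | empty => exact absurd ht (by simp)
  | cons a t ha ih =>
      rcases Finset.eq_empty_or_nonempty t with rfl | htne
      · have hone : (fun i => ∑ b ∈ Finset.cons a ∅ ha, v b i) = v a := by
          funext i
          rw [Finset.sum_cons, Finset.sum_empty, add_zero]
        rw [hone, Finset.sum_cons, Finset.sum_empty, add_zero]
        exact ⟨hv a (Finset.mem_cons_self a _), le_rfl⟩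
      · obtain ⟨ih1, ih2⟩ := ih htne (fun b hb => hv b (Finset.mem_cons_of_mem hb))
        have hva := hv a (Finset.mem_cons_self a t)
        obtain ⟨m1, m2⟩ := marcus_lopes m s (v a) (fun i => ∑ b ∈ t, v b i) hva ih1
        constructor
        · intro j h1 h2
          have := m1 j h1 h2
          convert this using 2
          funext i
          rw [Finset.sum_cons]
        · have hrw : (fun i => ∑ b ∈ Finset.cons a t ha, v b i)
              = (fun i => v a i + ∑ b ∈ t, v b i) := by
            funext i
            rw [Finset.sum_cons]
          rw [hrw, Finset.sum_cons]
          calc es s (m+1) (v a) / es s m (v a) + ∑ b ∈ t, es s (m+1) (v b) / es s m (v b)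
              ≤ es s (m+1) (v a) / es s m (v a)
                + es s (m+1) (fun i => ∑ b ∈ t, v b i) / es s m (fun i => ∑ b ∈ t, v b i) := by
                linarith
            _ ≤ _ := m2

/-! ### Matrix part -/

section MatrixPart

variable {n : ℕ}

open Matrix

lemma diag_conj_superadd {m : ℕ} {A : Matrix (Fin n) (Fin n) ℝ} (hA : A.IsHermitian)
    {W : Matrix (Fin n) (Fin n) ℝ} (hW : W ∈ Matrix.unitaryGroup (Fin n) ℝ)
    (hG : InG Finset.univ m hA.eigenvalues) :
    InG Finset.univ m (fun i => (star W * A * W) i i) ∧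
      es Finset.univ (m+1) hA.eigenvalues / es Finset.univ m hA.eigenvalues
        ≤ es Finset.univ (m+1) (fun i => (star W * A * W) i i)
          / es Finset.univ m (fun i => (star W * A * W) i i) := by
  classical
  set lam := hA.eigenvalues with hlam
  set V := (hA.eigenvectorUnitary : Matrix (Fin n) (Fin n) ℝ) with hV
  have hVmem : V ∈ Matrix.unitaryGroup (Fin n) ℝ := (hA.eigenvectorUnitary).2
  have hVV : V * star V = 1 := (Matrix.mem_unitaryGroup_iff).mp hVmem
  have hVV' : star V * V = 1 := (Matrix.mem_unitaryGroup_iff').mp hVmem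
  have hWW : W * star W = 1 := (Matrix.mem_unitaryGroup_iff).mp hW
  have hWW' : star W * W = 1 := (Matrix.mem_unitaryGroup_iff').mp hW
  set R := star V * W with hR
  have hstarR : star R = star W * V := by
    rw [hR, Matrix.star_mul, star_star]
  have hRR : star R * R = 1 := by
    rw [hstarR, hR, Matrix.mul_assoc, ← Matrix.mul_assoc V, hVV, Matrix.one_mul, hWW']
  have hRR' : R * star R = 1 := by
    rw [hstarR, hR, Matrix.mul_assoc, ← Matrix.mul_assoc W, hWW, Matrix.one_mul, hVV']
  have hofReal : (RCLike.ofReal ∘ lam : Fin n → ℝ) = lam := by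
    rw [RCLike.ofReal_real_eq_id]
    rfl
  have hconj : star W * A * W = star R * (Matrix.diagonal lam) * R := by
    conv_lhs => rw [hA.spectral_theorem, Unitary.conjStarAlgAut_apply]
    rw [← hlam, hofReal, ← hV, hstarR, hR]
    simp only [Matrix.mul_assoc]
  have hentry : ∀ i, (star W * A * W) i i = ∑ j, (R j i)^2 * lam j := by
    intro i
    rw [hconj, Matrix.mul_apply]
    refine Finset.sum_congr rfl (fun j _ => ?_)
    rw [Matrix.mul_diagonal, Matrix.star_apply, star_trivial]
    ring
  set S : Matrix (Fin n) (Fin n) ℝ := Matrix.of (fun i j => (R j i)^2) with hSdef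
  have hSmem : S ∈ doublyStochastic ℝ (Fin n) := by
    rw [mem_doublyStochastic_iff_sum]
    refine ⟨fun i j => by simp only [hSdef, Matrix.of_apply]; positivity,
      fun i => ?_, fun j => ?_⟩
    · have h1 : (star R * R) i i = 1 := by rw [hRR]; exact Matrix.one_apply_eq i
      rw [Matrix.mul_apply] at h1
      calc ∑ j, S i j = ∑ j, star R i j * R j i := by
            refine Finset.sum_congr rfl (fun j _ => ?_)
            rw [Matrix.star_apply, star_trivial]
            simp only [hSdef, Matrix.of_apply]
            ring
        _ = 1 := h1
    · have h1 : (R * star R) j j = 1 := by rw [hRR']; exact Matrix.one_apply_eq j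
      rw [Matrix.mul_apply] at h1
      calc ∑ i, S i j = ∑ i, R j i * star R i j := by
            refine Finset.sum_congr rfl (fun i _ => ?_)
            rw [Matrix.star_apply, star_trivial]
            simp only [hSdef, Matrix.of_apply]
            ring
        _ = 1 := h1
  obtain ⟨w, hw0, hw1, hwS⟩ := exists_eq_sum_perm_of_mem_doublyStochastic hSmem
  have hd : ∀ i, (star W * A * W) i i = ∑ σ : Equiv.Perm (Fin n), w σ * lam (σ i) := by
    intro i
    rw [hentry i]
    have h1 : ∀ j, (R j i)^2 = ∑ σ : Equiv.Perm (Fin n), w σ * (σ.permMatrix ℝ) i j := by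
      intro j
      have h2 := congrFun (congrFun hwS i) j
      have h3 : S i j = R j i ^ 2 := rfl
      rw [← h3, ← h2, Matrix.sum_apply]
      refine Finset.sum_congr rfl (fun σ _ => ?_)
      rw [Matrix.smul_apply, smul_eq_mul]
    calc ∑ j, (R j i)^2 * lam j
        = ∑ j, (∑ σ : Equiv.Perm (Fin n), w σ * (σ.permMatrix ℝ) i j) * lam j := by
          refine Finset.sum_congr rfl (fun j _ => ?_)
          rw [h1 j]
      _ = ∑ σ : Equiv.Perm (Fin n), ∑ j, w σ * (σ.permMatrix ℝ) i j * lam j := by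
          rw [Finset.sum_comm]
          refine Finset.sum_congr rfl (fun j _ => ?_)
          rw [Finset.sum_mul]
      _ = ∑ σ : Equiv.Perm (Fin n), w σ * lam (σ i) := by
          refine Finset.sum_congr rfl (fun σ _ => ?_)
          have hperm : ∀ j, (σ.permMatrix ℝ) i j = if σ i = j then 1 else 0 := by
            intro j
            rw [Equiv.Perm.permMatrix, PEquiv.toMatrix_apply, Equiv.toPEquiv_apply]
            simp [eq_comm]
          calc ∑ j, w σ * (σ.permMatrix ℝ) i j * lam j
              = ∑ j, if σ i = j then w σ * lam j else 0 := by
                refine Finset.sum_congr rfl (fun j _ => ?_)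
                rw [hperm j]
                by_cases h : σ i = j <;> simp [h]
            _ = w σ * lam (σ i) := by rw [Finset.sum_ite_eq]; simp
  -- restrict to positive weights
  set t : Finset (Equiv.Perm (Fin n)) := Finset.univ.filter (fun σ => 0 < w σ) with ht
  have hzero : ∀ σ ∈ Finset.univ \ t, w σ = 0 := by
    intro σ hσ
    rw [Finset.mem_sdiff, ht, Finset.mem_filter] at hσ
    have := hσ.2
    push_neg at this
    have h2 := this (Finset.mem_univ σ)
    linarith [hw0 σ, h2]
  have hsumw : ∑ σ ∈ t, w σ = 1 := by
    rw [← hw1]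
    apply Finset.sum_subset (Finset.subset_univ t)
    intro σ _ hσ
    by_contra hc
    have : 0 < w σ := lt_of_le_of_ne (hw0 σ) (Ne.symm hc)
    exact hσ (Finset.mem_filter.2 ⟨Finset.mem_univ σ, this⟩)
  have htne : t.Nonempty := by
    by_contra hc
    rw [Finset.not_nonempty_iff_eq_empty] at hc
    rw [hc, Finset.sum_empty] at hsumw
    norm_num at hsumw
  set v : Equiv.Perm (Fin n) → (Fin n) → ℝ := fun σ => fun i => w σ * lam (σ i) with hvdef
  have hdt : (fun i => (star W * A * W) i i) = (fun i => ∑ σ ∈ t, v σ i) := by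
    funext i
    rw [hd i]
    symm
    apply Finset.sum_subset (Finset.subset_univ t)
    intro σ hσu hσ
    have : w σ = 0 := hzero σ (Finset.mem_sdiff.2 ⟨hσu, hσ⟩)
    rw [hvdef]
    simp [this]
  have hvInG : ∀ σ ∈ t, InG Finset.univ m (v σ) := by
    intro σ hσ
    have hwpos : 0 < w σ := (Finset.mem_filter.1 hσ).2
    have hperm : InG Finset.univ m (fun i => lam (σ i)) := by
      intro j h1 h2
      rw [es_perm]
      exact hG j h1 h2
    exact hperm.smul hwpos
  have hvratio : ∀ σ ∈ t, es Finset.univ (m+1) (v σ) / es Finset.univ m (v σ)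
      = w σ * (es Finset.univ (m+1) lam / es Finset.univ m lam) := by
    intro σ hσ
    have hwpos : 0 < w σ := (Finset.mem_filter.1 hσ).2
    have hperm : InG Finset.univ m (fun i => lam (σ i)) := by
      intro j h1 h2
      rw [es_perm]
      exact hG j h1 h2
    rw [hvdef]
    have := ratio_smul hperm hwpos
    rw [this, es_perm, es_perm]
  obtain ⟨hmem, hineq⟩ := marcus_lopes_sum Finset.univ t htne v hvInG
  rw [hdt]
  constructor
  · exact hmem
  · calc es Finset.univ (m+1) lam / es Finset.univ m lam
        = ∑ σ ∈ t, es Finset.univ (m+1) (v σ) / es Finset.univ m (v σ) := by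
          rw [Finset.sum_congr rfl hvratio, ← Finset.sum_mul, hsumw, one_mul]
      _ ≤ _ := hineq

end MatrixPart

end NewtonAux

open NewtonAux in
theorem stmt_4' (n k : ℕ) (hn : 2 ≤ n) (hk2 : 2 ≤ k) (hkn : k ≤ n)
    (A B : Matrix (Fin n) (Fin n) ℝ) (hA : A.IsHermitian) (hB : B.IsHermitian)
    (hAG : NewtonAux.InG Finset.univ (k - 1) hA.eigenvalues)
    (hBG : NewtonAux.InG Finset.univ (k - 1) hB.eigenvalues) :
    NewtonAux.InG Finset.univ (k - 1) (hA.add hB).eigenvalues ∧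
      es Finset.univ k (hA.add hB).eigenvalues / es Finset.univ (k - 1) (hA.add hB).eigenvalues ≥
        es Finset.univ k hA.eigenvalues / es Finset.univ (k - 1) hA.eigenvalues +
          es Finset.univ k hB.eigenvalues / es Finset.univ (k - 1) hB.eigenvalues := by
  classical
  set m := k - 1 with hm
  have hm1 : m + 1 = k := by omega
  set hC := hA.add hB with hCdef
  set W := (hC.eigenvectorUnitary : Matrix (Fin n) (Fin n) ℝ) with hW
  have hWmem : W ∈ Matrix.unitaryGroup (Fin n) ℝ := (hC.eigenvectorUnitary).2
  set dA : Fin n → ℝ := fun i => (star W * A * W) i i with hdA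
  set dB : Fin n → ℝ := fun i => (star W * B * W) i i with hdB
  have hofReal : (RCLike.ofReal ∘ hC.eigenvalues : Fin n → ℝ) = hC.eigenvalues := by
    rw [RCLike.ofReal_real_eq_id]
    rfl
  have hsplit : hC.eigenvalues = fun i => dA i + dB i := by
    funext i
    have h1 : star W * (A + B) * W = Matrix.diagonal (RCLike.ofReal ∘ hC.eigenvalues) := by
      have := hC.conjStarAlgAut_star_eigenvectorUnitary
      rw [Unitary.conjStarAlgAut_apply, Unitary.coe_star, star_star] at this
      exact this
    rw [hofReal] at h1
    have h2 : star W * (A + B) * W = star W * A * W + star W * B * W := by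
      rw [Matrix.mul_add, Matrix.add_mul]
    have h3 : (star W * (A + B) * W) i i = hC.eigenvalues i := by
      rw [h1, Matrix.diagonal_apply_eq]
    rw [h2, Matrix.add_apply] at h3
    rw [← h3]
  obtain ⟨hdAInG, hdAineq⟩ := diag_conj_superadd hA hWmem hAG
  obtain ⟨hdBInG, hdBineq⟩ := diag_conj_superadd hB hWmem hBG
  obtain ⟨hzInG, hzineq⟩ := marcus_lopes m Finset.univ dA dB hdAInG hdBInG
  rw [hsplit]
  constructor
  · exact hzInG
  · rw [ge_iff_le, ← hm1]
    calc es Finset.univ (m+1) hA.eigenvalues / es Finset.univ m hA.eigenvalues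
          + es Finset.univ (m+1) hB.eigenvalues / es Finset.univ m hB.eigenvalues
        ≤ es Finset.univ (m+1) dA / es Finset.univ m dA
          + es Finset.univ (m+1) dB / es Finset.univ m dB := by
          exact add_le_add hdAineq hdBineq
      _ ≤ _ := hzineq


lemma esymmVec_eq_es (n j : ℕ) (lam : Fin n → ℝ) :
    esymmVec n j lam = NewtonAux.es Finset.univ j lam := rfl

lemma inGamma_iff_InG (n m : ℕ) (lam : Fin n → ℝ) :
    inGamma n m lam ↔ NewtonAux.InG Finset.univ m lam := Iff.rfl

/-- Superadditivity of `σ_k/σ_{k-1}` on the cone `Γ_{k-1}` (from the concavity of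
`σ_k/σ_{k-1}`): if `A, B ∈ Γ_{k-1}` then `A + B ∈ Γ_{k-1}` and
`σ_k(A+B)/σ_{k-1}(A+B) ≥ σ_k(A)/σ_{k-1}(A) + σ_k(B)/σ_{k-1}(B)`. -/
theorem stmt_4 (n k : ℕ) (hn : 2 ≤ n) (hk2 : 2 ≤ k) (hkn : k ≤ n)
    (A B : Matrix (Fin n) (Fin n) ℝ) (hA : A.IsHermitian) (hB : B.IsHermitian)
    (hAG : inGamma n (k - 1) hA.eigenvalues)
    (hBG : inGamma n (k - 1) hB.eigenvalues) :
    inGamma n (k - 1) (hA.add hB).eigenvalues ∧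
      esymmVec n k (hA.add hB).eigenvalues / esymmVec n (k - 1) (hA.add hB).eigenvalues ≥
        esymmVec n k hA.eigenvalues / esymmVec n (k - 1) hA.eigenvalues +
          esymmVec n k hB.eigenvalues / esymmVec n (k - 1) hB.eigenvalues := by
  have h := stmt_4' n k hn hk2 hkn A B hA hB
    ((inGamma_iff_InG n (k-1) hA.eigenvalues).1 hAG)
    ((inGamma_iff_InG n (k-1) hB.eigenvalues).1 hBG)
  refine ⟨(inGamma_iff_InG n (k-1) (hA.add hB).eigenvalues).2 h.1, ?_⟩
  simpa only [esymmVec_eq_es] using h.2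
end

section
/- Let s_1 < s_2 be real numbers. Then there exist constants c_1, c_2 and p, depending only on s_1 and s_2, such that the function γ(s) = c_1 (c_2 + s)^p is well defined (i.e. c_2 + s > 0) for all s ∈ (s_1, s_2) and satisfies γ′(s) > 0 and γ″(s) − (γ′(s))^2 > γ′(s) for every s ∈ (s_1, s_2). -/
lemma aux_deriv (c₁ c₂ p : ℝ) {s : ℝ} (hx : 0 < c₂ + s) :
    HasDerivAt (fun t : ℝ => c₁ * (c₂ + t) ^ p) (c₁ * p * (c₂ + s) ^ (p - 1)) s := by
  have h1 : HasDerivAt (fun t : ℝ => c₂ + t) 1 s := (hasDerivAt_id s).const_add c₂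
  have h2 := (Real.hasDerivAt_rpow_const (x := c₂ + s) (p := p) (Or.inl hx.ne')).comp s h1
  have h3 := h2.const_mul c₁
  simpa [mul_comm, mul_assoc, mul_left_comm] using h3

lemma aux_deriv_eq (c₁ c₂ p : ℝ) {s : ℝ} (hx : 0 < c₂ + s) :
    deriv (fun t : ℝ => c₁ * (c₂ + t) ^ p) s = c₁ * p * (c₂ + s) ^ (p - 1) :=
  (aux_deriv c₁ c₂ p hx).deriv

lemma aux_deriv2 (c₁ c₂ p : ℝ) {s : ℝ} (hx : 0 < c₂ + s) :
    deriv (deriv (fun t : ℝ => c₁ * (c₂ + t) ^ p)) s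
      = c₁ * p * (p - 1) * (c₂ + s) ^ (p - 2) := by
  have hU : IsOpen {t : ℝ | 0 < c₂ + t} := isOpen_lt continuous_const (by continuity)
  have heq : deriv (fun t : ℝ => c₁ * (c₂ + t) ^ p)
      =ᶠ[nhds s] (fun t : ℝ => (c₁ * p) * (c₂ + t) ^ (p - 1)) := by
    filter_upwards [hU.mem_nhds hx] with t ht
    exact aux_deriv_eq c₁ c₂ p ht
  rw [heq.deriv_eq, aux_deriv_eq (c₁ * p) c₂ (p - 1) hx]
  ring_nf

/-- Lemma (Gursky–Viaclovsky): given `s₁ < s₂`, there are constants `c₁, c₂, p`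
(depending only on `s₁, s₂`) such that `γ(s) = c₁ (c₂ + s)^p` is well defined
(`c₂ + s > 0`) on `(s₁, s₂)` and satisfies `γ'(s) > 0` and `γ''(s) - γ'(s)² > γ'(s)`
for every `s ∈ (s₁, s₂)`. -/
theorem stmt_6 (s₁ s₂ : ℝ) (h : s₁ < s₂) :
    ∃ c₁ c₂ p : ℝ, ∀ s ∈ Set.Ioo s₁ s₂,
      0 < c₂ + s ∧
      0 < deriv (fun t : ℝ => c₁ * (c₂ + t) ^ p) s ∧
      deriv (deriv (fun t : ℝ => c₁ * (c₂ + t) ^ p)) s -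
          (deriv (fun t : ℝ => c₁ * (c₂ + t) ^ p) s) ^ 2 >
        deriv (fun t : ℝ => c₁ * (c₂ + t) ^ p) s := by
  set M : ℝ := s₂ - s₁ + 1 with hM
  have hM1 : 1 < M := by simp [hM]; linarith
  set p : ℝ := M + 2 with hp
  have hp0 : 0 < p := by positivity
  set c₁ : ℝ := 1 / (2 * p * M ^ p) with hc₁
  have hc₁0 : 0 < c₁ := by positivity
  refine ⟨c₁, 1 - s₁, p, fun s hs => ?_⟩
  obtain ⟨hs1, hs2⟩ := hs
  set x : ℝ := 1 - s₁ + s with hxdef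
  have hx1 : 1 < x := by simp [hxdef]; linarith
  have hx0 : 0 < x := by linarith
  have hxM : x < M := by simp [hxdef, hM]; linarith
  refine ⟨hx0, ?_, ?_⟩
  · rw [aux_deriv_eq c₁ (1 - s₁) p hx0]
    positivity
  · rw [aux_deriv_eq c₁ (1 - s₁) p hx0, aux_deriv2 c₁ (1 - s₁) p hx0]
    set a : ℝ := x ^ (p - 2) with ha
    have ha0 : 0 < a := Real.rpow_pos_of_pos hx0 _
    clear_value M p c₁ x a
    have h1 : x ^ (p - 1) = a * x := by
      rw [ha, ← Real.rpow_add_one hx0.ne']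
      ring_nf
    have h2 : x ^ p = a * x ^ 2 := by
      rw [ha, pow_two, ← mul_assoc, ← Real.rpow_add_one hx0.ne',
        ← Real.rpow_add_one hx0.ne']
      ring_nf
    -- key bound : c₁ * p * x ^ p < 1/2
    have hxp : x ^ p < M ^ p := Real.rpow_lt_rpow hx0.le hxM hp0
    have hMp : (0:ℝ) < M ^ p := Real.rpow_pos_of_pos (by linarith) _
    have hbound : c₁ * p * (a * x ^ 2) < 1 / 2 := by
      rw [← h2, hc₁]
      rw [div_mul_eq_mul_div, div_mul_eq_mul_div, div_lt_div_iff₀ (by positivity) (by norm_num)]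
      nlinarith
    have hpx : p - 1 - x > 1 := by simp [hp]; linarith
    rw [← hxdef, h1]
    have key : c₁ * p * (p - 1) * a - (c₁ * p * (a * x)) ^ 2 > c₁ * p * (a * x) := by
      have hfac : 0 < c₁ * p * a := by positivity
      nlinarith [mul_pos hfac (sub_pos.mpr (by linarith : x + c₁ * p * (a * x ^ 2) < p - 1))]
    linarith [key]
end

section
/- Let n ≥ 2, 2 ≤ k ≤ n and 0 ≤ l ≤ k-2. Let λ ∈ Γ_{k-1} with σ_k(λ) > 0. Then σ_l(λ)/σ_{k-1}(λ) ≤ [ (C(n,k))^{k-1-l} · C(n,l) / (C(n,k-1))^{k-l} ] · (σ_{k-1}(λ)/σ_k(λ))^{k-1-l}, where C(n,j) denotes the binomial coefficient n choose j. -/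
section NewtonAux

open Polynomial Nat

lemma castDF {n k : ℕ} (h : k ≤ n) :
    ((n.descFactorial k : ℕ) : ℝ) = (n ! : ℝ) / ((n - k)! : ℝ) := by
  have h1 := Nat.factorial_mul_descFactorial h
  have h2 : (0:ℝ) < ((n - k)! : ℝ) := by exact_mod_cast Nat.factorial_pos _
  rw [eq_div_iff (ne_of_gt h2)]
  have h3 : n.descFactorial k * (n - k)! = n ! := by rw [Nat.mul_comm]; exact h1
  exact_mod_cast h3

lemma splits_derivative_aux {p : ℝ[X]} (hp : p.Splits) :
    (derivative p).Splits := by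
  rcases eq_or_ne (derivative p) 0 with h | h
  · rw [h]; exact Splits.zero
  have hdeg : 0 < p.natDegree := by
    by_contra h0
    exact h (derivative_of_natDegree_zero (by omega))
  have h1 : (derivative p).natDegree = p.natDegree - 1 :=
    natDegree_eq_of_degree_eq_some (degree_derivative_eq p hdeg)
  rw [splits_iff_card_roots]
  have h2 := card_roots_le_derivative p
  have h3 := card_roots' (derivative p)
  have h4 := splits_iff_card_roots.mp hp
  omega

lemma splits_iterate_derivative_aux {p : ℝ[X]} (hp : p.Splits) (k : ℕ) :
    (derivative^[k] p).Splits := by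
  induction k with
  | zero => exact hp
  | succ k ih => rw [Function.iterate_succ_apply']; exact splits_derivative_aux ih

lemma splits_reverse_aux {p : ℝ[X]} (hp : p.Splits) :
    p.reverse.Splits := by
  rcases eq_or_ne p 0 with rfl | h0
  · rw [reverse_zero]; exact Splits.zero
  have key : ∀ m : Multiset ℝ,
      ((m.map fun a => X - C a).prod).reverse.Splits := by
    intro m
    induction m using Multiset.induction_on with
    | empty =>
      have : ((1 : ℝ[X])).reverse = 1 := by rw [← C_1, reverse_C]
      rw [Multiset.map_zero, Multiset.prod_zero, this]
      exact Splits.one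
    | cons a m ih =>
      rw [Multiset.map_cons, Multiset.prod_cons, reverse_mul_of_domain]
      exact Splits.mul (Splits.of_natDegree_le_one
        ((reverse_natDegree_le _).trans (by rw [natDegree_X_sub_C]))) ih
  have h := hp.eq_prod_roots
  rw [h, reverse_mul_of_domain, reverse_C]
  exact Splits.mul (Splits.C _) (key _)

lemma discrim_step {p : ℝ[X]} (hp : p.Splits) (hdeg : p.natDegree ≤ 2) :
    4 * (p.coeff 0 * p.coeff 2) ≤ p.coeff 1 ^ 2 := by
  rcases lt_or_eq_of_le hdeg with h2 | h2
  · have hz : p.coeff 2 = 0 := coeff_eq_zero_of_natDegree_lt h2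
    rw [hz, mul_zero, mul_zero]
    exact sq_nonneg _
  · have hp0 : p ≠ 0 := fun h => by simp [h] at h2
    have hne : p.degree ≠ 0 := by
      rw [degree_eq_natDegree hp0, h2]
      decide
    obtain ⟨x, hx⟩ := hp.exists_eval_eq_zero hne
    have hev := eval_eq_sum_range' (show p.natDegree < 3 by omega) x
    rw [hx] at hev
    simp [Finset.sum_range_succ] at hev
    have h5 : 0 = (p.coeff 0 + p.coeff 1 * x + p.coeff 2 * x ^ 2) * p.coeff 2 := by
      rw [← hev]; ring
    nlinarith [sq_nonneg (2 * p.coeff 2 * x + p.coeff 1), h5]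

set_option maxHeartbeats 1000000 in
lemma newton_ineq (n m : ℕ) (hmn : m + 2 ≤ n) (lam : Fin n → ℝ) :
    esymmVec n m lam * esymmVec n (m + 2) lam * ((n.choose (m + 1) : ℝ)) ^ 2 ≤
      (esymmVec n (m + 1) lam) ^ 2 * ((n.choose m : ℝ) * (n.choose (m + 2) : ℝ)) := by
  set F : ℝ[X] := ∏ i : Fin n, (X + C (lam i)) with hF
  have hFm : F.Monic := monic_prod_of_monic _ _ fun i _ => monic_X_add_C _
  have hFdeg : F.natDegree = n := by
    rw [hF, natDegree_prod _ _ (fun i _ => (monic_X_add_C (lam i)).ne_zero)]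
    simp [natDegree_X_add_C]
  have hFsplits : F.Splits :=
    Splits.prod fun i _ => Splits.of_natDegree_le_one (le_of_eq (natDegree_X_add_C _))
  have hFcoeff : ∀ s : ℕ, s ≤ n → F.coeff (n - s) = esymmVec n s lam := by
    intro s hs
    have hcard : (Finset.univ : Finset (Fin n)).card = n := by simp
    rw [hF, Finset.prod_X_add_C_coeff _ _ (by rw [hcard]; omega)]
    have h1 : (Finset.univ : Finset (Fin n)).card - (n - s) = s := by rw [hcard]; omega
    rw [h1]
    rfl
  set p1 : ℝ[X] := derivative^[n - m - 2] F with hp1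
  have hp1split := splits_iterate_derivative_aux hFsplits (n - m - 2)
  rw [← hp1] at hp1split
  have hp1degle : p1.natDegree ≤ m + 2 := by
    have h := natDegree_iterate_derivative F (n - m - 2)
    rw [← hp1] at h
    omega
  have hp1coeff : ∀ t : ℕ, p1.coeff t =
      ((t + (n - m - 2)).descFactorial (n - m - 2) : ℝ) * F.coeff (t + (n - m - 2)) := by
    intro t
    rw [hp1, coeff_iterate_derivative, nsmul_eq_mul]
  have hFn : F.coeff n = 1 := by rw [← hFdeg]; exact hFm.coeff_natDegree
  have hp1deg : p1.natDegree = m + 2 := by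
    refine le_antisymm hp1degle (le_natDegree_of_ne_zero ?_)
    rw [hp1coeff]
    have h1 : m + 2 + (n - m - 2) = n := by omega
    rw [h1, hFn, mul_one, castDF (by omega)]
    have h2 : (0:ℝ) < (n ! : ℝ) := by exact_mod_cast Nat.factorial_pos n
    have h3 : (0:ℝ) < ((n - (n - m - 2))! : ℝ) := by exact_mod_cast Nat.factorial_pos _
    positivity
  have hqsplit := splits_reverse_aux hp1split
  have hqcoeff : ∀ s : ℕ, s ≤ m + 2 → p1.reverse.coeff s = p1.coeff (m + 2 - s) := by
    intro s hs
    rw [coeff_reverse, hp1deg, revAt_le hs]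
  set p2 : ℝ[X] := derivative^[m] p1.reverse with hp2
  have hp2split := splits_iterate_derivative_aux hqsplit m
  rw [← hp2] at hp2split
  have hp2deg : p2.natDegree ≤ 2 := by
    have h1 := natDegree_iterate_derivative p1.reverse m
    rw [← hp2] at h1
    have h2 := reverse_natDegree_le p1
    omega
  have hp2coeff : ∀ u : ℕ, u ≤ 2 → p2.coeff u =
      ((u + m).descFactorial m : ℝ) * (((n - m - u).descFactorial (n - m - 2) : ℝ)
        * esymmVec n (m + u) lam) := by
    intro u hu
    rw [hp2, coeff_iterate_derivative, nsmul_eq_mul,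
      hqcoeff (u + m) (by omega), hp1coeff]
    have h1 : m + 2 - (u + m) + (n - m - 2) = n - m - u := by omega
    have h2 : n - m - u = n - (m + u) := by omega
    rw [h1, h2, hFcoeff (m + u) (by omega)]
  have hdisc := discrim_step hp2split hp2deg
  rw [hp2coeff 0 (by omega), hp2coeff 1 (by omega), hp2coeff 2 (by omega)] at hdisc
  simp only [Nat.add_zero] at hdisc
  -- constants
  have e0 : ((0 + m).descFactorial m : ℝ) = (m ! : ℝ) := by
    rw [Nat.zero_add, Nat.descFactorial_self]
  have e1 : ((1 + m).descFactorial m : ℝ) = ((m + 1)! : ℝ) := by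
    rw [castDF (by omega)]
    have h1 : 1 + m - m = 1 := by omega
    have h2 : 1 + m = m + 1 := by omega
    rw [h1, h2]
    norm_num [Nat.factorial]
  have e2 : ((2 + m).descFactorial m : ℝ) = ((m + 2)! : ℝ) / 2 := by
    rw [castDF (by omega)]
    have h1 : 2 + m - m = 2 := by omega
    have h2 : 2 + m = m + 2 := by omega
    rw [h1, h2]
    norm_num [Nat.factorial]
  have f0 : ((n - m - 0).descFactorial (n - m - 2) : ℝ) = ((n - m)! : ℝ) / 2 := by
    rw [castDF (by omega)]
    have h1 : n - m - 0 - (n - m - 2) = 2 := by omega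
    have h2 : n - m - 0 = n - m := by omega
    rw [h1, h2]
    norm_num [Nat.factorial]
  have f1 : ((n - m - 1).descFactorial (n - m - 2) : ℝ) = ((n - m - 1)! : ℝ) := by
    rw [castDF (by omega)]
    have h1 : n - m - 1 - (n - m - 2) = 1 := by omega
    rw [h1]
    norm_num [Nat.factorial]
  have f2 : ((n - m - 2).descFactorial (n - m - 2) : ℝ) = ((n - m - 2)! : ℝ) := by
    rw [Nat.descFactorial_self]
  rw [e0, e1, e2, f0, f1, f2] at hdisc
  have cm0 : ((n.choose m : ℕ) : ℝ) = (n ! : ℝ) / ((m ! : ℝ) * ((n - m)! : ℝ)) :=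
    Nat.cast_choose ℝ (by omega)
  have cm1 : ((n.choose (m + 1) : ℕ) : ℝ) =
      (n ! : ℝ) / (((m + 1)! : ℝ) * ((n - m - 1)! : ℝ)) := by
    rw [Nat.cast_choose ℝ (by omega : m + 1 ≤ n)]
    have h1 : n - (m + 1) = n - m - 1 := by omega
    rw [h1]
  have cm2 : ((n.choose (m + 2) : ℕ) : ℝ) =
      (n ! : ℝ) / (((m + 2)! : ℝ) * ((n - m - 2)! : ℝ)) := by
    rw [Nat.cast_choose ℝ (by omega : m + 2 ≤ n)]
    have h1 : n - (m + 2) = n - m - 2 := by omega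
    rw [h1]
  rw [cm0, cm1, cm2]
  have pa : (0:ℝ) < (m ! : ℝ) := by exact_mod_cast Nat.factorial_pos _
  have pb : (0:ℝ) < ((n - m - 2)! : ℝ) := by exact_mod_cast Nat.factorial_pos _
  have pc : (0:ℝ) < (n ! : ℝ) := by exact_mod_cast Nat.factorial_pos _
  have pf1 : (0:ℝ) < ((m + 1)! : ℝ) := by exact_mod_cast Nat.factorial_pos _
  have pf2 : (0:ℝ) < ((m + 2)! : ℝ) := by exact_mod_cast Nat.factorial_pos _
  have pg0 : (0:ℝ) < ((n - m)! : ℝ) := by exact_mod_cast Nat.factorial_pos _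
  have pg1 : (0:ℝ) < ((n - m - 1)! : ℝ) := by exact_mod_cast Nat.factorial_pos _
  set a := (m ! : ℝ)
  set b := ((n - m - 2)! : ℝ)
  set c := (n ! : ℝ)
  set u1 := ((m + 1)! : ℝ)
  set u2 := ((m + 2)! : ℝ)
  set g0 := ((n - m)! : ℝ)
  set g1 := ((n - m - 1)! : ℝ)
  set s0 := esymmVec n m lam
  set s1 := esymmVec n (m + 1) lam
  set s2 := esymmVec n (m + 2) lam
  calc s0 * s2 * (c / (u1 * g1)) ^ 2
      = (s0 * s2 * (a * g0 * (u2 * b))) *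
        (c ^ 2 / ((u1 * g1) ^ 2 * (a * g0 * (u2 * b)))) := by
        field_simp
    _ ≤ (s1 ^ 2 * (u1 * g1) ^ 2) *
        (c ^ 2 / ((u1 * g1) ^ 2 * (a * g0 * (u2 * b)))) := by
        apply mul_le_mul_of_nonneg_right _ (by positivity)
        nlinarith [hdisc]
    _ = s1 ^ 2 * (c / (a * g0) * (c / (u2 * b))) := by
        field_simp

end NewtonAux

/-- Newton–MacLaurin-type estimate: for `λ ∈ Γ_{k-1}` with `σ_k(λ) > 0` and
`0 ≤ l ≤ k-2`,
`σ_l/σ_{k-1} ≤ (C(n,k))^{k-1-l} C(n,l) / (C(n,k-1))^{k-l} · (σ_{k-1}/σ_k)^{k-1-l}`. -/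
theorem stmt_7 (n k l : ℕ) (hn : 2 ≤ n) (hk2 : 2 ≤ k) (hkn : k ≤ n) (hl : l ≤ k - 2)
    (lam : Fin n → ℝ) (hG : inGamma n (k - 1) lam) (hσk : 0 < esymmVec n k lam) :
    esymmVec n l lam / esymmVec n (k - 1) lam ≤
      ((n.choose k : ℝ) ^ (k - 1 - l) * (n.choose l : ℝ) / (n.choose (k - 1) : ℝ) ^ (k - l)) *
        (esymmVec n (k - 1) lam / esymmVec n k lam) ^ (k - 1 - l) := by
  have hσ0 : esymmVec n 0 lam = 1 := by
    simp [esymmVec]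
  have hpos : ∀ j, j ≤ k → 0 < esymmVec n j lam := by
    intro j hj
    rcases Nat.eq_zero_or_pos j with rfl | hj1
    · rw [hσ0]; norm_num
    rcases Nat.lt_or_ge j k with hjk | hjk
    · exact hG j hj1 (by omega)
    · have hjk2 : j = k := by omega
      rw [hjk2]; exact hσk
  have hchoosepos : ∀ j, j ≤ n → (0:ℝ) < (n.choose j : ℝ) := by
    intro j hj
    exact_mod_cast Nat.choose_pos hj
  set p : ℕ → ℝ := fun j => esymmVec n j lam / (n.choose j : ℝ) with hp
  have hpdef : ∀ j, p j = esymmVec n j lam / (n.choose j : ℝ) := fun j => rfl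
  have hppos : ∀ j, j ≤ k → 0 < p j := by
    intro j hj
    exact div_pos (hpos j hj) (hchoosepos j (by omega))
  have hnewton : ∀ j, j + 2 ≤ k → p j * p (j + 2) ≤ p (j + 1) ^ 2 := by
    intro j hj
    have h := newton_ineq n j (by omega) lam
    have c0 := hchoosepos j (by omega)
    have c1 := hchoosepos (j + 1) (by omega)
    have c2 := hchoosepos (j + 2) (by omega)
    simp only [hpdef]
    rw [_root_.div_mul_div_comm, div_pow, div_le_div_iff₀ (by positivity) (by positivity)]
    nlinarith [h]
  have hstep : ∀ j, j + 2 ≤ k → p j / p (j + 1) ≤ p (j + 1) / p (j + 2) := by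
    intro j hj
    rw [div_le_div_iff₀ (hppos (j + 1) (by omega)) (hppos (j + 2) (by omega))]
    nlinarith [hnewton j hj]
  have hmono : ∀ j, j + 1 ≤ k → p j / p (j + 1) ≤ p (k - 1) / p k := by
    have key : ∀ d : ℕ, ∀ j : ℕ, j + 1 + d = k → p j / p (j + 1) ≤ p (k - 1) / p k := by
      intro d
      induction d with
      | zero =>
        intro j hj
        obtain rfl : k = j + 1 := by omega
        simp
      | succ d ih =>
        intro j hj
        exact le_trans (hstep j (by omega)) (ih (j + 1) (by omega))
    intro j hj
    exact key (k - (j + 1)) j (by omega)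
  have hRpos : 0 < p (k - 1) / p k :=
    div_pos (hppos (k - 1) (by omega)) (hppos k le_rfl)
  have hprod : ∀ d : ℕ, ∀ j : ℕ, j + d ≤ k - 1 →
      p j / p (j + d) ≤ (p (k - 1) / p k) ^ d := by
    intro d
    induction d with
    | zero =>
      intro j hj
      simp [div_self (ne_of_gt (hppos j (by omega)))]
    | succ d ih =>
      intro j hj
      have h1 : p j / p (j + (d + 1)) = (p j / p (j + 1)) * (p (j + 1) / p (j + 1 + d)) := by
        have h2 : j + (d + 1) = j + 1 + d := by omega
        rw [h2, _root_.div_mul_div_comm]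
        rw [mul_comm (p j) (p (j + 1)), mul_div_mul_left _ _ (ne_of_gt (hppos (j + 1) (by omega)))]
      rw [h1, _root_.pow_succ']
      have hb1 : p j / p (j + 1) ≤ p (k - 1) / p k := hmono j (by omega)
      have hb2 : p (j + 1) / p (j + 1 + d) ≤ (p (k - 1) / p k) ^ d := ih (j + 1) (by omega)
      have hn1 : 0 ≤ p (j + 1) / p (j + 1 + d) :=
        le_of_lt (div_pos (hppos (j + 1) (by omega)) (hppos (j + 1 + d) (by omega)))
      exact mul_le_mul hb1 hb2 hn1 (le_of_lt hRpos)
  set e := k - 1 - l with he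
  have hkl : k - l = e + 1 := by omega
  have hfin := hprod e l (by omega)
  have hle : l + e = k - 1 := by omega
  rw [hle] at hfin
  -- unfold p
  simp only [hpdef] at hfin
  rw [hkl]
  set Cl := (n.choose l : ℝ)
  set Ck1 := (n.choose (k - 1) : ℝ)
  set Ck := (n.choose k : ℝ)
  set sl := esymmVec n l lam
  set sk1 := esymmVec n (k - 1) lam
  set sk := esymmVec n k lam
  have pCl : 0 < Cl := hchoosepos l (by omega)
  have pCk1 : 0 < Ck1 := hchoosepos (k - 1) (by omega)
  have pCk : 0 < Ck := hchoosepos k (by omega)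
  have psl : 0 < sl := hpos l (by omega)
  have psk1 : 0 < sk1 := hpos (k - 1) (by omega)
  have psk : 0 < sk := hpos k le_rfl
  have h1 : sl / sk1 = (Cl / Ck1) * ((sl / Cl) / (sk1 / Ck1)) := by
    field_simp
  have h2 : ((sk1 / Ck1) / (sk / Ck)) ^ e = (Ck / Ck1) ^ e * (sk1 / sk) ^ e := by
    rw [← mul_pow]
    congr 1
    field_simp
  rw [h1]
  calc (Cl / Ck1) * ((sl / Cl) / (sk1 / Ck1))
      ≤ (Cl / Ck1) * ((sk1 / Ck1) / (sk / Ck)) ^ e :=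
        mul_le_mul_of_nonneg_left hfin (le_of_lt (div_pos pCl pCk1))
    _ = (Ck ^ e * Cl / Ck1 ^ (e + 1)) * (sk1 / sk) ^ e := by
        rw [h2, ← mul_assoc]
        congr 1
        rw [div_pow, pow_succ]
        field_simp
end

section
/- Let n ≥ 3 and 3 ≤ k ≤ n. For λ ∈ Γ_{k-1}, Σ_{i=1}^{n} ∂(σ_k/σ_{k-1})/∂λ_i (λ) ≥ (n−k+1)/k, where σ_k/σ_{k-1} denotes the function λ ↦ σ_k(λ)/σ_{k-1}(λ) on Γ_{k-1}. -/
open Polynomial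


lemma esymmVec_zero (n : ℕ) (lam : Fin n → ℝ) : esymmVec n 0 lam = 1 := by
  simp [esymmVec]


lemma splits_derivative (p : ℝ[X]) (hp : p.Splits) :
    (derivative p).Splits := by
  by_cases hd : derivative p = 0
  · rw [hd]; exact Splits.zero
  have hp0 : p ≠ 0 := by rintro rfl; simp at hd
  rw [splits_iff_card_roots] at hp ⊢
  refine le_antisymm (card_roots' _) ?_
  have h1 : (derivative p).natDegree ≤ p.natDegree - 1 := natDegree_derivative_le p
  have h2 : Multiset.card p.roots ≤ Multiset.card (derivative p).roots + 1 :=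
    card_roots_le_derivative p
  omega

lemma splits_iterate_derivative (m : ℕ) (p : ℝ[X]) (hp : p.Splits) :
    (derivative^[m] p).Splits := by
  induction m with
  | zero => exact hp
  | succ m ih => rw [Function.iterate_succ_apply']; exact splits_derivative _ ih

lemma splits_reverse (p : ℝ[X]) (hp : p.Splits) :
    p.reverse.Splits := by
  by_cases hp0 : p = 0
  · simp [hp0]
  have h := hp.eq_prod_roots
  rw [h, reverse_mul_of_domain]
  refine Splits.mul (by simpa using Splits.C _) ?_
  have : ∀ s : Multiset ℝ, ((s.map fun a => X - C a).prod.reverse).Splits := by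
    intro s
    induction s using Multiset.induction with
    | empty => exact Splits.of_natDegree_le_one ((reverse_natDegree_le _).trans (by simp))
    | cons a s ih =>
        rw [Multiset.map_cons, Multiset.prod_cons, reverse_mul_of_domain]
        refine Splits.mul ?_ ih
        exact Splits.of_natDegree_le_one ((reverse_natDegree_le _).trans (by simp))
  exact this _


lemma quad_disc (q : ℝ[X]) (hq : q.Splits) (hdeg : q.natDegree ≤ 2) :
    4 * q.coeff 0 * q.coeff 2 ≤ (q.coeff 1) ^ 2 := by
  by_cases hc2 : q.coeff 2 = 0
  · rw [hc2, mul_zero]; positivity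
  have hq0 : q ≠ 0 := fun h => hc2 (by simp [h])
  have hnd : q.natDegree = 2 := le_antisymm hdeg (le_natDegree_of_ne_zero hc2)
  have hcard : Multiset.card q.roots = 2 := by
    rw [← hnd]; exact (splits_iff_card_roots.mp hq)
  obtain ⟨r, s, hrs⟩ := Multiset.card_eq_two.mp hcard
  have h := hq.eq_prod_roots
  rw [hrs] at h
  have hlc : q.leadingCoeff = q.coeff 2 := by rw [leadingCoeff, hnd]
  have hprod : (Multiset.map (fun a => X - C a) ({r, s} : Multiset ℝ)).prod
      = (X - C r) * (X - C s) := by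
    rw [show ({r, s} : Multiset ℝ) = r ::ₘ {s} from rfl]
    simp
  rw [hprod, hlc] at h
  obtain ⟨c, hc⟩ : ∃ c, q.coeff 2 = c := ⟨_, rfl⟩
  rw [hc] at h ⊢
  have hexp : q = C c * X ^ 2 - C (c * (r + s)) * X + C (c * (r * s)) := by
    rw [h]; simp only [C_mul, C_add]; ring
  have h0 : q.coeff 0 = c * (r * s) := by
    rw [hexp]; simp
  have h1 : q.coeff 1 = -(c * (r + s)) := by
    rw [hexp]; simp [coeff_X]
  rw [h0, h1]
  nlinarith [sq_nonneg (c * (r - s))]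

lemma newton_aux (b a : ℕ) (lam : Fin (b + 2 + a) → ℝ) :
    ((b : ℝ) + 2) * ((a : ℝ) + 2) *
        (esymmVec (b + 2 + a) (b + 2) lam * esymmVec (b + 2 + a) b lam) ≤
      ((b : ℝ) + 1) * ((a : ℝ) + 1) * esymmVec (b + 2 + a) (b + 1) lam ^ 2 := by
  set p : ℝ[X] := ∏ i : Fin (b + 2 + a), (X + C (lam i)) with hp
  have hmono : p.Monic := monic_prod_of_monic _ _ fun i _ => monic_X_add_C _
  have hdegp : p.natDegree = (b + 2 + a) := by
    rw [hp, natDegree_prod_of_monic _ _ fun i _ => monic_X_add_C _]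
    simp [natDegree_X_add_C]
  have hcoeff : ∀ j : ℕ, j ≤ (b + 2 + a) → p.coeff j = esymmVec (b + 2 + a) ((b + 2 + a) - j) lam := by
    intro j hj
    rw [hp, Finset.prod_X_add_C_coeff _ _ (by simpa using hj)]
    simp [esymmVec]
  have hsplit : p.Splits :=
    Splits.prod fun i _ =>
      Splits.of_natDegree_le_one (by simp [natDegree_X_add_C])
  set f : ℝ[X] := derivative^[a] p with hf
  have hfsplit : f.Splits := splits_iterate_derivative a p hsplit
  have hcf : ∀ i : ℕ, f.coeff i = ((i + a).descFactorial a : ℝ) * p.coeff (i + a) := by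
    intro i
    rw [hf, coeff_iterate_derivative, nsmul_eq_mul]
  have hfk_ne : f.coeff (b + 2) ≠ 0 := by
    rw [hcf, show b + 2 + a = (b + 2 + a) from rfl, ← hdegp, hmono.coeff_natDegree]
    simp only [mul_one]
    rw [hdegp]
    have : (b + 2 + a).descFactorial a ≠ 0 := by
      intro h0
      have := Nat.descFactorial_eq_zero_iff_lt.mp h0
      omega
    exact_mod_cast this
  have hndf : f.natDegree = b + 2 := by
    refine le_antisymm ?_ (le_natDegree_of_ne_zero hfk_ne)
    calc f.natDegree ≤ p.natDegree - a := natDegree_iterate_derivative p a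
    _ = b + 2 := by rw [hdegp]; omega
  set g : ℝ[X] := f.reverse with hg
  have hgsplit : g.Splits := splits_reverse f hfsplit
  have hcg : ∀ j : ℕ, j ≤ b + 2 → g.coeff j = f.coeff (b + 2 - j) := by
    intro j hj
    rw [hg, coeff_reverse, hndf, revAt_le hj]
  set h : ℝ[X] := derivative^[b] g with hh
  have hhsplit : h.Splits := splits_iterate_derivative b g hgsplit
  have hgd : g.natDegree ≤ b + 2 := by
    rw [hg]; exact (reverse_natDegree_le f).trans (by omega)
  have hndh : h.natDegree ≤ 2 := by
    have h1 : h.natDegree ≤ g.natDegree - b := natDegree_iterate_derivative g b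
    omega
  have disc := quad_disc h hhsplit hndh
  have hch : ∀ i : ℕ, h.coeff i = ((i + b).descFactorial b : ℝ) * g.coeff (i + b) := by
    intro i
    rw [hh, coeff_iterate_derivative, nsmul_eq_mul]
  -- coefficients
  have hc0 : h.coeff 0 = ((b).descFactorial b : ℝ) * (((2 + a).descFactorial a : ℝ) *
      esymmVec (b + 2 + a) b lam) := by
    rw [hch, hcg _ (by omega), Nat.zero_add b, show b + 2 - b = 2 from by omega,
      hcf, hcoeff _ (by omega), show (b + 2 + a) - (2 + a) = b from by omega]
  have hc1 : h.coeff 1 = (((b+1)).descFactorial b : ℝ) * (((1 + a).descFactorial a : ℝ) *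
      esymmVec (b + 2 + a) (b+1) lam) := by
    rw [hch, hcg _ (by omega), show 1 + b = b + 1 from by omega,
      show b + 2 - (b+1) = 1 from by omega,
      hcf, hcoeff _ (by omega), show (b + 2 + a) - (1 + a) = b + 1 from by omega]
  have hc2 : h.coeff 2 = (((b+2)).descFactorial b : ℝ) * (((a).descFactorial a : ℝ) *
      esymmVec (b + 2 + a) (b+2) lam) := by
    rw [hch, hcg _ (by omega), show 2 + b = b + 2 from by omega,
      show b + 2 - (b+2) = 0 from by omega,
      hcf, hcoeff _ (by omega), show (b + 2 + a) - (0 + a) = b + 2 from by omega,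
      show (0:ℕ) + a = a from by omega]
  -- descFactorial values
  have e1 : ((2 + a).descFactorial a : ℝ) = ((a:ℝ)+2) * ((a:ℝ)+1) * (a.factorial : ℝ) / 2 := by
    have h3 : 2 * ((2+a).descFactorial a) = (a+2) * ((a+1) * a.factorial) := by
      have h2 := Nat.factorial_mul_descFactorial (show a ≤ 2 + a by omega)
      rw [show 2 + a - a = 2 from by omega, show Nat.factorial 2 = 2 from rfl,
        show (2 + a).factorial = (a+2) * ((a+1) * a.factorial) from by
          rw [show 2 + a = a + 2 from by omega, Nat.factorial_succ, Nat.factorial_succ]] at h2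
      exact h2
    have h4 := congrArg (Nat.cast : ℕ → ℝ) h3
    push_cast at h4
    linarith
  have e2 : ((1 + a).descFactorial a : ℝ) = ((a:ℝ)+1) * (a.factorial : ℝ) := by
    rw [show 1 + a = a + 1 from by omega]
    have h2 := Nat.factorial_mul_descFactorial (show a ≤ a + 1 by omega)
    rw [show a + 1 - a = 1 from by omega, show Nat.factorial 1 = 1 from rfl, one_mul,
      Nat.factorial_succ] at h2
    push_cast [h2]
    ring
  have e3 : ((b+1).descFactorial b : ℝ) = ((b:ℝ)+1) * (b.factorial : ℝ) := by
    have h2 := Nat.factorial_mul_descFactorial (show b ≤ b + 1 by omega)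
    rw [show b + 1 - b = 1 from by omega, show Nat.factorial 1 = 1 from rfl, one_mul,
      Nat.factorial_succ] at h2
    push_cast [h2]
    ring
  have e4 : ((b+2).descFactorial b : ℝ) = ((b:ℝ)+2) * ((b:ℝ)+1) * (b.factorial : ℝ) / 2 := by
    have h3 : 2 * ((b+2).descFactorial b) = (b+2) * ((b+1) * b.factorial) := by
      have h2 := Nat.factorial_mul_descFactorial (show b ≤ b + 2 by omega)
      rw [show b + 2 - b = 2 from by omega, show Nat.factorial 2 = 2 from rfl,
        show (b + 2).factorial = (b+2) * ((b+1) * b.factorial) from by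
          rw [Nat.factorial_succ, Nat.factorial_succ]] at h2
      exact h2
    have h4 := congrArg (Nat.cast : ℕ → ℝ) h3
    push_cast at h4
    linarith
  have e5 : ((a).descFactorial a : ℝ) = (a.factorial : ℝ) := by
    rw [Nat.descFactorial_self]
  rw [hc0, hc1, hc2, e1, e2, e3, e4, e5, Nat.descFactorial_self] at disc
  obtain ⟨x, hx⟩ : ∃ x, esymmVec (b + 2 + a) b lam = x := ⟨_, rfl⟩
  obtain ⟨y, hy⟩ : ∃ y, esymmVec (b + 2 + a) (b+1) lam = y := ⟨_, rfl⟩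
  obtain ⟨z, hz⟩ : ∃ z, esymmVec (b + 2 + a) (b+2) lam = z := ⟨_, rfl⟩
  rw [hx, hy, hz] at disc
  rw [hx, hy, hz]
  have hA : (0:ℝ) < (a.factorial : ℝ) := by exact_mod_cast a.factorial_pos
  have hB : (0:ℝ) < (b.factorial : ℝ) := by exact_mod_cast b.factorial_pos
  have hpos : (0:ℝ) < ((a:ℝ)+1) * ((b:ℝ)+1) * (a.factorial : ℝ)^2 * (b.factorial : ℝ)^2 := by
    positivity
  refine le_of_mul_le_mul_right ?_ hpos
  ring_nf at disc ⊢
  linarith [disc]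



lemma hasFDerivAt_esymmVec (n j : ℕ) (lam : Fin n → ℝ) :
    HasFDerivAt (esymmVec n j)
      (∑ S ∈ Finset.univ.powersetCard j, ∑ i ∈ S,
        (∏ l ∈ S.erase i, lam l) • (ContinuousLinearMap.proj i : (Fin n → ℝ) →L[ℝ] ℝ)) lam := by
  show HasFDerivAt (fun x : Fin n → ℝ => ∑ S ∈ Finset.univ.powersetCard j, ∏ i ∈ S, x i) _ lam
  refine HasFDerivAt.fun_sum fun S _ => ?_
  exact HasFDerivAt.finset_prod fun i _ => hasFDerivAt_apply i lam

lemma count_lemma (n j : ℕ) (hj1 : 1 ≤ j) (hjn : j ≤ n) (lam : Fin n → ℝ) :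
    ∑ S ∈ Finset.univ.powersetCard j, ∑ i ∈ S, ∏ l ∈ S.erase i, lam l
      = ((n - j + 1 : ℕ) : ℝ) * esymmVec n (j - 1) lam := by
  have hr : ∀ T ∈ (Finset.univ : Finset (Fin n)).powersetCard (j-1),
      ((n - j + 1 : ℕ) : ℝ) * ∏ l ∈ T, lam l = ∑ _i ∈ Tᶜ, ∏ l ∈ T, lam l := by
    intro T hT
    rw [Finset.sum_const, nsmul_eq_mul, Finset.card_compl,
      (Finset.mem_powersetCard.mp hT).2, Fintype.card_fin,
      show n - (j - 1) = n - j + 1 from by omega]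
  rw [esymmVec, Finset.mul_sum]
  rw [Finset.sum_congr rfl hr]
  rw [Finset.sum_sigma', Finset.sum_sigma']
  refine Finset.sum_nbij' (fun x => ⟨x.1.erase x.2, x.2⟩) (fun x => ⟨insert x.2 x.1, x.2⟩)
    ?_ ?_ ?_ ?_ ?_
  · rintro ⟨S, i⟩ hSi
    simp only [Finset.mem_sigma, Finset.mem_powersetCard_univ] at hSi ⊢
    obtain ⟨hS, hi⟩ := hSi
    constructor
    · rw [Finset.card_erase_of_mem hi, hS]
    · simp [hi]
  · rintro ⟨T, i⟩ hTi
    simp only [Finset.mem_sigma, Finset.mem_powersetCard_univ, Finset.mem_compl] at hTi ⊢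
    obtain ⟨hT, hi⟩ := hTi
    constructor
    · rw [Finset.card_insert_of_notMem hi, hT]; omega
    · exact Finset.mem_insert_self _ _
  · rintro ⟨S, i⟩ hSi
    simp only [Finset.mem_sigma, Finset.mem_powersetCard_univ] at hSi
    simp [Finset.insert_erase hSi.2]
  · rintro ⟨T, i⟩ hTi
    simp only [Finset.mem_sigma, Finset.mem_powersetCard_univ, Finset.mem_compl] at hTi
    simp [Finset.erase_insert hTi.2]
  · rintro ⟨S, i⟩ _
    rfl

lemma fderiv_div_eval {n : ℕ} (f g : (Fin n → ℝ) → ℝ) (F G : (Fin n → ℝ) →L[ℝ] ℝ)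
    (x : Fin n → ℝ) (hf : HasFDerivAt f F x) (hg : HasFDerivAt g G x) (h : g x ≠ 0)
    (v : Fin n → ℝ) :
    fderiv ℝ (fun y => f y / g y) x v = (g x * F v - f x * G v) / g x ^ 2 := by
  have hinv : HasFDerivAt (fun y => (g y)⁻¹) ((-(g x ^ 2)⁻¹) • G) x := by
    have := (hasDerivAt_inv h).comp_hasFDerivAt x hg
    exact this
  have hm := hf.mul hinv
  have heq : (fun y => f y / g y) = fun y => f y * (g y)⁻¹ := by
    funext y; rw [div_eq_mul_inv]
  rw [heq, HasFDerivAt.fderiv (f := fun y => f y * (g y)⁻¹) hm]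
  simp only [ContinuousLinearMap.add_apply, ContinuousLinearMap.smul_apply, smul_eq_mul]
  field_simp
  ring


lemma newton (n k : ℕ) (hk : 2 ≤ k) (hkn : k ≤ n) (lam : Fin n → ℝ) :
    (k:ℝ) * ((n:ℝ) - k + 2) * (esymmVec n k lam * esymmVec n (k-2) lam)
      ≤ ((k:ℝ) - 1) * ((n:ℝ) - k + 1) * esymmVec n (k-1) lam ^ 2 := by
  obtain ⟨b, rfl⟩ : ∃ b, k = b + 2 := ⟨k - 2, by omega⟩
  obtain ⟨a, rfl⟩ : ∃ a, n = b + 2 + a := ⟨n - (b+2), by omega⟩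
  have h := newton_aux b a lam
  rw [show b + 2 - 2 = b from by omega, show b + 2 - 1 = b + 1 from by omega]
  push_cast
  nlinarith [h]

lemma sum_single (n j : ℕ) (hj1 : 1 ≤ j) (hjn : j ≤ n) (lam : Fin n → ℝ) :
    ∑ m : Fin n, (∑ S ∈ Finset.univ.powersetCard j, ∑ i ∈ S,
      (∏ l ∈ S.erase i, lam l) • (ContinuousLinearMap.proj i : (Fin n → ℝ) →L[ℝ] ℝ))
      (Pi.single m 1) = ((n - j + 1 : ℕ) : ℝ) * esymmVec n (j - 1) lam := by
  rw [← count_lemma n j hj1 hjn lam]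
  simp only [ContinuousLinearMap.coe_sum', Finset.sum_apply, ContinuousLinearMap.coe_smul',
    Pi.smul_apply, ContinuousLinearMap.proj_apply, smul_eq_mul]
  rw [Finset.sum_comm]
  refine Finset.sum_congr rfl fun S _ => ?_
  rw [Finset.sum_comm]
  refine Finset.sum_congr rfl fun i hi => ?_
  simp [Pi.single_apply, mul_ite, Finset.sum_ite_eq]

/-- For `λ ∈ Γ_{k-1}`, `∑_i ∂(σ_k/σ_{k-1})/∂λ_i(λ) ≥ (n-k+1)/k`. -/
theorem stmt_12 (n k : ℕ) (hn : 3 ≤ n) (hk3 : 3 ≤ k) (hkn : k ≤ n)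
    (lam : Fin n → ℝ) (hG : inGamma n (k - 1) lam) :
    ∑ i : Fin n,
        fderiv ℝ (fun x : Fin n → ℝ => esymmVec n k x / esymmVec n (k - 1) x)
          lam (Pi.single i 1) ≥
      ((n : ℝ) - k + 1) / k := by
  have hden : 0 < esymmVec n (k-1) lam := hG (k-1) (by omega) le_rfl
  have hxp : 0 < esymmVec n (k-2) lam := hG (k-2) (by omega) (by omega)
  have Hk := hasFDerivAt_esymmVec n k lam
  have Hk1 := hasFDerivAt_esymmVec n (k-1) lam
  have hev := fderiv_div_eval (esymmVec n k) (esymmVec n (k-1)) _ _ lam Hk Hk1 hden.ne'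
  simp only [hev]
  rw [← Finset.sum_div]
  rw [Finset.sum_sub_distrib, ← Finset.mul_sum, ← Finset.mul_sum]
  have hsumk := sum_single n k (by omega) hkn lam
  have hsumk1 := sum_single n (k-1) (by omega) (by omega) lam
  rw [show k - 1 - 1 = k - 2 from by omega] at hsumk1
  rw [hsumk, hsumk1]
  have c1 : ((n - k + 1 : ℕ) : ℝ) = (n:ℝ) - k + 1 := by
    push_cast [Nat.cast_sub hkn]; ring
  have c2 : ((n - (k-1) + 1 : ℕ) : ℝ) = (n:ℝ) - k + 2 := by
    rw [show n - (k-1) + 1 = n - k + 2 from by omega]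
    push_cast [Nat.cast_sub hkn]; ring
  rw [c1, c2]
  have hk0 : (0:ℝ) < k := by positivity
  have hg2 : (0:ℝ) < esymmVec n (k-1) lam ^ 2 := by positivity
  rw [ge_iff_le, div_le_div_iff₀ hk0 hg2]
  have newt := newton n k (by omega) hkn lam
  nlinarith [newt, hden, hxp]
end
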